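/- arXiv:1909.12877 — 7 statements merged into one kernel-verified Lean document; each statement's English description precedes it below -/
import Mathlib

section
/- In a finite unrooted tree with exactly 2n leaves (n ≥ 1), the minimum number of leaf-to-leaf paths needed so that every vertex of the tree lies on at least one path is exactly n. -/
set_option linter.unusedSectionVars false

open SimpleGraph Finset

variable {V : Type} [Fintype V] [DecidableEq V] {G : SimpleGraph V} [DecidableRel G.Adj]

noncomputable def tpath (hT : G.IsTree) (x y : V) : G.Walk x y :=
  (hT.existsUnique_path x y).choose

lemma tpath_isPath (hT : G.IsTree) (x y : V) : (tpath hT x y).IsPath :=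
  (hT.existsUnique_path x y).choose_spec.1

lemma tpath_unique (hT : G.IsTree) {x y : V} (p : G.Walk x y) (hp : p.IsPath) :
    p = tpath hT x y :=
  (hT.existsUnique_path x y).choose_spec.2 p hp

lemma tpath_length (hT : G.IsTree) (x y : V) : (tpath hT x y).length = G.dist x y := by
  obtain ⟨p, hp, hl⟩ := hT.isConnected.exists_path_of_dist x y
  rw [tpath_unique hT p hp] at hl
  exact hl

lemma not_mem_tpath_of_walk (hT : G.IsTree) {x y z : V} (w : G.Walk x y)
    (hz : z ∉ w.support) : z ∉ (tpath hT x y).support := by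
  have hb : w.bypass = tpath hT x y := tpath_unique hT w.bypass w.bypass_isPath
  exact fun h => hz (w.support_bypass_subset (hb ▸ h))

lemma mem_tpath_symm (hT : G.IsTree) {x y z : V} (h : z ∈ (tpath hT x y).support) :
    z ∈ (tpath hT y x).support := by
  have : (tpath hT x y).reverse = tpath hT y x :=
    tpath_unique hT _ (tpath_isPath hT x y).reverse
  rw [← this, Walk.support_reverse, List.mem_reverse]
  exact h

lemma dist_add_dist_of_mem_tpath (hT : G.IsTree) {x y z : V}
    (hz : z ∈ (tpath hT x y).support) : G.dist x z + G.dist z y = G.dist x y := by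
  have hspec := (tpath hT x y).take_spec hz
  have hlen : ((tpath hT x y).takeUntil z hz).length +
      ((tpath hT x y).dropUntil z hz).length = G.dist x y := by
    rw [← tpath_length hT x y, ← Walk.length_append, hspec]
  have h1 : G.dist x z ≤ ((tpath hT x y).takeUntil z hz).length := dist_le _
  have h2 : G.dist z y ≤ ((tpath hT x y).dropUntil z hz).length := dist_le _
  have h3 : G.dist x y ≤ G.dist x z + G.dist z y := hT.isConnected.dist_triangle
  omega

lemma dist_lt_of_not_mem_tpath (hT : G.IsTree) {x y z : V}
    (hz : z ∉ (tpath hT x y).support) : G.dist x y < G.dist x z + G.dist z y := by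
  have h3 : G.dist x y ≤ G.dist x z + G.dist z y := hT.isConnected.dist_triangle
  rcases h3.lt_or_eq with h | h
  · exact h
  · exfalso
    obtain ⟨w1, hw1⟩ := hT.isConnected.exists_walk_length_eq_dist x z
    obtain ⟨w2, hw2⟩ := hT.isConnected.exists_walk_length_eq_dist z y
    have hlen : (w1.append w2).length = G.dist x y := by
      rw [Walk.length_append, hw1, hw2, h]
    have hp : (w1.append w2).IsPath := (w1.append w2).isPath_of_length_eq_dist hlen
    have := tpath_unique hT _ hp
    apply hz
    rw [← this, Walk.mem_support_append_iff]
    exact Or.inl w1.end_mem_support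

lemma mem_tpath_of_not_mem (hT : G.IsTree) {a b a' b' z : V}
    (hab : z ∈ (tpath hT a b).support)
    (ha : z ∉ (tpath hT a a').support) (hb : z ∉ (tpath hT b b').support) :
    z ∈ (tpath hT a' b').support := by
  by_contra h
  have hw : z ∉ ((tpath hT a a').append ((tpath hT a' b').append
      (tpath hT b b').reverse)).support := by
    simp only [Walk.mem_support_append_iff, Walk.support_reverse, List.mem_reverse]
    push_neg
    exact ⟨ha, h, hb⟩
  exact (not_mem_tpath_of_walk hT _ hw) hab

variable {V : Type} [Fintype V] [DecidableEq V] {G : SimpleGraph V} [DecidableRel G.Adj]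

-- if x is not a leaf, a path starting at x can be extended
lemma exists_extend (hT : G.IsTree) (hV : ∀ v : V, ∃ w, G.Adj v w) {x v : V}
    (p : G.Walk x v) (hp : p.IsPath) (hx : G.degree x ≠ 1) :
    ∃ y, G.Adj y x ∧ y ∉ p.support := by
  cases p with
  | nil =>
    obtain ⟨y, hy⟩ := hV x
    exact ⟨y, hy.symm, by simp [hy.symm.ne]⟩
  | @cons _ s _ h q =>
    have hq : q.IsPath := hp.of_cons
    have hxq : x ∉ q.support := (Walk.cons_isPath_iff h q).mp hp |>.2
    have hdeg : 2 ≤ G.degree x := by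
      have h1 : 0 < G.degree x := (G.degree_pos_iff_exists_adj x).mpr ⟨s, h⟩
      omega
    obtain ⟨y, hy, hys⟩ := Finset.exists_mem_ne
      (by rwa [← G.card_neighborFinset_eq_degree] at hdeg) s
    rw [mem_neighborFinset] at hy
    refine ⟨y, hy.symm, ?_⟩
    intro hmem
    rw [Walk.support_cons, List.mem_cons] at hmem
    rcases hmem with rfl | hmem
    · exact hy.ne rfl
    · -- y ∈ q.support : build a cycle
      have hr : (q.takeUntil y hmem).IsPath := hq.takeUntil hmem
      have hxr : x ∉ (q.takeUntil y hmem).support :=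
        fun hc => hxq (q.support_takeUntil_subset hmem hc)
      have hcyc : (Walk.cons hy.symm (Walk.cons h (q.takeUntil y hmem))).IsCycle := by
        rw [Walk.cons_isCycle_iff]
        constructor
        · rw [Walk.cons_isPath_iff]; exact ⟨hr, hxr⟩
        · intro hc
          rw [Walk.edges_cons, List.mem_cons] at hc
          rcases hc with hc | hc
          · rw [Sym2.eq_iff] at hc
            rcases hc with ⟨rfl, rfl⟩ | ⟨h1, h2⟩
            · exact hy.ne rfl
            · exact hys h1
          · exact hxr ((q.takeUntil y hmem).snd_mem_support_of_mem_edges hc)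
      exact hT.IsAcyclic _ hcyc

lemma exists_leaf_extension (hT : G.IsTree) (hV : ∀ v : V, ∃ w, G.Adj v w) :
    ∀ (m : ℕ) {x v : V} (p : G.Walk x v), p.IsPath →
      Fintype.card V ≤ p.support.length + m →
      ∃ (ℓ : V) (q : G.Walk ℓ v), q.IsPath ∧ G.degree ℓ = 1 ∧
        ∀ u ∈ p.support, u ∈ q.support := by
  intro m
  induction m with
  | zero =>
    intro x v p hp hcard
    by_cases hx : G.degree x = 1
    · exact ⟨x, p, hp, hx, fun u hu => hu⟩
    · exfalso
      obtain ⟨y, hy, hyp⟩ := exists_extend hT hV p hp hx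
      -- support is a nodup list of length ≥ card V, so it contains everything
      have hnodup : p.support.Nodup := hp.support_nodup
      have : p.support.length ≤ Fintype.card V := by
        classical
        have := List.Nodup.length_le_card hnodup
        simpa using this
      have hall : ∀ u : V, u ∈ p.support := by
        have hlen : p.support.length = Fintype.card V := by omega
        intro u
        by_contra hu
        have : (u :: p.support).Nodup := List.nodup_cons.mpr ⟨hu, hnodup⟩
        have := List.Nodup.length_le_card this
        simp [hlen] at this
      exact hyp (hall y)
  | succ m ih =>
    intro x v p hp hcard
    by_cases hx : G.degree x = 1
    · exact ⟨x, p, hp, hx, fun u hu => hu⟩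
    · obtain ⟨y, hy, hyp⟩ := exists_extend hT hV p hp hx
      have hp' : (Walk.cons hy p).IsPath := (Walk.cons_isPath_iff hy p).mpr ⟨hp, hyp⟩
      have hcard' : Fintype.card V ≤ (Walk.cons hy p).support.length + m := by
        rw [Walk.support_cons, List.length_cons]; omega
      obtain ⟨ℓ, q, hq, hℓ, hsub⟩ := ih (Walk.cons hy p) hp' hcard'
      exact ⟨ℓ, q, hq, hℓ, fun u hu => hsub u (by simp [Walk.support_cons, hu])⟩

lemma exists_leaf_leaf_tpath (hT : G.IsTree) (hV : ∀ v : V, ∃ w, G.Adj v w) (z : V) :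
    ∃ ℓ₁ ℓ₂ : V, G.degree ℓ₁ = 1 ∧ G.degree ℓ₂ = 1 ∧ ℓ₁ ≠ ℓ₂ ∧
      z ∈ (tpath hT ℓ₁ ℓ₂).support := by
  obtain ⟨y, hy⟩ := hV z
  set p0 : G.Walk y z := Walk.cons hy.symm Walk.nil with hp0def
  have hp0 : p0.IsPath := by
    rw [hp0def, Walk.cons_isPath_iff]
    simp [hy.symm.ne]
  obtain ⟨ℓ₁, q, hq, hℓ₁, hsub⟩ := exists_leaf_extension hT hV (Fintype.card V) p0 hp0 (by omega)
  -- q : Walk ℓ₁ z, contains y and z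
  obtain ⟨ℓ₂, w, hw, hℓ₂, hsub2⟩ := exists_leaf_extension hT hV (Fintype.card V)
    q.reverse hq.reverse (by omega)
  -- w : Walk ℓ₂ ℓ₁, contains everything in q.reverse.support = q.support
  have hzw : z ∈ w.support := by
    apply hsub2
    rw [Walk.support_reverse, List.mem_reverse]
    exact q.end_mem_support
  have hyw : y ∈ w.support := by
    apply hsub2
    rw [Walk.support_reverse, List.mem_reverse]
    exact hsub y (by rw [hp0def]; simp [Walk.support_cons])
  have hne : ℓ₂ ≠ ℓ₁ := by
    rintro rfl
    have : w = Walk.nil := Walk.isPath_iff_eq_nil.mp hw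
    rw [this] at hzw hyw
    simp only [Walk.support_nil, List.mem_singleton] at hzw hyw
    exact hy.ne (hyw.trans hzw.symm).symm
  refine ⟨ℓ₂, ℓ₁, hℓ₂, hℓ₁, hne, ?_⟩
  rw [← tpath_unique hT w hw]
  exact hzw

lemma endpoint_of_leaf_mem {x y v : V} (p : G.Walk x y) (hp : p.IsPath)
    (hdeg : G.degree v = 1) (hv : v ∈ p.support) : v = x ∨ v = y := by
  by_contra hcon
  push_neg at hcon
  obtain ⟨hvx, hvy⟩ := hcon
  set p₁ := p.takeUntil v hv with hp₁
  set p₂ := p.dropUntil v hv with hp₂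
  have hn1 : ¬p₁.Nil := Walk.not_nil_of_ne (fun h => hvx h.symm)
  have hn2 : ¬p₂.Nil := Walk.not_nil_of_ne (fun h => hvy h)
  have hn1' : ¬p₁.reverse.Nil := Walk.not_nil_of_ne (fun h => hvx h)
  set u₁ := p₁.reverse.getVert 1 with hu₁
  set u₂ := p₂.getVert 1 with hu₂
  have h₁ : G.Adj v u₁ := Walk.adj_snd hn1'
  have h₂ : G.Adj v u₂ := Walk.adj_snd hn2
  have hu₁mem : u₁ ∈ p₁.support := by
    have : u₁ ∈ p₁.reverse.support := Walk.mem_support_iff_exists_getVert.mpr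
      ⟨1, rfl, by rw [Walk.not_nil_iff_lt_length] at hn1'; omega⟩
    rwa [Walk.support_reverse, List.mem_reverse] at this
  have hu₂mem : u₂ ∈ p₂.support := Walk.mem_support_iff_exists_getVert.mpr
      ⟨1, rfl, by rw [Walk.not_nil_iff_lt_length] at hn2; omega⟩
  have hdisj : p₁.support.Disjoint p₂.support.tail := by
    have hnodup : (p₁.append p₂).support.Nodup := by
      rw [hp₁, hp₂, p.take_spec hv]; exact hp.support_nodup
    rw [Walk.support_append] at hnodup
    exact List.disjoint_of_nodup_append hnodup
  have hu₂tail : u₂ ∈ p₂.support.tail := by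
    have hc := p₂.support_eq_cons
    rw [hc, List.mem_cons] at hu₂mem
    rcases hu₂mem with h' | h'
    · exact absurd h'.symm h₂.ne
    · exact h'
  have hne : u₁ ≠ u₂ := by
    intro h
    exact hdisj hu₁mem (h ▸ hu₂tail)
  have hsub : ({u₁, u₂} : Finset V) ⊆ G.neighborFinset v := by
    intro u hu
    rw [Finset.mem_insert, Finset.mem_singleton] at hu
    rcases hu with rfl | rfl <;> rw [mem_neighborFinset] <;> assumption
  have : 2 ≤ G.degree v := by
    rw [← G.card_neighborFinset_eq_degree]
    calc 2 = ({u₁, u₂} : Finset V).card := (Finset.card_pair hne).symm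
    _ ≤ _ := Finset.card_le_card hsub
  omega

lemma cover_lower_bound {n k : ℕ}
    (hleaves : (Finset.univ.filter fun v => G.degree v = 1).card = 2 * n)
    (a b : Fin k → V) (p : ∀ i, G.Walk (a i) (b i))
    (hpath : ∀ i, (p i).IsPath) (hcov : ∀ v : V, ∃ i, v ∈ (p i).support) :
    n ≤ k := by
  classical
  set L := Finset.univ.filter fun v => G.degree v = 1 with hL
  have hchoice : ∀ v ∈ L, ∃ ip : Fin k × Bool, v = (if ip.2 then a ip.1 else b ip.1) := by
    intro v hv
    rw [hL, Finset.mem_filter] at hv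
    obtain ⟨i, hi⟩ := hcov v
    rcases endpoint_of_leaf_mem (p i) (hpath i) hv.2 hi with h | h
    · exact ⟨(i, true), by simpa using h⟩
    · exact ⟨(i, false), by simpa using h⟩
  choose f hf using hchoice
  have hcard : L.card ≤ Fintype.card (Fin k × Bool) := by
    rw [← Fintype.card_coe L]
    exact Fintype.card_le_of_injective (fun v => f v.1 v.2) (by
      intro v w h
      simp only at h
      apply Subtype.ext
      rw [hf v.1 v.2, hf w.1 w.2, h])
  rw [hleaves] at hcard
  simp [Fintype.card_prod] at hcard
  omega
lemma tpath_self (hT : G.IsTree) (x : V) : tpath hT x x = Walk.nil :=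
  (tpath_unique hT Walk.nil Walk.IsPath.nil).symm

lemma exists_cover (hT : G.IsTree) (n : ℕ) (hn : 1 ≤ n)
    (hleaves : (Finset.univ.filter fun v => G.degree v = 1).card = 2 * n) :
    ∃ (a b : Fin n → V) (p : ∀ i, G.Walk (a i) (b i)),
      (∀ i, (p i).IsPath) ∧ (∀ i, G.degree (a i) = 1) ∧ (∀ i, G.degree (b i) = 1) ∧
      (∀ i, a i ≠ b i) ∧ (∀ v : V, ∃ i, v ∈ (p i).support) := by
  classical
  set L := Finset.univ.filter fun v => G.degree v = 1 with hLdef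
  have hLmem : ∀ v, v ∈ L ↔ G.degree v = 1 := by intro v; simp [hLdef]
  have hL2 : 1 < L.card := by rw [hleaves]; omega
  obtain ⟨x₀, hx₀, y₀, hy₀, hxy₀⟩ := Finset.one_lt_card.mp hL2
  have hV : ∀ v : V, ∃ w, G.Adj v w := by
    intro v
    have hu : ∃ u : V, v ≠ u := by
      by_cases h : v = x₀
      · exact ⟨y₀, by rw [h]; exact hxy₀⟩
      · exact ⟨x₀, h⟩
    obtain ⟨u, hu⟩ := hu
    exact (hT.isConnected.preconnected v u).elim
      (fun w => ⟨w.getVert 1, Walk.adj_snd (Walk.not_nil_of_ne hu)⟩)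
  -- a matching on the leaves exists
  set e := L.equivFin with hedef
  set f : Fin (2 * n) → V := fun j => (e.symm (Fin.cast hleaves.symm j) : V) with hfdef
  have hfmem : ∀ j, f j ∈ L := fun j => (e.symm _).2
  have hfinj : Function.Injective f := by
    intro j j' h
    have h2 := e.symm.injective (Subtype.coe_injective h)
    have h3 := congrArg Fin.val h2
    simpa [Fin.ext_iff] using h3
  have hfsurj : ∀ v ∈ L, ∃ j, f j = v := by
    intro v hv
    refine ⟨Fin.cast hleaves (e ⟨v, hv⟩), ?_⟩
    show (e.symm (Fin.cast hleaves.symm (Fin.cast hleaves (e ⟨v, hv⟩))) : V) = v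
    have h : Fin.cast hleaves.symm (Fin.cast hleaves (e ⟨v, hv⟩)) = e ⟨v, hv⟩ := by
      apply Fin.ext; simp
    rw [h, Equiv.symm_apply_apply]
  set SP : Finset ((Fin n → V) × (Fin n → V)) := Finset.univ.filter (fun ab =>
    (∀ i, ab.1 i ∈ L) ∧ (∀ i, ab.2 i ∈ L) ∧ (∀ i, ab.1 i ≠ ab.2 i) ∧
    (∀ v ∈ L, ∃ i, ab.1 i = v ∨ ab.2 i = v)) with hSPdef
  have hSPne : SP.Nonempty := by
    refine ⟨(fun i => f ⟨i.1, by have := i.isLt; omega⟩,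
             fun i => f ⟨n + i.1, by have := i.isLt; omega⟩), ?_⟩
    rw [hSPdef, Finset.mem_filter]
    refine ⟨Finset.mem_univ _, fun i => hfmem _, fun i => hfmem _, ?_, ?_⟩
    · intro i h
      have h2 := hfinj h
      rw [Fin.ext_iff] at h2
      simp at h2
      omega
    · intro v hv
      obtain ⟨j, hj⟩ := hfsurj v hv
      by_cases hjn : j.1 < n
      · refine ⟨⟨j.1, hjn⟩, Or.inl ?_⟩
        show f ⟨j.1, by have := j.isLt; omega⟩ = v
        rw [← hj]
      · refine ⟨⟨j.1 - n, by have := j.isLt; omega⟩, Or.inr ?_⟩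
        show f ⟨n + (j.1 - n), by have := j.isLt; omega⟩ = v
        rw [← hj]
        congr 1
        apply Fin.ext
        show n + (j.1 - n) = j.1
        have := j.isLt
        omega
  obtain ⟨ab, habS, hmax⟩ := SP.exists_max_image
    (fun ab => ∑ i, G.dist (ab.1 i) (ab.2 i)) hSPne
  obtain ⟨a, b⟩ := ab
  rw [hSPdef, Finset.mem_filter] at habS
  obtain ⟨-, hPa, hPb, hPne, hPcov⟩ := habS
  dsimp only at hPa hPb hPne hPcov
  set M := ∑ i, G.dist (a i) (b i) with hM
  have hmaxM : ∀ a' b' : Fin n → V, (∀ i, a' i ∈ L) → (∀ i, b' i ∈ L) →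
      (∀ i, a' i ≠ b' i) → (∀ v ∈ L, ∃ i, a' i = v ∨ b' i = v) →
      (∑ i, G.dist (a' i) (b' i)) ≤ M := by
    intro a' b' h1 h2 h3 h4
    exact hmax (a', b') (by rw [hSPdef, Finset.mem_filter]
                            exact ⟨Finset.mem_univ _, h1, h2, h3, h4⟩)
  have hcov : ∀ z : V, ∃ i, z ∈ (tpath hT (a i) (b i)).support := by
    intro z
    by_contra hz
    push_neg at hz
    obtain ⟨ℓ₁, ℓ₂, hd1, hd2, h12, hz12⟩ := exists_leaf_leaf_tpath hT hV z
    have hℓ₁L : ℓ₁ ∈ L := by rw [hLmem]; exact hd1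
    have hℓ₂L : ℓ₂ ∈ L := by rw [hLmem]; exact hd2
    have key : ∀ (a b : Fin n → V), (∀ i, a i ∈ L) → (∀ i, b i ∈ L) →
        (∀ i, a i ≠ b i) → (∀ v ∈ L, ∃ i, a i = v ∨ b i = v) →
        (∑ i, G.dist (a i) (b i)) = M →
        (∀ i, z ∉ (tpath hT (a i) (b i)).support) →
        ∀ j₁ j₂ : Fin n, j₁ ≠ j₂ → a j₁ = ℓ₁ → a j₂ = ℓ₂ → False := by
      clear hPa hPb hPne hPcov hM
      intro a b hPa hPb hPne hPcov hsum hzall j₁ j₂ hj ha1 ha2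
      have hz1 : z ∉ (tpath hT ℓ₁ (b j₁)).support := by rw [← ha1]; exact hzall j₁
      have hz2 : z ∉ (tpath hT ℓ₂ (b j₂)).support := by rw [← ha2]; exact hzall j₂
      have hm : z ∈ (tpath hT (b j₁) (b j₂)).support :=
        mem_tpath_of_not_mem hT hz12 hz1 hz2
      have hmm : b j₁ ≠ b j₂ := by
        intro h
        rw [h, tpath_self] at hm
        simp only [Walk.support_nil, List.mem_singleton] at hm
        apply hz2
        rw [hm]
        exact Walk.end_mem_support _
      have d1 := dist_add_dist_of_mem_tpath hT hz12
      have d2 := dist_add_dist_of_mem_tpath hT hm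
      have d3 := dist_lt_of_not_mem_tpath hT hz1
      have d4 := dist_lt_of_not_mem_tpath hT hz2
      set a' := Function.update a j₂ (b j₁) with ha'
      set b' := Function.update b j₁ (a j₂) with hb'
      have ha'j₁ : a' j₁ = ℓ₁ := by rw [ha', Function.update_of_ne hj]; exact ha1
      have ha'j₂ : a' j₂ = b j₁ := by rw [ha', Function.update_self]
      have hb'j₁ : b' j₁ = ℓ₂ := by rw [hb', Function.update_self]; exact ha2
      have hb'j₂ : b' j₂ = b j₂ := by rw [hb', Function.update_of_ne hj.symm]
      have ha'i : ∀ i, i ≠ j₂ → a' i = a i := fun i hi => by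
        rw [ha', Function.update_of_ne hi]
      have hb'i : ∀ i, i ≠ j₁ → b' i = b i := fun i hi => by
        rw [hb', Function.update_of_ne hi]
      have h1' : ∀ i, a' i ∈ L := by
        intro i; by_cases h : i = j₂
        · rw [h, ha'j₂]; exact hPb j₁
        · rw [ha'i i h]; exact hPa i
      have h2' : ∀ i, b' i ∈ L := by
        intro i; by_cases h : i = j₁
        · rw [h, hb'j₁]; exact hℓ₂L
        · rw [hb'i i h]; exact hPb i
      have h3' : ∀ i, a' i ≠ b' i := by
        intro i
        by_cases h : i = j₁
        · rw [h, ha'j₁, hb'j₁]; exact h12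
        · by_cases h2 : i = j₂
          · rw [h2, ha'j₂, hb'j₂]; exact hmm
          · rw [ha'i i h2, hb'i i h]; exact hPne i
      have h4' : ∀ v ∈ L, ∃ i, a' i = v ∨ b' i = v := by
        intro v hv
        obtain ⟨i, hi⟩ := hPcov v hv
        rcases hi with hi | hi
        · by_cases h : i = j₂
          · exact ⟨j₁, Or.inr (by rw [hb'j₁, ← ha2, ← h]; exact hi)⟩
          · exact ⟨i, Or.inl (by rw [ha'i i h]; exact hi)⟩
        · by_cases h : i = j₁
          · exact ⟨j₂, Or.inl (by rw [ha'j₂, ← h]; exact hi)⟩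
          · exact ⟨i, Or.inr (by rw [hb'i i h]; exact hi)⟩
      have hle := hmaxM a' b' h1' h2' h3' h4'
      have hsplit : ∀ (g : Fin n → ℕ), ∑ i, g i =
          ∑ i ∈ (Finset.univ.erase j₁).erase j₂, g i + g j₂ + g j₁ := by
        intro g
        rw [Finset.sum_erase_add _ _ (Finset.mem_erase.mpr ⟨hj.symm, Finset.mem_univ _⟩),
          Finset.sum_erase_add _ _ (Finset.mem_univ _)]
      have hcongr : ∀ i ∈ (Finset.univ.erase j₁).erase j₂,
          G.dist (a' i) (b' i) = G.dist (a i) (b i) := by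
        intro i hi
        rw [Finset.mem_erase, Finset.mem_erase] at hi
        rw [ha'i i hi.1, hb'i i hi.2.1]
      have hsum' : ∑ i, G.dist (a' i) (b' i) =
          (∑ i ∈ (Finset.univ.erase j₁).erase j₂, G.dist (a i) (b i))
            + G.dist (b j₁) (b j₂) + G.dist ℓ₁ ℓ₂ := by
        rw [hsplit (fun i => G.dist (a' i) (b' i)),
          Finset.sum_congr rfl hcongr, ha'j₂, hb'j₂, ha'j₁, hb'j₁]
      have hsum2 : M = (∑ i ∈ (Finset.univ.erase j₁).erase j₂, G.dist (a i) (b i))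
            + G.dist ℓ₂ (b j₂) + G.dist ℓ₁ (b j₁) := by
        rw [← hsum, hsplit (fun i => G.dist (a i) (b i)), ha1, ha2]
      have hc1 : G.dist z (b j₁) = G.dist (b j₁) z := SimpleGraph.dist_comm
      have hc2 : G.dist z ℓ₂ = G.dist ℓ₂ z := SimpleGraph.dist_comm
      rw [hsum'] at hle
      rw [hsum2] at hle
      linarith [d1, d2, d3, d4, hc1, hc2, hle]
    have flip : ∀ (a b : Fin n → V) (j : Fin n), (∀ i, a i ∈ L) → (∀ i, b i ∈ L) →
        (∀ i, a i ≠ b i) → (∀ v ∈ L, ∃ i, a i = v ∨ b i = v) →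
        (∑ i, G.dist (a i) (b i)) = M →
        (∀ i, z ∉ (tpath hT (a i) (b i)).support) →
        (∀ i, Function.update a j (b j) i ∈ L) ∧
        (∀ i, Function.update b j (a j) i ∈ L) ∧
        (∀ i, Function.update a j (b j) i ≠ Function.update b j (a j) i) ∧
        (∀ v ∈ L, ∃ i, Function.update a j (b j) i = v ∨ Function.update b j (a j) i = v) ∧
        (∑ i, G.dist (Function.update a j (b j) i) (Function.update b j (a j) i)) = M ∧
        (∀ i, z ∉ (tpath hT (Function.update a j (b j) i)
          (Function.update b j (a j) i)).support) := by
      intro a b j h1 h2 h3 h4 h5 h6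
      refine ⟨?_, ?_, ?_, ?_, ?_, ?_⟩
      · intro i; by_cases h : i = j
        · rw [h, Function.update_self]; exact h2 j
        · rw [Function.update_of_ne h]; exact h1 i
      · intro i; by_cases h : i = j
        · rw [h, Function.update_self]; exact h1 j
        · rw [Function.update_of_ne h]; exact h2 i
      · intro i; by_cases h : i = j
        · rw [h, Function.update_self, Function.update_self]; exact (h3 j).symm
        · rw [Function.update_of_ne h, Function.update_of_ne h]; exact h3 i
      · intro v hv
        obtain ⟨i, hi⟩ := h4 v hv
        by_cases h : i = j
        · subst h
          rcases hi with hi | hi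
          · exact ⟨i, Or.inr (by rw [Function.update_self]; exact hi)⟩
          · exact ⟨i, Or.inl (by rw [Function.update_self]; exact hi)⟩
        · rcases hi with hi | hi
          · exact ⟨i, Or.inl (by rw [Function.update_of_ne h]; exact hi)⟩
          · exact ⟨i, Or.inr (by rw [Function.update_of_ne h]; exact hi)⟩
      · rw [← h5]
        apply Finset.sum_congr rfl
        intro i _
        by_cases h : i = j
        · rw [h, Function.update_self, Function.update_self, SimpleGraph.dist_comm]
        · rw [Function.update_of_ne h, Function.update_of_ne h]
      · intro i
        by_cases h : i = j
        · rw [h, Function.update_self, Function.update_self]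
          intro hmem
          exact h6 j (mem_tpath_symm hT hmem)
        · rw [Function.update_of_ne h, Function.update_of_ne h]
          exact h6 i
    obtain ⟨j₁, hj₁⟩ := hPcov ℓ₁ hℓ₁L
    obtain ⟨j₂, hj₂⟩ := hPcov ℓ₂ hℓ₂L
    by_cases hjj : j₁ = j₂
    · subst hjj
      rcases hj₁ with h1 | h1 <;> rcases hj₂ with h2 | h2
      · exact h12 (h1.symm.trans h2)
      · exact hz j₁ (by rw [h1, h2]; exact hz12)
      · exact hz j₁ (by rw [h1, h2]; exact mem_tpath_symm hT hz12)
      · exact h12 (h1.symm.trans h2)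
    · rcases hj₁ with h1 | h1 <;> rcases hj₂ with h2 | h2
      · exact key a b hPa hPb hPne hPcov hM.symm hz j₁ j₂ hjj h1 h2
      · obtain ⟨f1, f2, f3, f4, f5, f6⟩ := flip a b j₂ hPa hPb hPne hPcov hM.symm hz
        exact key _ _ f1 f2 f3 f4 f5 f6 j₁ j₂ hjj
          (by rw [Function.update_of_ne hjj]; exact h1)
          (by rw [Function.update_self]; exact h2)
      · obtain ⟨f1, f2, f3, f4, f5, f6⟩ := flip a b j₁ hPa hPb hPne hPcov hM.symm hz
        exact key _ _ f1 f2 f3 f4 f5 f6 j₁ j₂ hjj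
          (by rw [Function.update_self]; exact h1)
          (by rw [Function.update_of_ne (Ne.symm hjj)]; exact h2)
      · obtain ⟨f1, f2, f3, f4, f5, f6⟩ := flip a b j₁ hPa hPb hPne hPcov hM.symm hz
        obtain ⟨g1, g2, g3, g4, g5, g6⟩ := flip _ _ j₂ f1 f2 f3 f4 f5 f6
        exact key _ _ g1 g2 g3 g4 g5 g6 j₁ j₂ hjj
          (by rw [Function.update_of_ne hjj, Function.update_self]; exact h1)
          (by rw [Function.update_self, Function.update_of_ne (Ne.symm hjj)]; exact h2)
  refine ⟨a, b, fun i => tpath hT (a i) (b i), fun i => tpath_isPath hT _ _, ?_, ?_,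
    hPne, hcov⟩
  · intro i; have := hPa i; rwa [hLmem] at this
  · intro i; have := hPb i; rwa [hLmem] at this

/-- In a finite unrooted tree with exactly `2 * n` leaves (`n ≥ 1`),
the minimum number of leaf-to-leaf paths (traversals) needed so that every vertex of
the tree lies on at least one of the paths is exactly `n`. -/
theorem min_traversal_cover_of_tree {V : Type} [Fintype V] [DecidableEq V]
    (G : SimpleGraph V) [DecidableRel G.Adj] (hT : G.IsTree) (n : ℕ) (hn : 1 ≤ n)
    (hleaves : (Finset.univ.filter fun v => G.degree v = 1).card = 2 * n) :
    IsLeast {k : ℕ | ∃ (a b : Fin k → V) (p : ∀ i, G.Walk (a i) (b i)),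
        (∀ i, (p i).IsPath) ∧ (∀ i, G.degree (a i) = 1) ∧ (∀ i, G.degree (b i) = 1) ∧
        (∀ i, a i ≠ b i) ∧ (∀ v : V, ∃ i, v ∈ (p i).support)} n := by
  constructor
  · exact exists_cover hT n hn hleaves
  · rintro k ⟨a, b, p, hpath, ha, hb, hne, hcov⟩
    exact cover_lower_bound hleaves a b p hpath hcov
end

section
/- Let T be a finite unrooted tree with 2n leaves. Then there exists a vertex v of T and a set of n leaf-to-leaf paths, each containing v, whose union covers all vertices of T. -/
set_option linter.unusedSectionVars false
namespace BalancedAux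

open SimpleGraph List Finset

variable {V : Type} [Fintype V] [DecidableEq V] {G : SimpleGraph V}

noncomputable def pth (hT : G.IsTree) (u w : V) : G.Walk u w :=
  (hT.existsUnique_path u w).exists.choose

lemma pth_isPath (hT : G.IsTree) (u w : V) : (pth hT u w).IsPath :=
  (hT.existsUnique_path u w).exists.choose_spec

lemma pth_unique (hT : G.IsTree) {u w : V} {p : G.Walk u w} (hp : p.IsPath) :
    p = pth hT u w :=
  (hT.existsUnique_path u w).unique hp (pth_isPath hT u w)

lemma pth_self (hT : G.IsTree) (u : V) : pth hT u u = SimpleGraph.Walk.nil :=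
  (pth_unique hT SimpleGraph.Walk.IsPath.nil).symm

lemma pth_length (hT : G.IsTree) (u w : V) : (pth hT u w).length = G.dist u w := by
  obtain ⟨p, hp, hl⟩ := hT.isConnected.exists_path_of_dist u w
  rw [← pth_unique hT hp]; exact hl

lemma pth_takeUntil (hT : G.IsTree) {u w z : V} (h : w ∈ (pth hT u z).support) :
    pth hT u w = (pth hT u z).takeUntil w h :=
  (pth_unique hT ((pth_isPath hT u z).takeUntil h)).symm

lemma pth_length_pos (hT : G.IsTree) {u w : V} (hne : u ≠ w) :
    1 ≤ (pth hT u w).length := by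
  by_contra h0
  exact hne (SimpleGraph.Walk.eq_of_length_eq_zero (p := pth hT u w) (by omega))

lemma getVert_one_takeUntil {u z w : V} (p : G.Walk u z) (h : w ∈ p.support) (hw : w ≠ u) :
    (p.takeUntil w h).getVert 1 = p.getVert 1 := by
  have hlen : 1 ≤ (p.takeUntil w h).length := by
    by_contra h0
    exact hw (SimpleGraph.Walk.eq_of_length_eq_zero (p := p.takeUntil w h) (by omega)).symm
  have hspec := SimpleGraph.Walk.take_spec p h
  have hgv := congrArg (fun q : G.Walk u z => q.getVert 1) hspec
  simp only [SimpleGraph.Walk.getVert_append] at hgv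
  rcases lt_or_eq_of_le hlen with hlt | heq
  · rwa [if_pos hlt] at hgv
  · rw [if_neg (by omega)] at hgv
    rw [← hgv, ← heq]
    simp only [Nat.sub_self, SimpleGraph.Walk.getVert_zero]
    have := (p.takeUntil w h).getVert_length
    rw [← heq] at this
    exact this

lemma pth_snd_eq (hT : G.IsTree) {u w z : V} (h : w ∈ (pth hT u z).support) (hw : w ≠ u) :
    (pth hT u w).getVert 1 = (pth hT u z).getVert 1 := by
  rw [pth_takeUntil hT h]
  exact getVert_one_takeUntil _ h hw

lemma pth_adj_snd (hT : G.IsTree) {u w : V} (hne : u ≠ w) :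
    G.Adj u ((pth hT u w).getVert 1) := by
  have h := (pth hT u w).adj_getVert_succ (i := 0) (pth_length_pos hT hne)
  rwa [SimpleGraph.Walk.getVert_zero] at h

lemma support_inter (hT : G.IsTree) {v l₁ l₂ w : V}
    (h1 : w ∈ (pth hT v l₁).support) (h2 : w ∈ (pth hT v l₂).support)
    (hne : (pth hT v l₁).getVert 1 ≠ (pth hT v l₂).getVert 1) : w = v := by
  by_contra hw
  exact hne ((pth_snd_eq hT h1 hw).symm.trans (pth_snd_eq hT h2 hw))

lemma join_isPath (hT : G.IsTree) {v a b : V}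
    (hne : (pth hT v a).getVert 1 ≠ (pth hT v b).getVert 1) :
    ((pth hT v a).reverse.append (pth hT v b)).IsPath := by
  rw [SimpleGraph.Walk.isPath_def, SimpleGraph.Walk.support_append,
    SimpleGraph.Walk.support_reverse]
  refine List.Nodup.append ?_ ?_ ?_
  · exact List.nodup_reverse.mpr (pth_isPath hT v a).support_nodup
  · exact ((pth_isPath hT v b).support_nodup).tail
  · intro x hx hx'
    have hx1 : x ∈ (pth hT v a).support := List.mem_reverse.mp hx
    have hx2 : x ∈ (pth hT v b).support := List.mem_of_mem_tail hx'
    have hxv : x = v := support_inter hT hx1 hx2 hne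
    rw [hxv] at hx'
    have hnd := (pth_isPath hT v b).support_nodup
    rw [SimpleGraph.Walk.support_eq_cons] at hnd
    exact (List.nodup_cons.mp hnd).1 hx'

lemma exists_leaf_path (hT : G.IsTree) [DecidableRel G.Adj] (v : V)
    (hl : ∃ l, G.degree l = 1) (w : V) :
    ∃ l, G.degree l = 1 ∧ w ∈ (pth hT v l).support := by
  classical
  by_cases hwv : w = v
  · obtain ⟨l, hl⟩ := hl
    exact ⟨l, hl, hwv ▸ (pth hT v l).start_mem_support⟩
  · obtain ⟨z, hz, hmax⟩ := Finset.exists_max_image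
      (Finset.univ.filter fun z => w ∈ (pth hT v z).support) (G.dist v)
      ⟨w, by simp [SimpleGraph.Walk.end_mem_support]⟩
    have hzsupp : w ∈ (pth hT v z).support := (Finset.mem_filter.mp hz).2
    refine ⟨z, ?_, hzsupp⟩
    by_contra hdeg
    have hzv : z ≠ v := by
      rintro rfl
      rw [pth_self] at hzsupp
      simp at hzsupp
      exact hwv hzsupp
    set p := pth hT v z with hpdef
    have hp : p.IsPath := pth_isPath hT v z
    have hlen : 1 ≤ p.length := pth_length_pos hT (Ne.symm hzv)
    -- predecessor y
    set y := p.getVert (p.length - 1) with hydef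
    have hy : G.Adj y z := by
      have h := p.adj_getVert_succ (i := p.length - 1) (by omega)
      rw [show p.length - 1 + 1 = p.length by omega, SimpleGraph.Walk.getVert_length] at h
      exact h
    have hymem : y ∈ G.neighborFinset z := by
      rw [SimpleGraph.mem_neighborFinset]
      exact hy.symm
    have hdeg2 : 1 < (G.neighborFinset z).card := by
      have h1 : 0 < (G.neighborFinset z).card := Finset.card_pos.mpr ⟨y, hymem⟩
      have : (G.neighborFinset z).card ≠ 1 := hdeg
      omega
    obtain ⟨x, hxmem, hxy⟩ := Finset.exists_mem_ne hdeg2 y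
    have hx : G.Adj z x := (SimpleGraph.mem_neighborFinset _ _ _).mp hxmem
    have hxz : x ≠ z := hx.ne'
    -- x is not on p
    have hxs : x ∉ p.support := by
      intro hxs
      have hdrop : (p.dropUntil x hxs).IsPath := hp.dropUntil hxs
      have hedge : (SimpleGraph.Walk.cons hx.symm SimpleGraph.Walk.nil : G.Walk x z).IsPath := by
        rw [SimpleGraph.Walk.isPath_def]
        simp [hxz]
      have he : p.dropUntil x hxs = SimpleGraph.Walk.cons hx.symm SimpleGraph.Walk.nil :=
        (pth_unique hT hdrop).trans (pth_unique hT hedge).symm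
      have hspec := SimpleGraph.Walk.take_spec p hxs
      rw [he] at hspec
      have hlen2 : (p.takeUntil x hxs).length + 1 = p.length := by
        have := congrArg SimpleGraph.Walk.length hspec
        simpa [SimpleGraph.Walk.length_append] using this
      have hgv := congrArg (fun q : G.Walk v z => q.getVert (p.length - 1)) hspec
      simp only [SimpleGraph.Walk.getVert_append] at hgv
      rw [if_neg (by omega)] at hgv
      rw [show p.length - 1 - (p.takeUntil x hxs).length = 0 by omega] at hgv
      simp only [SimpleGraph.Walk.getVert_zero] at hgv
      exact hxy hgv
    -- extend
    have hq : (p.concat hx).IsPath := by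
      rw [SimpleGraph.Walk.isPath_def, SimpleGraph.Walk.support_concat]
      refine List.Nodup.append hp.support_nodup (List.nodup_singleton x) ?_
      intro t ht ht'
      rw [List.mem_singleton] at ht'
      subst ht'
      exact hxs ht
    have hqe : p.concat hx = pth hT v x := pth_unique hT hq
    have hxfilter : x ∈ Finset.univ.filter fun z => w ∈ (pth hT v z).support := by
      rw [Finset.mem_filter]
      refine ⟨Finset.mem_univ _, ?_⟩
      rw [← hqe, SimpleGraph.Walk.support_concat]
      exact List.mem_append_left _ hzsupp
    have hle := hmax x hxfilter
    have hdx : G.dist v x = G.dist v z + 1 := by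
      rw [← pth_length hT v x, ← hqe, SimpleGraph.Walk.length_concat, pth_length]
    omega

end BalancedAux

open BalancedAux in
/-- Let `T` be a finite unrooted tree with `2 * n` leaves. Then there
exists a vertex `v` of `T` (a *balanced vertex*) and a set of `n` leaf-to-leaf paths,
each containing `v`, whose union covers all vertices of `T`.
(A tree in this context has at least two vertices, so `n ≥ 1`.) -/
theorem balanced_vertex_cover_of_tree {V : Type} [Fintype V] [DecidableEq V]
    (G : SimpleGraph V) [DecidableRel G.Adj] (hT : G.IsTree) (n : ℕ) (hn : 1 ≤ n)
    (hleaves : (Finset.univ.filter fun v => G.degree v = 1).card = 2 * n) :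
    ∃ (v : V) (a b : Fin n → V) (p : ∀ i, G.Walk (a i) (b i)),
      (∀ i, (p i).IsPath) ∧ (∀ i, G.degree (a i) = 1) ∧ (∀ i, G.degree (b i) = 1) ∧
      (∀ i, v ∈ (p i).support) ∧ (∀ w : V, ∃ i, w ∈ (p i).support) := by
  classical
  set leaves : Finset V := Finset.univ.filter (fun v => G.degree v = 1) with hLdef
  have hLcard : leaves.card = 2 * n := hleaves
  have hLne : ∃ l, G.degree l = 1 := by
    obtain ⟨l, hl⟩ := Finset.card_pos.mp (by omega : 0 < leaves.card)
    exact ⟨l, (Finset.mem_filter.mp hl).2⟩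
  have : Nonempty V := ⟨hLne.choose⟩
  obtain ⟨v, -, hmin⟩ := Finset.exists_min_image Finset.univ
    (fun u => ∑ l ∈ leaves, G.dist u l) Finset.univ_nonempty
  set S : V → Finset V :=
    fun c => leaves.filter fun l => l ≠ v ∧ (pth hT v l).getVert 1 = c with hSdef
  -- balance at v
  have balance : ∀ c : V, (S c).card ≤ n := by
    intro c
    by_contra hS
    push_neg at hS
    obtain ⟨l₀, hl₀⟩ := Finset.card_pos.mp (by omega : 0 < (S c).card)
    obtain ⟨hl₀L, hl₀v, hl₀c⟩ :
        l₀ ∈ leaves ∧ l₀ ≠ v ∧ (pth hT v l₀).getVert 1 = c := by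
      have := Finset.mem_filter.mp hl₀
      exact ⟨this.1, this.2.1, this.2.2⟩
    have hadj : G.Adj v c := hl₀c ▸ pth_adj_snd hT (Ne.symm hl₀v)
    have hbound : ∀ l ∈ leaves,
        G.dist c l + (if l ∈ S c then 2 else 0) ≤ G.dist v l + 1 := by
      intro l hlmem
      by_cases hls : l ∈ S c
      · rw [if_pos hls]
        obtain ⟨-, hlv, hlc⟩ :
            l ∈ leaves ∧ l ≠ v ∧ (pth hT v l).getVert 1 = c := by
          have := Finset.mem_filter.mp hls
          exact ⟨this.1, this.2.1, this.2.2⟩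
        obtain ⟨x, hx, q, hq⟩ :=
          SimpleGraph.Walk.exists_eq_cons_of_ne (Ne.symm hlv) (pth hT v l)
        have hxc : x = c := by
          rw [← hlc, hq, SimpleGraph.Walk.getVert_cons_succ,
            SimpleGraph.Walk.getVert_zero]
        subst hxc
        have hqpath : q.IsPath := by
          have := pth_isPath hT v l
          rw [hq] at this
          exact this.of_cons
        have hdcl : G.dist x l ≤ q.length := by
          have := pth_unique hT hqpath
          rw [this]
          rw [pth_length]
        have hlen : q.length + 1 = G.dist v l := by
          rw [← pth_length hT v l, hq, SimpleGraph.Walk.length_cons]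
        omega
      · rw [if_neg hls]
        have tri := hT.isConnected.dist_triangle (u := c) (v := v) (w := l)
        have h1 : G.dist c v ≤ 1 := by
          have := SimpleGraph.dist_le (SimpleGraph.Walk.cons hadj.symm SimpleGraph.Walk.nil)
          simpa using this
        omega
    have hsum := Finset.sum_le_sum hbound
    rw [Finset.sum_add_distrib, Finset.sum_add_distrib, Finset.sum_const] at hsum
    have hite : (∑ l ∈ leaves, if l ∈ S c then 2 else 0) = 2 * (S c).card := by
      rw [Finset.sum_ite_mem, Finset.inter_eq_right.mpr (Finset.filter_subset _ _),
        Finset.sum_const, smul_eq_mul, mul_comm]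
    rw [hite, hLcard, smul_eq_mul, mul_one] at hsum
    have hm := hmin c (Finset.mem_univ c)
    omega
  by_cases hv : G.degree v = 1
  · -- v is itself a leaf; then n = 1
    have hvL : v ∈ leaves := by
      rw [hLdef, Finset.mem_filter]
      exact ⟨Finset.mem_univ _, hv⟩
    obtain ⟨l₁, hl₁⟩ := Finset.card_pos.mp
      (by rw [Finset.card_erase_of_mem hvL, hLcard]; omega : 0 < (leaves.erase v).card)
    have hl₁v : l₁ ≠ v := (Finset.mem_erase.mp hl₁).1
    have hl₁L : l₁ ∈ leaves := (Finset.mem_erase.mp hl₁).2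
    set c := (pth hT v l₁).getVert 1 with hcdef
    have hsub : leaves.erase v ⊆ S c := by
      intro l hl
      obtain ⟨hlv, hlL⟩ := Finset.mem_erase.mp hl
      refine Finset.mem_filter.mpr ⟨hlL, hlv, ?_⟩
      have h1 : (pth hT v l).getVert 1 ∈ G.neighborFinset v := by
        rw [SimpleGraph.mem_neighborFinset]
        exact pth_adj_snd hT (Ne.symm hlv)
      have h2 : c ∈ G.neighborFinset v := by
        rw [SimpleGraph.mem_neighborFinset]
        exact pth_adj_snd hT (Ne.symm hl₁v)
      have hcard1 : (G.neighborFinset v).card ≤ 1 := le_of_eq hv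
      exact Finset.card_le_one.mp hcard1 _ h1 _ h2
    have hn1 : n = 1 := by
      have h1 := Finset.card_le_card hsub
      rw [Finset.card_erase_of_mem hvL, hLcard] at h1
      have h2 := balance c
      omega
    subst hn1
    refine ⟨v, fun _ => v, fun _ => l₁, fun _ => pth hT v l₁, ?_, ?_, ?_, ?_, ?_⟩
    · intro i; exact pth_isPath hT v l₁
    · intro i; exact hv
    · intro i; exact (Finset.mem_filter.mp hl₁L).2
    · intro i; exact (pth hT v l₁).start_mem_support
    · intro w
      obtain ⟨l, hldeg, hlw⟩ := exists_leaf_path hT v hLne w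
      have hlL : l ∈ leaves := by
        rw [hLdef, Finset.mem_filter]; exact ⟨Finset.mem_univ _, hldeg⟩
      have hset : leaves = {v, l₁} := by
        apply (Finset.eq_of_subset_of_card_le ?_ ?_).symm
        · intro t ht
          simp only [Finset.mem_insert, Finset.mem_singleton] at ht
          rcases ht with rfl | rfl
          exacts [hvL, hl₁L]
        · rw [hLcard]
          have hc2 : ({v, l₁} : Finset V).card = 2 := by
            rw [Finset.card_insert_of_notMem (by simp [Ne.symm hl₁v]), Finset.card_singleton]
          omega
      rw [hset] at hlL
      simp only [Finset.mem_insert, Finset.mem_singleton] at hlL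
      refine ⟨0, ?_⟩
      rcases hlL with rfl | rfl
      · rw [pth_self] at hlw
        simp only [SimpleGraph.Walk.support_nil, List.mem_singleton] at hlw
        subst hlw
        exact (pth hT w l₁).start_mem_support
      · exact hlw
  · -- main case : v is not a leaf
    have hvnl : ∀ l ∈ leaves, l ≠ v := by
      intro l hl
      rintro rfl
      exact hv ((Finset.mem_filter.mp hl).2)
    set e := Fintype.equivFin V with hedef
    set key : V → ℕ := fun l => (e ((pth hT v l).getVert 1) : ℕ) with hkey
    set ls : List V := leaves.toList.mergeSort (fun a b => key a ≤ key b) with hls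
    have hperm : ls.Perm leaves.toList := List.mergeSort_perm _ _
    have hlslen : ls.length = 2 * n := by
      rw [hperm.length_eq, Finset.length_toList, hLcard]
    have hnodup : ls.Nodup := hperm.nodup_iff.mpr (Finset.nodup_toList _)
    have hmem : ∀ x, x ∈ ls ↔ x ∈ leaves := by
      intro x
      rw [hperm.mem_iff, Finset.mem_toList]
    have hpw := List.pairwise_mergeSort
      (le := fun a b => decide (key a ≤ key b))
      (fun a b c h1 h2 => by
        simp only [decide_eq_true_eq] at *
        omega)
      (fun a b => by
        simp only [Bool.or_eq_true, decide_eq_true_eq]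
        omega)
      leaves.toList
    rw [← hls] at hpw
    have hsorted : ∀ (i j : ℕ) (hi : i < ls.length) (hj : j < ls.length), i ≤ j →
        key (ls[i]'hi) ≤ key (ls[j]'hj) := by
      intro i j hi hj hij
      rcases Nat.lt_or_ge i j with hlt | hge
      · have := List.pairwise_iff_getElem.mp hpw i j hi hj hlt
        simpa using this
      · have : i = j := by omega
        subst this
        exact le_refl _
    have hidx : ∀ i : Fin n, (i : ℕ) < ls.length := by
      intro i; rw [hlslen]; omega
    have hidx2 : ∀ i : Fin n, (i : ℕ) + n < ls.length := by
      intro i; rw [hlslen]; omega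
    have hdiff : ∀ i : Fin n,
        (pth hT v (ls[(i : ℕ)]'(hidx i))).getVert 1 ≠
          (pth hT v (ls[(i : ℕ) + n]'(hidx2 i))).getVert 1 := by
      intro i heq
      set c := (pth hT v (ls[(i : ℕ)]'(hidx i))).getVert 1 with hc
      have hkeyeq : key (ls[(i : ℕ)]'(hidx i)) = key (ls[(i : ℕ) + n]'(hidx2 i)) := by
        rw [hkey]
        simp only
        rw [← heq, ← hc]
      have hsubmem : ∀ k (hk1 : (i : ℕ) ≤ k) (hk2 : k ≤ (i : ℕ) + n),
          (ls[k]'(by rw [hlslen]; omega)) ∈ S c := by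
        intro k hk1 hk2
        have hkls : k < ls.length := by rw [hlslen]; omega
        have hmemL : ls[k]'hkls ∈ leaves := (hmem _).mp (List.getElem_mem _)
        refine Finset.mem_filter.mpr ⟨hmemL, hvnl _ hmemL, ?_⟩
        have h1 := hsorted (i : ℕ) k (hidx i) hkls hk1
        have h2 := hsorted k ((i : ℕ) + n) hkls (hidx2 i) hk2
        have hkk : key (ls[k]'hkls) = key (ls[(i : ℕ)]'(hidx i)) := by omega
        rw [hkey] at hkk
        simp only at hkk
        have := e.injective (Fin.val_injective hkk)
        rw [this, ← hc]
      have hcard : n + 1 ≤ (S c).card := by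
        have hinj : Finset.card (Finset.Icc (i : ℕ) ((i : ℕ) + n)) ≤ (S c).card := by
          apply Finset.card_le_card_of_injOn (fun k => ls.getD k v)
          · intro k hk
            rw [Finset.mem_coe, Finset.mem_Icc] at hk
            have hkls : k < ls.length := by rw [hlslen]; omega
            simp only [Finset.mem_coe]
            rw [List.getD_eq_getElem ls v hkls]
            exact hsubmem k hk.1 hk.2
          · intro k1 h1 k2 h2 hgd
            rw [Finset.mem_coe, Finset.mem_Icc] at h1 h2
            have hk1 : k1 < ls.length := by rw [hlslen]; omega
            have hk2 : k2 < ls.length := by rw [hlslen]; omega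
            dsimp only at hgd
            rw [List.getD_eq_getElem ls v hk1, List.getD_eq_getElem ls v hk2] at hgd
            exact Fin.mk.inj_iff.mp (List.nodup_iff_injective_get.mp hnodup
              (by simpa using hgd : ls.get ⟨k1, hk1⟩ = ls.get ⟨k2, hk2⟩))
        rw [Nat.card_Icc] at hinj
        omega
      have := balance c
      omega
    refine ⟨v, fun i => ls[(i : ℕ)]'(hidx i), fun i => ls[(i : ℕ) + n]'(hidx2 i),
      fun i => (pth hT v _).reverse.append (pth hT v _), ?_, ?_, ?_, ?_, ?_⟩
    · intro i
      exact join_isPath hT (hdiff i)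
    · intro i
      have : ls[(i : ℕ)]'(hidx i) ∈ leaves := (hmem _).mp (List.getElem_mem _)
      exact (Finset.mem_filter.mp this).2
    · intro i
      have : ls[(i : ℕ) + n]'(hidx2 i) ∈ leaves := (hmem _).mp (List.getElem_mem _)
      exact (Finset.mem_filter.mp this).2
    · intro i
      rw [SimpleGraph.Walk.mem_support_append_iff]
      left
      rw [SimpleGraph.Walk.support_reverse, List.mem_reverse]
      exact SimpleGraph.Walk.start_mem_support _
    · intro w
      obtain ⟨l, hldeg, hlw⟩ := exists_leaf_path hT v hLne w
      have hlL : l ∈ ls := (hmem l).mpr (by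
        rw [hLdef, Finset.mem_filter]; exact ⟨Finset.mem_univ _, hldeg⟩)
      obtain ⟨j, hj, hjl⟩ := List.mem_iff_getElem.mp hlL
      rcases Nat.lt_or_ge j n with hjn | hjn
      · refine ⟨⟨j, hjn⟩, ?_⟩
        rw [SimpleGraph.Walk.mem_support_append_iff]
        left
        rw [SimpleGraph.Walk.support_reverse, List.mem_reverse]
        have hh : ls[((⟨j, hjn⟩ : Fin n) : ℕ)]'(hidx ⟨j, hjn⟩) = l := hjl
        dsimp only
        rw [hh]
        exact hlw
      · have hjn2 : j - n < n := by rw [hlslen] at hj; omega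
        refine ⟨⟨j - n, hjn2⟩, ?_⟩
        rw [SimpleGraph.Walk.mem_support_append_iff]
        right
        have hnat : ((⟨j - n, hjn2⟩ : Fin n) : ℕ) + n = j := by
          simp only []
          omega
        have hh : ls[((⟨j - n, hjn2⟩ : Fin n) : ℕ) + n]'(hidx2 ⟨j - n, hjn2⟩) = l := by
          rw [getElem_congr rfl hnat]
          exact hjl
        dsimp only
        rw [hh]
        exact hlw
end

section
/- Let T be a finite unrooted tree whose set of 'bad' leaves all carry a common tag, with ℓ ≥ 2 bad leaves, and suppose every path connecting two tagged leaves has cost 1 while a path covering a single bad node has cost 1. Then the minimum total cost of a set of paths covering all bad nodes of T, where a path between two leaves sharing a tag costs 1, is ⌈ℓ/2⌉. -/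
open SimpleGraph Finset

namespace TreeCoverAux


variable {V : Type} [DecidableEq V]

lemma pairing (f : V → V) :
    ∀ n : ℕ, ∀ L : Finset V, L.card = n → 2 ≤ n →
      (∀ u, (L.filter fun l => f l = u).card ≤ n / 2) →
      ∃ ps : List (V × V), ps.length = (n + 1) / 2 ∧
        (∀ q ∈ ps, q.1 ∈ L ∧ q.2 ∈ L ∧ f q.1 ≠ f q.2) ∧
        (∀ l ∈ L, ∃ q ∈ ps, l = q.1 ∨ l = q.2) := by
  intro n
  induction n using Nat.strong_induction_on with
  | _ n IH =>
  intro L hcard h2 hfib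
  -- basic fact: elements with equal f-value land in the same fiber
  have hpair_card : ∀ x ∈ L, ∀ y ∈ L, x ≠ y → f x = f y →
      2 ≤ (L.filter fun l => f l = f x).card := by
    intro x hx y hy hxy hf
    have hsub : ({x, y} : Finset V) ⊆ L.filter fun l => f l = f x := by
      intro z hz
      rcases Finset.mem_insert.mp hz with rfl | hz
      · exact Finset.mem_filter.mpr ⟨hx, rfl⟩
      · rcases Finset.mem_singleton.mp hz with rfl
        exact Finset.mem_filter.mpr ⟨hy, hf.symm⟩
    calc 2 = ({x, y} : Finset V).card := (Finset.card_pair hxy).symm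
    _ ≤ _ := Finset.card_le_card hsub
  rcases Nat.lt_or_ge n 4 with hn4 | hn4
  · -- base cases: n = 2 or n = 3
    interval_cases n
    · obtain ⟨a, b, hab, rfl⟩ := Finset.card_eq_two.mp hcard
      have hfab : f a ≠ f b := by
        intro h
        have := hpair_card a (by simp) b (by simp) hab h
        have := hfib (f a)
        omega
      refine ⟨[(a, b)], rfl, ?_, ?_⟩
      · intro q hq
        rcases List.mem_singleton.mp hq with rfl
        exact ⟨by simp, by simp, hfab⟩
      · intro l hl
        refine ⟨(a, b), List.mem_singleton_self _, ?_⟩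
        rcases Finset.mem_insert.mp hl with h | h
        · exact Or.inl h
        · exact Or.inr (Finset.mem_singleton.mp h)
    · obtain ⟨a, b, c, hab, hac, hbc, rfl⟩ := Finset.card_eq_three.mp hcard
      have key : ∀ x ∈ ({a, b, c} : Finset V), ∀ y ∈ ({a, b, c} : Finset V),
          x ≠ y → f x ≠ f y := by
        intro x hx y hy hxy h
        have := hpair_card x hx y hy hxy h
        have := hfib (f x)
        omega
      refine ⟨[(a, b), (a, c)], rfl, ?_, ?_⟩
      · intro q hq
        rcases List.mem_cons.mp hq with rfl | hq
        · exact ⟨by simp, by simp, key a (by simp) b (by simp) hab⟩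
        · rcases List.mem_singleton.mp hq with rfl
          exact ⟨by simp, by simp, key a (by simp) c (by simp) hac⟩
      · intro l hl
        rcases Finset.mem_insert.mp hl with h | hl
        · exact ⟨(a, b), by simp, Or.inl h⟩
        rcases Finset.mem_insert.mp hl with h | hl
        · exact ⟨(a, b), by simp, Or.inr h⟩
        · exact ⟨(a, c), by simp, Or.inr (Finset.mem_singleton.mp hl)⟩
  · -- inductive step, n ≥ 4
    have hLne : L.Nonempty := Finset.card_pos.mp (by omega)
    obtain ⟨a, haL, hamax⟩ :=
      L.exists_max_image (fun l => (L.filter fun x => f x = f l).card) hLne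
    set L' := L.filter (fun l => ¬ (f l = f a)) with hL'
    have hL'card : (L.filter fun l => f l = f a).card + L'.card = n := by
      rw [← hcard]; exact Finset.card_filter_add_card_filter_not _
    have hL'ne : L'.Nonempty := by
      have := hfib (f a); apply Finset.card_pos.mp; omega
    obtain ⟨b, hbL', hbmax⟩ :=
      L'.exists_max_image (fun l => (L.filter fun x => f x = f l).card) hL'ne
    have hbL : b ∈ L := (Finset.mem_filter.mp hbL').1
    have hfba : ¬ (f b = f a) := (Finset.mem_filter.mp hbL').2
    have hba : b ≠ a := fun h => hfba (by rw [h])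
    set M := (L.erase a).erase b with hM
    have hbea : b ∈ L.erase a := Finset.mem_erase.mpr ⟨hba, hbL⟩
    have hMcard : M.card = n - 2 := by
      rw [hM, Finset.card_erase_of_mem hbea, Finset.card_erase_of_mem haL, hcard]; omega
    have hMsub : M ⊆ L := (Finset.erase_subset _ _).trans (Finset.erase_subset _ _)
    have haM : a ∉ M := fun h => (Finset.mem_erase.mp (Finset.mem_erase.mp h).2).1 rfl
    have hbM : b ∉ M := fun h => (Finset.mem_erase.mp h).1 rfl
    have hMfib : ∀ u, (M.filter fun l => f l = u).card ≤ (n - 2) / 2 := by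
      intro u
      by_cases hua : u = f a
      · subst hua
        have hsub : (M.filter fun l => f l = f a) ⊆ (L.filter fun l => f l = f a).erase a := by
          intro x hx
          rcases Finset.mem_filter.mp hx with ⟨hxM, hxf⟩
          exact Finset.mem_erase.mpr ⟨fun h => haM (h ▸ hxM),
            Finset.mem_filter.mpr ⟨hMsub hxM, hxf⟩⟩
        have h1 : a ∈ L.filter fun l => f l = f a := Finset.mem_filter.mpr ⟨haL, rfl⟩
        have := Finset.card_le_card hsub
        rw [Finset.card_erase_of_mem h1] at this
        have := hfib (f a)
        omega
      by_cases hub : u = f b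
      · subst hub
        have hsub : (M.filter fun l => f l = f b) ⊆ (L.filter fun l => f l = f b).erase b := by
          intro x hx
          rcases Finset.mem_filter.mp hx with ⟨hxM, hxf⟩
          exact Finset.mem_erase.mpr ⟨fun h => hbM (h ▸ hxM),
            Finset.mem_filter.mpr ⟨hMsub hxM, hxf⟩⟩
        have h1 : b ∈ L.filter fun l => f l = f b := Finset.mem_filter.mpr ⟨hbL, rfl⟩
        have := Finset.card_le_card hsub
        rw [Finset.card_erase_of_mem h1] at this
        have := hfib (f b)
        omega
      · -- untouched fiber
        have heq : (M.filter fun l => f l = u) = (L.filter fun l => f l = u) := by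
          apply Finset.Subset.antisymm
          · exact Finset.filter_subset_filter _ hMsub
          · intro x hx
            rcases Finset.mem_filter.mp hx with ⟨hxL, hxf⟩
            have hxa : x ≠ a := fun h => hua (by rw [← hxf, h])
            have hxb : x ≠ b := fun h => hub (by rw [← hxf, h])
            exact Finset.mem_filter.mpr
              ⟨Finset.mem_erase.mpr ⟨hxb, Finset.mem_erase.mpr ⟨hxa, hxL⟩⟩, hxf⟩
        rw [heq]
        by_contra hcon
        push_neg at hcon
        have hFu : 0 < (L.filter fun l => f l = u).card := by
          have := hfib u; omega
        obtain ⟨w, hw⟩ := Finset.card_pos.mp hFu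
        rcases Finset.mem_filter.mp hw with ⟨hwL, hwf⟩
        have hwL' : w ∈ L' := Finset.mem_filter.mpr ⟨hwL, by rw [hwf]; exact hua⟩
        have h1 : (L.filter fun x => f x = u).card ≤ (L.filter fun x => f x = f b).card := by
          have := hbmax w hwL'; rwa [hwf] at this
        have h2 : (L.filter fun x => f x = u).card ≤ (L.filter fun x => f x = f a).card := by
          have := hamax w hwL; rwa [hwf] at this
        -- three disjoint fibers
        have hd1 : Disjoint (L.filter fun x => f x = f a) (L.filter fun x => f x = f b) := by
          apply Finset.disjoint_filter_filter'
          exact Set.disjoint_left.mpr (fun x hx hx' => hfba (by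
            change f x = f a at hx; change f x = f b at hx'; rw [← hx, hx']))
        have hd2 : Disjoint ((L.filter fun x => f x = f a) ∪ (L.filter fun x => f x = f b))
            (L.filter fun x => f x = u) := by
          rw [Finset.disjoint_union_left]
          constructor
          · apply Finset.disjoint_filter_filter'
            exact Set.disjoint_left.mpr (fun x hx hx' => hua (by
              change f x = f a at hx; change f x = u at hx'; rw [← hx', hx]))
          · apply Finset.disjoint_filter_filter'
            exact Set.disjoint_left.mpr (fun x hx hx' => hub (by
              change f x = f b at hx; change f x = u at hx'; rw [← hx', hx]))
        have hsum : (L.filter fun x => f x = f a).card + (L.filter fun x => f x = f b).card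
            + (L.filter fun x => f x = u).card ≤ n := by
          have hsub : ((L.filter fun x => f x = f a) ∪ (L.filter fun x => f x = f b))
              ∪ (L.filter fun x => f x = u) ⊆ L := by
            apply Finset.union_subset
            · exact Finset.union_subset (Finset.filter_subset _ _) (Finset.filter_subset _ _)
            · exact Finset.filter_subset _ _
          have := Finset.card_le_card hsub
          rw [Finset.card_union_of_disjoint hd2, Finset.card_union_of_disjoint hd1, hcard] at this
          omega
        omega
    obtain ⟨ps', hlen', hmem', hcov'⟩ := IH (n - 2) (by omega) M hMcard (by omega) hMfib
    refine ⟨(a, b) :: ps', by simp [hlen']; omega, ?_, ?_⟩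
    · intro q hq
      rcases List.mem_cons.mp hq with rfl | hq
      · exact ⟨haL, hbL, fun h => hfba h.symm⟩
      · obtain ⟨h1, h2, h3⟩ := hmem' q hq
        exact ⟨hMsub h1, hMsub h2, h3⟩
    · intro l hl
      by_cases hla : l = a
      · exact ⟨(a, b), List.mem_cons_self, Or.inl hla⟩
      by_cases hlb : l = b
      · exact ⟨(a, b), List.mem_cons_self, Or.inr hlb⟩
      · have : l ∈ M := Finset.mem_erase.mpr ⟨hlb, Finset.mem_erase.mpr ⟨hla, hl⟩⟩
        obtain ⟨q, hq, hq'⟩ := hcov' l this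
        exact ⟨q, List.mem_cons_of_mem _ hq, hq'⟩



variable {V : Type} [DecidableEq V] {G : SimpleGraph V}

section Tree

variable (hT : G.IsTree)
include hT
set_option linter.unusedSectionVars false

noncomputable def pth (a b : V) : G.Walk a b := (hT.existsUnique_path a b).choose

lemma pth_isPath (a b : V) : (pth hT a b).IsPath := (hT.existsUnique_path a b).choose_spec.1

lemma pth_eq {a b : V} (p : G.Walk a b) (hp : p.IsPath) : p = pth hT a b :=
  (hT.existsUnique_path a b).choose_spec.2 p hp

lemma pth_self (a : V) : pth hT a a = Walk.nil := (pth_eq hT Walk.nil Walk.IsPath.nil).symm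

lemma pth_reverse (a b : V) : (pth hT a b).reverse = pth hT b a :=
  pth_eq hT _ ((pth_isPath hT a b).reverse)

lemma mem_pth_symm {a b v : V} (h : v ∈ (pth hT a b).support) : v ∈ (pth hT b a).support := by
  rw [← pth_reverse, Walk.support_reverse, List.mem_reverse]; exact h

lemma dist_pth (a b : V) : G.dist a b = (pth hT a b).length := by
  obtain ⟨p, hp, hl⟩ := hT.isConnected.exists_path_of_dist a b
  rw [← hl, pth_eq hT p hp]

lemma pth_adj {a b : V} (h : G.Adj a b) : pth hT a b = Walk.cons h Walk.nil :=
  (pth_eq hT _ (by simp [Walk.cons_isPath_iff, h.ne])).symm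

lemma adj_mem_support_eq {l z u : V} {q : G.Walk l z} (hq : q.IsPath) (hadj : G.Adj l u)
    (hu : u ∈ q.support) : u = q.getVert 1 := by
  have h1 : q.takeUntil u hu = pth hT l u := pth_eq hT _ (hq.takeUntil hu)
  have h2 : pth hT l u = Walk.cons hadj Walk.nil := pth_adj hT hadj
  have h3 := (Walk.take_spec q hu).symm
  rw [h1, h2] at h3
  have h4 := congrArg (fun w : G.Walk l z => w.getVert 1) h3
  simp only [Walk.cons_append, Walk.nil_append] at h4
  rw [Walk.getVert_cons_succ, Walk.getVert_zero] at h4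
  exact h4.symm

noncomputable def nxt (c l : V) : V :=
  if h : l = c then c
  else (Walk.exists_eq_cons_of_ne (fun hc => h hc.symm) (pth hT c l)).choose

lemma nxt_spec {c l : V} (h : l ≠ c) :
    ∃ (ha : G.Adj c (nxt hT c l)) (q : G.Walk (nxt hT c l) l),
      pth hT c l = Walk.cons ha q := by
  rw [nxt, dif_neg h]
  exact (Walk.exists_eq_cons_of_ne (fun hc => h hc.symm) (pth hT c l)).choose_spec

lemma adj_nxt {c l : V} (h : l ≠ c) : G.Adj c (nxt hT c l) := (nxt_spec hT h).choose

lemma nxt_getVert {c l : V} (h : l ≠ c) : nxt hT c l = (pth hT c l).getVert 1 := by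
  obtain ⟨ha, q, hq⟩ := nxt_spec hT h
  rw [hq, Walk.getVert_cons_succ, Walk.getVert_zero]

lemma dist_nxt {c l : V} (h : l ≠ c) : G.dist (nxt hT c l) l + 1 = G.dist c l := by
  obtain ⟨ha, q, hq⟩ := nxt_spec hT h
  have hqp : q.IsPath := by
    have := pth_isPath hT c l
    rw [hq] at this
    exact this.of_cons
  have h1 : G.dist (nxt hT c l) l = q.length := by rw [dist_pth hT, ← pth_eq hT q hqp]
  have h2 : G.dist c l = q.length + 1 := by
    rw [dist_pth hT, hq, Walk.length_cons]
  omega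

lemma nxt_eq_of_mem {c a x : V} (ha : a ≠ c) (hx : x ≠ c)
    (hmem : x ∈ (pth hT c a).support) : nxt hT c x = nxt hT c a := by
  obtain ⟨h1, q, hq⟩ := nxt_spec hT ha
  have hpath : (pth hT c a).IsPath := pth_isPath hT c a
  rw [hq] at hpath hmem
  have hqp : q.IsPath := hpath.of_cons
  have hcq : c ∉ q.support := ((Walk.cons_isPath_iff _ _).mp hpath).2
  have hxq : x ∈ q.support := by
    rw [Walk.support_cons] at hmem
    rcases List.mem_cons.mp hmem with h | h
    · exact absurd h hx
    · exact h
  have hW : (Walk.cons h1 (q.takeUntil x hxq)).IsPath := by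
    rw [Walk.cons_isPath_iff]
    exact ⟨hqp.takeUntil hxq, fun hc => hcq (Walk.support_takeUntil_subset _ hxq hc)⟩
  have hWe : Walk.cons h1 (q.takeUntil x hxq) = pth hT c x := pth_eq hT _ hW
  rw [nxt_getVert hT hx, ← hWe, Walk.getVert_cons_succ, Walk.getVert_zero]

lemma mem_pair_support {c a b v : V}
    (hfab : (if a = c then c else nxt hT c a) ≠ (if b = c then c else nxt hT c b))
    (hv : v ∈ (pth hT a c).support ∨ v ∈ (pth hT c b).support) :
    v ∈ (pth hT a b).support := by
  by_cases hac : a = c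
  · subst hac
    rcases hv with hv | hv
    · rw [pth_self] at hv
      rw [Walk.support_nil, List.mem_singleton] at hv
      subst hv
      exact Walk.start_mem_support _
    · exact hv
  by_cases hbc : b = c
  · subst hbc
    rcases hv with hv | hv
    · exact hv
    · rw [pth_self] at hv
      rw [Walk.support_nil, List.mem_singleton] at hv
      subst hv
      exact Walk.end_mem_support _
  · rw [if_neg hac, if_neg hbc] at hfab
    have hdisj : ∀ x, x ∈ (pth hT a c).support → x ∈ (pth hT c b).support → x = c := by
      intro x h1 h2
      by_contra hxc
      have h1' : x ∈ (pth hT c a).support := mem_pth_symm hT h1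
      have e1 := nxt_eq_of_mem hT hac hxc h1'
      have e2 := nxt_eq_of_mem hT hbc hxc h2
      rw [e1] at e2
      exact hfab e2
    have hWp : ((pth hT a c).append (pth hT c b)).IsPath := by
      rw [Walk.isPath_def, Walk.support_append]
      apply List.Nodup.append
      · exact (pth_isPath hT a c).support_nodup
      · exact ((pth_isPath hT c b).support_nodup).tail
      · intro x hx1 hx2
        have hx2' : x ∈ (pth hT c b).support := List.mem_of_mem_tail hx2
        have hxc := hdisj x hx1 hx2'
        rw [hxc] at hx2
        have hnd := (pth_isPath hT c b).support_nodup
        rw [Walk.support_eq_cons] at hnd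
        exact (List.nodup_cons.mp hnd).1 hx2
    have hWe : (pth hT a c).append (pth hT c b) = pth hT a b := pth_eq hT _ hWp
    rw [← hWe, Walk.support_append, List.mem_append]
    rcases hv with hv | hv
    · exact Or.inl hv
    · rw [Walk.support_eq_cons] at hv
      rcases List.mem_cons.mp hv with h | h
      · subst h
        exact Or.inl (Walk.end_mem_support _)
      · exact Or.inr h

variable [Fintype V] [DecidableRel G.Adj]

lemma leaf_endpoint {a b v : V} {p : G.Walk a b} (hp : p.IsPath)
    (hd : G.degree v = 1) (hv : v ∈ p.support) : v = a ∨ v = b := by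
  by_contra hcon
  push_neg at hcon
  obtain ⟨hva, hvb⟩ := hcon
  have hqp : (p.takeUntil v hv).IsPath := hp.takeUntil hv
  have hrp : (p.dropUntil v hv).IsPath := hp.dropUntil hv
  obtain ⟨u1, hu1, q', hq'⟩ := Walk.exists_eq_cons_of_ne hva (p.takeUntil v hv).reverse
  obtain ⟨u2, hu2, r', hr'⟩ := Walk.exists_eq_cons_of_ne hvb (p.dropUntil v hv)
  have hu1q : u1 ∈ (p.takeUntil v hv).support := by
    have : u1 ∈ (p.takeUntil v hv).reverse.support := by
      rw [hq']
      exact List.mem_cons_of_mem _ (Walk.start_mem_support q')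
    rwa [Walk.support_reverse, List.mem_reverse] at this
  have hu2r : u2 ∈ (p.dropUntil v hv).support.tail := by
    rw [hr', Walk.support_cons, List.tail_cons]
    exact Walk.start_mem_support r'
  have hnd : ((p.takeUntil v hv).support ++ (p.dropUntil v hv).support.tail).Nodup := by
    rw [← Walk.support_append, Walk.take_spec p hv]
    exact hp.support_nodup
  have hne : u1 ≠ u2 := by
    intro h
    subst h
    exact (List.disjoint_of_nodup_append hnd) hu1q hu2r
  have hsub : ({u1, u2} : Finset V) ⊆ G.neighborFinset v := by
    intro z hz
    rcases Finset.mem_insert.mp hz with h | h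
    · subst h
      exact (SimpleGraph.mem_neighborFinset _ _ _).mpr hu1
    · rw [Finset.mem_singleton] at h
      subst h
      exact (SimpleGraph.mem_neighborFinset _ _ _).mpr hu2
  have h2 : 2 ≤ G.degree v := by
    calc 2 = ({u1, u2} : Finset V).card := (Finset.card_pair hne).symm
    _ ≤ (G.neighborFinset v).card := Finset.card_le_card hsub
    _ = G.degree v := rfl
  omega

lemma exists_leaf_path_through (c : V) (hleaf : ∃ l, G.degree l = 1) (v : V) :
    ∃ l, G.degree l = 1 ∧ v ∈ (pth hT l c).support := by
  by_cases hvc : v = c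
  · obtain ⟨l, hl⟩ := hleaf
    exact ⟨l, hl, hvc ▸ Walk.end_mem_support _⟩
  · have hvS : v ∈ Finset.univ.filter (fun w => v ∈ (pth hT w c).support) :=
      Finset.mem_filter.mpr ⟨Finset.mem_univ _, Walk.start_mem_support _⟩
    obtain ⟨l, hlS, hlmax⟩ :=
      Finset.exists_max_image _ (fun w => G.dist c w) ⟨v, hvS⟩
    have hvsup : v ∈ (pth hT l c).support := (Finset.mem_filter.mp hlS).2
    have hlc : l ≠ c := by
      rintro rfl
      rw [pth_self, Walk.support_nil, List.mem_singleton] at hvsup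
      exact hvc hvsup
    refine ⟨l, ?_, hvsup⟩
    by_contra hdeg
    have hnn : ¬ (pth hT l c).Nil := Walk.not_nil_of_ne hlc
    have hadj1 : G.Adj l ((pth hT l c).getVert 1) := Walk.adj_snd hnn
    have hdeg1 : 0 < G.degree l := (G.degree_pos_iff_exists_adj l).mpr ⟨_, hadj1⟩
    have hdeg2 : 2 ≤ G.degree l := by omega
    obtain ⟨u, hu_adj, hu_not⟩ : ∃ u, G.Adj l u ∧ u ∉ (pth hT l c).support := by
      by_contra hcon
      push_neg at hcon
      have hsub : G.neighborFinset l ⊆ {(pth hT l c).getVert 1} := by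
        intro z hz
        have hz' := (SimpleGraph.mem_neighborFinset _ _ _).mp hz
        have := adj_mem_support_eq hT (pth_isPath hT l c) hz' (hcon z hz')
        exact Finset.mem_singleton.mpr this
      have := Finset.card_le_card hsub
      rw [Finset.card_singleton] at this
      have : G.degree l ≤ 1 := this
      omega
    have hWp : (Walk.cons hu_adj.symm (pth hT l c)).IsPath := by
      rw [Walk.cons_isPath_iff]
      exact ⟨pth_isPath hT l c, hu_not⟩
    have hWe : Walk.cons hu_adj.symm (pth hT l c) = pth hT u c := pth_eq hT _ hWp
    have huS : u ∈ Finset.univ.filter (fun w => v ∈ (pth hT w c).support) := by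
      refine Finset.mem_filter.mpr ⟨Finset.mem_univ _, ?_⟩
      rw [← hWe, Walk.support_cons]
      exact List.mem_cons_of_mem _ hvsup
    have hd1 : G.dist c l = (pth hT l c).length := by
      rw [SimpleGraph.dist_comm, dist_pth hT]
    have hd2 : G.dist c u = (pth hT l c).length + 1 := by
      rw [SimpleGraph.dist_comm, dist_pth hT u c, ← hWe, Walk.length_cons]
    have := hlmax u huS
    omega

lemma centroid_bound (L : Finset V) (c u : V)
    (hmin : ∀ w, (∑ l ∈ L, G.dist c l) ≤ ∑ l ∈ L, G.dist w l) (hu : G.Adj c u) :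
    2 * (L.filter fun l => G.dist u l < G.dist c l).card ≤ L.card := by
  have hconn := hT.isConnected
  have hsum1 : (∑ l ∈ L.filter (fun l => G.dist u l < G.dist c l), G.dist u l)
      + (L.filter (fun l => G.dist u l < G.dist c l)).card
      ≤ ∑ l ∈ L.filter (fun l => G.dist u l < G.dist c l), G.dist c l := by
    calc (∑ l ∈ L.filter (fun l => G.dist u l < G.dist c l), G.dist u l)
        + (L.filter (fun l => G.dist u l < G.dist c l)).card
        = ∑ l ∈ L.filter (fun l => G.dist u l < G.dist c l), (G.dist u l + 1) := by
          rw [Finset.sum_add_distrib, Finset.sum_const, smul_eq_mul, mul_one]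
    _ ≤ _ := Finset.sum_le_sum (fun l hl => (Finset.mem_filter.mp hl).2)
  have hsum2 : ∑ l ∈ L.filter (fun l => ¬ (G.dist u l < G.dist c l)), G.dist u l
      ≤ (∑ l ∈ L.filter (fun l => ¬ (G.dist u l < G.dist c l)), G.dist c l)
      + (L.filter (fun l => ¬ (G.dist u l < G.dist c l))).card := by
    calc ∑ l ∈ L.filter (fun l => ¬ (G.dist u l < G.dist c l)), G.dist u l
        ≤ ∑ l ∈ L.filter (fun l => ¬ (G.dist u l < G.dist c l)), (G.dist c l + 1) := by
          apply Finset.sum_le_sum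
          intro l hl
          have htri := hconn.dist_triangle (u := u) (v := c) (w := l)
          have h1 : G.dist u c = 1 := SimpleGraph.dist_eq_one_iff_adj.mpr hu.symm
          omega
    _ = _ := by rw [Finset.sum_add_distrib, Finset.sum_const, smul_eq_mul, mul_one]
  have hsplit_u := Finset.sum_filter_add_sum_filter_not L
    (fun l => G.dist u l < G.dist c l) (fun l => G.dist u l)
  have hsplit_c := Finset.sum_filter_add_sum_filter_not L
    (fun l => G.dist u l < G.dist c l) (fun l => G.dist c l)
  have hcards := Finset.card_filter_add_card_filter_not
    (s := L) (p := fun l => G.dist u l < G.dist c l)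
  have hm := hmin u
  omega

end Tree


end TreeCoverAux

open TreeCoverAux

/-- The cost of a covering path in a tagged component tree: a *short* path (containing
at most one bad node) costs `1`; a *long* path (containing at least two bad nodes)
costs `1` if its two endpoints share a tag (*indel-saving*) and `2` otherwise
(*indel-neutral*). Tags are drawn from a two-element set, modelled by `Bool`. -/
noncomputable def pathCost {V : Type} {G : SimpleGraph V} (bad : V → Prop)
    (tag : V → Finset Bool) {x y : V} (p : G.Walk x y) : ℕ :=
  if 2 ≤ {v | v ∈ p.support ∧ bad v}.ncard then
    (if ((tag x) ∩ (tag y)).Nonempty then 1 else 2)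
  else 1

/-- The set of possible total costs of covers of a tagged component tree: a cover is a
finite family of paths such that every bad node lies on at least one of them. -/
noncomputable def CoverCosts {V : Type} (G : SimpleGraph V) (bad : V → Prop)
    (tag : V → Finset Bool) : Set ℕ :=
  {c | ∃ (k : ℕ) (x y : Fin k → V) (p : ∀ i, G.Walk (x i) (y i)),
    (∀ i, (p i).IsPath) ∧ (∀ v, bad v → ∃ i, v ∈ (p i).support) ∧
    c = ∑ i, pathCost bad tag (p i)}

/-- Let `T` be a tagged component tree (a finite tree whose nodes are
bad or good, each carrying a tag set; all leaves are bad) with `ℓ ≥ 2` leaves, all of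
which share at least one tag `t`. Then the minimum total cost of a cover of the bad
nodes of `T` is `⌈ℓ/2⌉ = (ℓ+1)/2`. -/
theorem optimal_cover_cost_shared_tag {V : Type} [Fintype V] [DecidableEq V]
    (G : SimpleGraph V) [DecidableRel G.Adj] (hT : G.IsTree)
    (bad : V → Prop) (tag : V → Finset Bool)
    (hleafbad : ∀ v, G.degree v = 1 → bad v)
    (ℓ : ℕ) (hℓ : (Finset.univ.filter fun v => G.degree v = 1).card = ℓ) (h2 : 2 ≤ ℓ)
    (t : Bool) (ht : ∀ v, G.degree v = 1 → t ∈ tag v) :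
    IsLeast (CoverCosts G bad tag) ((ℓ + 1) / 2) := by
  constructor
  · -- membership : a cover of cost (ℓ+1)/2 exists
    simp only [CoverCosts, Set.mem_setOf_eq]
    have hLcard : (Finset.univ.filter fun v => G.degree v = 1).card = ℓ := hℓ
    have hLne : (Finset.univ.filter fun v => G.degree v = 1).Nonempty :=
      Finset.card_pos.mp (by omega)
    obtain ⟨l0, hl0⟩ := hLne
    have hleaf : ∃ l, G.degree l = 1 := ⟨l0, (Finset.mem_filter.mp hl0).2⟩
    obtain ⟨c, -, hcmin⟩ := Finset.exists_min_image Finset.univ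
      (fun w => ∑ l ∈ Finset.univ.filter (fun v => G.degree v = 1), G.dist w l)
      ⟨l0, Finset.mem_univ _⟩
    have hfib : ∀ u, ((Finset.univ.filter fun v => G.degree v = 1).filter
        (fun l => (if l = c then c else nxt hT c l) = u)).card ≤ ℓ / 2 := by
      intro u
      by_cases huc : u = c
      · rw [huc]
        have hsub : ((Finset.univ.filter fun v => G.degree v = 1).filter
            (fun l => (if l = c then c else nxt hT c l) = c)) ⊆ {c} := by
          intro z hz
          have hzf := (Finset.mem_filter.mp hz).2
          by_cases hzc : z = c
          · exact Finset.mem_singleton.mpr hzc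
          · rw [if_neg hzc] at hzf
            exact absurd hzf (adj_nxt hT hzc).ne'
        have h1 := Finset.card_le_card hsub
        rw [Finset.card_singleton] at h1
        omega
      · rcases Finset.eq_empty_or_nonempty ((Finset.univ.filter fun v => G.degree v = 1).filter
          (fun l => (if l = c then c else nxt hT c l) = u)) with he | ⟨x0, hx0⟩
        · rw [he]; simp
        · have hx0f := (Finset.mem_filter.mp hx0).2
          have hx0c : x0 ≠ c := by
            intro h
            rw [if_pos h] at hx0f
            exact huc hx0f.symm
          rw [if_neg hx0c] at hx0f
          have hadj : G.Adj c u := hx0f ▸ adj_nxt hT hx0c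
          have hsub : ((Finset.univ.filter fun v => G.degree v = 1).filter
              (fun l => (if l = c then c else nxt hT c l) = u)) ⊆
              (Finset.univ.filter fun v => G.degree v = 1).filter
              (fun l => G.dist u l < G.dist c l) := by
            intro z hz
            obtain ⟨hzL, hzf⟩ := Finset.mem_filter.mp hz
            have hzc : z ≠ c := by
              intro h
              rw [if_pos h] at hzf
              exact huc hzf.symm
            rw [if_neg hzc] at hzf
            have hd := dist_nxt hT hzc
            rw [hzf] at hd
            exact Finset.mem_filter.mpr ⟨hzL, by omega⟩
          have hcb := centroid_bound hT (Finset.univ.filter fun v => G.degree v = 1) c u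
            (fun w => hcmin w (Finset.mem_univ _)) hadj
          have hle := Finset.card_le_card hsub
          omega
    obtain ⟨ps, hpslen, hpsmem, hpscov⟩ := TreeCoverAux.pairing
      (fun l => if l = c then c else nxt hT c l) ℓ
      (Finset.univ.filter fun v => G.degree v = 1) hLcard h2 hfib
    refine ⟨ps.length, fun i => (ps.get i).1, fun i => (ps.get i).2,
      fun i => pth hT (ps.get i).1 (ps.get i).2, fun i => pth_isPath hT _ _, ?_, ?_⟩
    · intro v _
      obtain ⟨l, hldeg, hlmem⟩ := exists_leaf_path_through hT c hleaf v
      have hlL : l ∈ Finset.univ.filter fun v => G.degree v = 1 :=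
        Finset.mem_filter.mpr ⟨Finset.mem_univ _, hldeg⟩
      obtain ⟨q, hqps, hql⟩ := hpscov l hlL
      obtain ⟨i, hi⟩ := List.mem_iff_get.mp hqps
      refine ⟨i, ?_⟩
      show v ∈ (pth hT (ps.get i).1 (ps.get i).2).support
      have hq12 := (hpsmem q hqps).2.2
      have hmem : v ∈ (pth hT q.1 q.2).support := by
        apply mem_pair_support hT hq12
        rcases hql with h | h
        · rw [h] at hlmem
          exact Or.inl hlmem
        · rw [h] at hlmem
          exact Or.inr (mem_pth_symm hT hlmem)
      rw [hi]
      exact hmem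
    · have hcost : ∀ i : Fin ps.length,
          pathCost bad tag (pth hT (ps.get i).1 (ps.get i).2) = 1 := by
        intro i
        have hgm : ps.get i ∈ ps := by
          obtain ⟨iv, ih⟩ := i
          exact List.get_mem ps ⟨iv, ih⟩
        have hqm := hpsmem (ps.get i) hgm
        have ht1 : t ∈ tag (ps.get i).1 := ht _ (Finset.mem_filter.mp hqm.1).2
        have ht2 : t ∈ tag (ps.get i).2 := ht _ (Finset.mem_filter.mp hqm.2.1).2
        have hne : ((tag (ps.get i).1) ∩ (tag (ps.get i).2)).Nonempty :=
          ⟨t, Finset.mem_inter.mpr ⟨ht1, ht2⟩⟩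
        unfold pathCost
        rw [if_pos hne]
        split <;> rfl
      have hsum : ∑ i : Fin ps.length,
          pathCost bad tag (pth hT (ps.get i).1 (ps.get i).2) = ps.length := by
        rw [Finset.sum_congr rfl (fun i _ => hcost i)]
        simp
      rw [hsum, hpslen]
  · rintro cost hcost
    simp only [CoverCosts, Set.mem_setOf_eq] at hcost
    obtain ⟨k, x, y, p, hpath, hcov, rfl⟩ := hcost
    have hLne : (Finset.univ.filter fun v => G.degree v = 1).Nonempty :=
      Finset.card_pos.mp (by omega)
    obtain ⟨l0, hl0⟩ := hLne
    obtain ⟨i0, -⟩ := hcov l0 (hleafbad _ (Finset.mem_filter.mp hl0).2)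
    have hsel : ∀ l ∈ (Finset.univ.filter fun v => G.degree v = 1),
        ∃ i : Fin k, l = x i ∨ (l = y i ∧ l ≠ x i) := by
      intro l hl
      obtain ⟨i, hi⟩ := hcov l (hleafbad _ (Finset.mem_filter.mp hl).2)
      rcases TreeCoverAux.leaf_endpoint hT (hpath i) (Finset.mem_filter.mp hl).2 hi with h | h
      · exact ⟨i, Or.inl h⟩
      · by_cases hx : l = x i
        · exact ⟨i, Or.inl hx⟩
        · exact ⟨i, Or.inr ⟨h, hx⟩⟩
    choose g hg using hsel
    have hinj : Set.InjOn
        (fun l => if h : l ∈ (Finset.univ.filter fun v => G.degree v = 1) then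
          ((g l h, decide (l = x (g l h))) : Fin k × Bool) else (i0, true))
        (Finset.univ.filter fun v => G.degree v = 1) := by
      intro l1 h1 l2 h2 heq
      simp only [Finset.mem_coe] at h1 h2
      simp only [dif_pos h1, dif_pos h2, Prod.mk.injEq] at heq
      obtain ⟨hii, hbb⟩ := heq
      rcases hg l1 h1 with hA | ⟨hA, hA'⟩
      · have hb1 : decide (l1 = x (g l1 h1)) = true := decide_eq_true hA
        rw [hb1] at hbb
        have hB : l2 = x (g l2 h2) := of_decide_eq_true hbb.symm
        rw [hA, hii, ← hB]
      · have hb1 : decide (l1 = x (g l1 h1)) = false := decide_eq_false hA'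
        rw [hb1] at hbb
        have hB' : ¬ (l2 = x (g l2 h2)) := of_decide_eq_false hbb.symm
        rcases hg l2 h2 with hB | ⟨hB, -⟩
        · exact absurd hB hB'
        · rw [hA, hii, ← hB]
    have hc2 : ℓ ≤ 2 * k := by
      have hcc := Finset.card_le_card_of_injOn
        (t := (Finset.univ : Finset (Fin k × Bool))) _
        (fun a _ => Finset.mem_univ _) hinj
      rw [hℓ] at hcc
      have hcu : (Finset.univ : Finset (Fin k × Bool)).card = 2 * k := by
        rw [Finset.card_univ, Fintype.card_prod, Fintype.card_fin, Fintype.card_bool]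
        ring
      omega
    have hone : ∀ i : Fin k, 1 ≤ pathCost bad tag (p i) := by
      intro i
      unfold pathCost
      split
      · split <;> omega
      · omega
    have hksum : k ≤ ∑ i, pathCost bad tag (p i) :=
      calc k = ∑ _i : Fin k, 1 := by simp
      _ ≤ _ := Finset.sum_le_sum (fun i _ => hone i)
    omega
end

section
/- Let T be a tagged component tree with ℓ ≥ 2 leaves, all of whose leaves have empty tag sets (clean). Then the minimum cost of a cover is ℓ + 1 if ℓ is odd and every leaf-branch of T contains at least two bad nodes (the fortress case), and ℓ otherwise. -/
/-- The leaf-branch of the leaf `u` is *long* if it contains at least two bad nodes: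
besides the (bad) leaf `u` itself, there is another bad node `v` reachable from `u`
along a path all of whose vertices other than `u` have degree 2. -/
def LongBranch {V : Type} [Fintype V] (G : SimpleGraph V) [DecidableRel G.Adj]
    (bad : V → Prop) (u : V) : Prop :=
  ∃ (v : V) (p : G.Walk u v), p.IsPath ∧ v ≠ u ∧ bad v ∧
    ∀ w ∈ p.support, w = u ∨ G.degree w = 2

set_option linter.unusedSectionVars false
set_option linter.unusedVariables false
set_option maxHeartbeats 1000000

open SimpleGraph

variable {V : Type} [Fintype V] [DecidableEq V] {G : SimpleGraph V} [DecidableRel G.Adj]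

namespace TCover

/-- The unique path between two vertices in a tree. -/
noncomputable def tp (hT : G.IsTree) (u v : V) : G.Walk u v :=
  (hT.existsUnique_path u v).exists.choose

lemma tp_isPath (hT : G.IsTree) (u v : V) : (tp hT u v).IsPath :=
  (hT.existsUnique_path u v).exists.choose_spec

lemma tp_eq (hT : G.IsTree) {u v : V} (p : G.Walk u v) (hp : p.IsPath) :
    p = tp hT u v := by
  obtain ⟨q, hq, hu⟩ := hT.existsUnique_path u v
  rw [hu p hp, hu _ (tp_isPath hT u v)]

lemma tp_self (hT : G.IsTree) (u : V) : tp hT u u = SimpleGraph.Walk.nil :=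
  (tp_eq hT _ (SimpleGraph.Walk.IsPath.nil)).symm

lemma length_tp (hT : G.IsTree) (u v : V) : (tp hT u v).length = G.dist u v := by
  obtain ⟨p, hp, hl⟩ := hT.isConnected.exists_path_of_dist u v
  rw [← tp_eq hT p hp] at *; exact hl

lemma tp_reverse (hT : G.IsTree) (u v : V) : (tp hT u v).reverse = tp hT v u :=
  tp_eq hT _ ((tp_isPath hT u v).reverse)

lemma mem_tp_symm (hT : G.IsTree) {u v z : V} (h : z ∈ (tp hT u v).support) :
    z ∈ (tp hT v u).support := by
  rw [← tp_reverse hT, SimpleGraph.Walk.support_reverse, List.mem_reverse]; exact h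

lemma tp_takeUntil (hT : G.IsTree) {u v z : V} (h : z ∈ (tp hT u v).support) :
    (tp hT u v).takeUntil z h = tp hT u z :=
  tp_eq hT _ ((tp_isPath hT u v).takeUntil h)

lemma tp_dropUntil (hT : G.IsTree) {u v z : V} (h : z ∈ (tp hT u v).support) :
    (tp hT u v).dropUntil z h = tp hT z v :=
  tp_eq hT _ ((tp_isPath hT u v).dropUntil h)

/-- distance additivity along the unique path -/
lemma dist_add_of_mem (hT : G.IsTree) {u v z : V} (h : z ∈ (tp hT u v).support) :
    G.dist u z + G.dist z v = G.dist u v := by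
  have hs := (tp hT u v).take_spec h
  have := congrArg SimpleGraph.Walk.length hs
  rw [SimpleGraph.Walk.length_append, tp_takeUntil hT h, tp_dropUntil hT h,
    length_tp, length_tp, length_tp] at this
  exact this

lemma supp_tp_left (hT : G.IsTree) {u v z : V} (h : z ∈ (tp hT u v).support) :
    (tp hT u z).support ⊆ (tp hT u v).support := by
  rw [← tp_takeUntil hT h]; exact SimpleGraph.Walk.support_takeUntil_subset _ h

lemma supp_tp_right (hT : G.IsTree) {u v z : V} (h : z ∈ (tp hT u v).support) :
    (tp hT z v).support ⊆ (tp hT u v).support := by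
  rw [← tp_dropUntil hT h]; exact SimpleGraph.Walk.support_dropUntil_subset _ h

/-- an append of two paths sharing only the midpoint is a path -/
lemma isPath_append {u v w : V} {p : G.Walk u v} {q : G.Walk v w}
    (hp : p.IsPath) (hq : q.IsPath)
    (hd : ∀ z, z ∈ p.support → z ∈ q.support → z = v) : (p.append q).IsPath := by
  rw [SimpleGraph.Walk.isPath_def, SimpleGraph.Walk.support_append]
  apply List.Nodup.append ((SimpleGraph.Walk.isPath_def _).1 hp)
  · have := (SimpleGraph.Walk.isPath_def _).1 hq
    rw [q.support_eq_cons] at this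
    exact this.of_cons
  · intro a hap haq
    have hv : v ∉ q.support.tail := by
      have := (SimpleGraph.Walk.isPath_def _).1 hq
      rw [q.support_eq_cons] at this
      exact (List.nodup_cons.1 this).1
    have : a ∈ q.support := by rw [q.support_eq_cons]; exact List.mem_cons_of_mem _ haq
    exact hv (hd a hap this ▸ haq)

end TCover

namespace TCover

lemma dist_eq_zero (hT : G.IsTree) {u v : V} (h : G.dist u v = 0) : u = v :=
  (hT.isConnected.dist_eq_zero_iff).1 h

/-- converse: distance additivity implies membership in the unique path -/
lemma mem_of_dist_add (hT : G.IsTree) {u v z : V}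
    (h : G.dist u z + G.dist z v = G.dist u v) : z ∈ (tp hT u v).support := by
  have hdisj : ∀ t, t ∈ (tp hT u z).support → t ∈ (tp hT z v).support → t = z := by
    intro t h1 h2
    have e1 := dist_add_of_mem hT h1
    have e2 := dist_add_of_mem hT h2
    have e3 : G.dist u v ≤ G.dist u t + G.dist t v := hT.isConnected.dist_triangle
    have e4 : G.dist t z = G.dist z t := G.dist_comm ..
    have : G.dist t z = 0 := by omega
    exact dist_eq_zero hT this
  have hP : ((tp hT u z).append (tp hT z v)).IsPath :=
    isPath_append (tp_isPath hT u z) (tp_isPath hT z v) hdisj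
  have := tp_eq hT _ hP
  rw [← this]
  rw [SimpleGraph.Walk.mem_support_append_iff]
  exact Or.inl ((tp hT u z).end_mem_support)

/-- vertices on a path in a tree are determined by their distance from the start -/
lemma getVert_dist (hT : G.IsTree) {x y z : V} (p : G.Walk x y) (hp : p.IsPath)
    (hz : z ∈ p.support) : p.getVert (G.dist x z) = z := by
  induction p with
  | nil =>
    rw [SimpleGraph.Walk.support_nil, List.mem_singleton] at hz
    subst hz; simp [SimpleGraph.dist_self]
  | @cons a b c hadj q ih =>
    rcases List.mem_cons.1 ((SimpleGraph.Walk.support_cons hadj q) ▸ hz) with h | h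
    · subst h; simp [SimpleGraph.dist_self]
    · have hq : q.IsPath := hp.of_cons
      have hxa : a ∉ q.support := by
        have := hp
        rw [SimpleGraph.Walk.cons_isPath_iff] at this
        exact this.2
      have htake : (q.takeUntil z h).support ⊆ q.support :=
        SimpleGraph.Walk.support_takeUntil_subset _ h
      have hcons : (SimpleGraph.Walk.cons hadj (q.takeUntil z h)).IsPath := by
        apply (hq.takeUntil h).cons
        intro hmem; exact hxa (htake hmem)
      have hdaz : G.dist a z = G.dist b z + 1 := by
        have h1 : (SimpleGraph.Walk.cons hadj (q.takeUntil z h)).length = G.dist a z := by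
          rw [tp_eq hT _ hcons]; exact length_tp hT a z
        have h2 : (q.takeUntil z h).length = G.dist b z := by
          rw [tp_eq hT _ (hq.takeUntil h)]; exact length_tp hT b z
        rw [SimpleGraph.Walk.length_cons, h2] at h1
        omega
      rw [hdaz, SimpleGraph.Walk.getVert_cons _ _ (by omega)]
      have : G.dist b z + 1 - 1 = G.dist b z := by omega
      rw [this]
      exact ih hq h

end TCover

namespace TCover

lemma dist_pos (hT : G.IsTree) {u v : V} (h : u ≠ v) : 0 < G.dist u v :=
  hT.isConnected.pos_dist_of_ne h

/-- the penultimate vertex of the unique path from u to v -/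
noncomputable def pen (hT : G.IsTree) (u v : V) : V :=
  (tp hT u v).getVert (G.dist u v - 1)

lemma pen_mem (hT : G.IsTree) (u v : V) : pen hT u v ∈ (tp hT u v).support := by
  rw [SimpleGraph.Walk.mem_support_iff_exists_getVert]
  exact ⟨G.dist u v - 1, rfl, by rw [length_tp]; omega⟩

lemma pen_adj (hT : G.IsTree) {u v : V} (h : u ≠ v) : G.Adj (pen hT u v) v := by
  have hd := dist_pos hT h
  have := (tp hT u v).adj_getVert_succ (i := G.dist u v - 1)
    (by rw [length_tp]; omega)
  have he : G.dist u v - 1 + 1 = G.dist u v := by omega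
  rw [he] at this
  have : G.Adj ((tp hT u v).getVert (G.dist u v - 1)) ((tp hT u v).getVert (G.dist u v)) := this
  rwa [show (tp hT u v).getVert (G.dist u v) = v by
    rw [← length_tp hT u v]; exact (tp hT u v).getVert_length] at this

lemma pen_dist (hT : G.IsTree) {u v : V} (h : u ≠ v) :
    G.dist u (pen hT u v) = G.dist u v - 1 ∧ G.dist (pen hT u v) v = 1 := by
  have hadj := pen_adj hT h
  have hne : pen hT u v ≠ v := hadj.ne
  have h1 : G.dist (pen hT u v) v = 1 := (G.dist_eq_one_iff_adj).2 hadj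
  have h2 := dist_add_of_mem hT (pen_mem hT u v)
  constructor
  · omega
  · exact h1

/-- any vertex on the path adjacent to the endpoint is the penultimate vertex -/
lemma eq_pen (hT : G.IsTree) {u v c : V} (hc : c ∈ (tp hT u v).support)
    (hadj : G.Adj c v) : c = pen hT u v := by
  have hne : u ≠ v := by
    rintro rfl
    rw [tp_self hT u, SimpleGraph.Walk.support_nil, List.mem_singleton] at hc
    exact hadj.ne (hc ▸ rfl)
  have h2 := dist_add_of_mem hT hc
  have h3 : G.dist c v = 1 := (G.dist_eq_one_iff_adj).2 hadj
  have h4 : G.dist u c = G.dist u v - 1 := by omega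
  have := getVert_dist hT _ (tp_isPath hT u v) hc
  rw [h4] at this
  exact this.symm

/-- trichotomy: for adjacent a,b, every vertex is strictly on one side -/
lemma side_tri (hT : G.IsTree) {a b : V} (hab : G.Adj a b) (x : V) :
    G.dist x b = G.dist x a + 1 ∨ G.dist x a = G.dist x b + 1 := by
  by_cases hb : b ∈ (tp hT x a).support
  · right
    have := dist_add_of_mem hT hb
    have h1 : G.dist b a = 1 := (G.dist_eq_one_iff_adj).2 hab.symm
    omega
  · left
    have hP : ((tp hT x a).concat hab).IsPath := by
      rw [SimpleGraph.Walk.concat_eq_append]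
      apply isPath_append (tp_isPath hT x a)
      · simp [SimpleGraph.Walk.isPath_def, hab.ne]
      · intro z hz hz2
        rw [SimpleGraph.Walk.support_cons, SimpleGraph.Walk.support_nil] at hz2
        rcases List.mem_cons.1 hz2 with rfl | hz2
        · rfl
        · rw [List.mem_singleton] at hz2; subst hz2; exact absurd hz hb
    have := congrArg SimpleGraph.Walk.length (tp_eq hT _ hP)
    rw [SimpleGraph.Walk.length_concat, length_tp, length_tp] at this
    omega

/-- x is on the a-side of the edge (a,b) -/
def sd (G : SimpleGraph V) (a b x : V) : Prop := G.dist x b = G.dist x a + 1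

lemma sd_or (hT : G.IsTree) {a b : V} (hab : G.Adj a b) (x : V) :
    sd G a b x ∨ sd G b a x := by
  rcases side_tri hT hab x with h | h
  · exact Or.inl h
  · exact Or.inr h

lemma sd_not_both {a b x : V} (h1 : sd G a b x) (h2 : sd G b a x) : False := by
  unfold sd at *; omega

lemma sd_self (hab : G.Adj a b) : sd G a b a := by
  unfold sd
  rw [SimpleGraph.dist_self, (G.dist_eq_one_iff_adj).2 hab]

/-- discrete intermediate value: a walk from a P-vertex to a non-P vertex crosses -/
lemma walk_ivt {x y : V} (p : G.Walk x y) : ∀ (P : V → Prop), P x → ¬ P y →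
    ∃ z z', G.Adj z z' ∧ z ∈ p.support ∧ z' ∈ p.support ∧ P z ∧ ¬ P z' := by
  induction p with
  | nil => intro P hx hy; exact absurd hx hy
  | @cons a b c hadj q ih =>
    intro P hx hy
    by_cases hb : P b
    · obtain ⟨z, z', h1, h2, h3, h4, h5⟩ := ih P hb hy
      exact ⟨z, z', h1, by simp [SimpleGraph.Walk.support_cons, h2],
        by simp [SimpleGraph.Walk.support_cons, h3], h4, h5⟩
    · exact ⟨a, b, hadj, by simp [SimpleGraph.Walk.support_cons],
        by simp [SimpleGraph.Walk.support_cons, q.start_mem_support], hx, hb⟩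

end TCover

namespace TCover

/-- every vertex on the unique path to `a` from an `a`-side vertex is on the `a`-side -/
lemma sd_of_mem_tp (hT : G.IsTree) {a b z t : V} (hab : G.Adj a b) (hz : sd G a b z)
    (ht : t ∈ (tp hT z a).support) : sd G a b t := by
  have h1 := dist_add_of_mem hT ht
  rcases sd_or hT hab t with h | h
  · exact h
  · exfalso
    unfold sd at *
    have htri : G.dist z b ≤ G.dist z t + G.dist t b := hT.isConnected.dist_triangle
    omega

/-- crossing lemma: a path from the a-side to the b-side passes through a and b -/
lemma cross (hT : G.IsTree) {a b x y : V} (hab : G.Adj a b) (hx : sd G a b x)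
    (hy : sd G b a y) :
    a ∈ (tp hT x y).support ∧ b ∈ (tp hT x y).support ∧
      G.dist x y = G.dist x a + 1 + G.dist b y := by
  have hy' : ¬ sd G a b y := fun h => sd_not_both h hy
  obtain ⟨z, z', hzz, hzm, hzm', hz, hz'⟩ := walk_ivt (tp hT x y) (sd G a b) hx hy'
  have hz2 : sd G b a z' := (sd_or hT hab z').resolve_left hz'
  -- the unique path from z to a stays on the a-side, so b is not on it
  have hba : b ∉ (tp hT z a).support := fun h =>
    sd_not_both (sd_of_mem_tp hT hab hz h) (sd_self hab.symm)
  have hzb : z ∉ (tp hT z' b).support := fun h =>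
    sd_not_both hz (sd_of_mem_tp hT hab.symm hz2 h)
  -- two paths from z to b
  have hP1 : ((tp hT z a).concat hab).IsPath := by
    rw [SimpleGraph.Walk.concat_eq_append]
    apply isPath_append (tp_isPath hT z a)
    · simp [SimpleGraph.Walk.isPath_def, hab.ne]
    · intro t h1 h2
      rw [SimpleGraph.Walk.support_cons, SimpleGraph.Walk.support_nil] at h2
      rcases List.mem_cons.1 h2 with rfl | h2
      · rfl
      · rw [List.mem_singleton] at h2; subst h2; exact absurd h1 hba
  have hP2 : (SimpleGraph.Walk.cons hzz (tp hT z' b)).IsPath :=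
    (tp_isPath hT z' b).cons hzb
  have he : (tp hT z a).concat hab = SimpleGraph.Walk.cons hzz (tp hT z' b) := by
    rw [tp_eq hT _ hP1, tp_eq hT _ hP2]
  -- a is in the support of both; on the RHS all vertices except z are on the b-side
  have haz : a = z := by
    have hamem : a ∈ ((tp hT z a).concat hab).support := by
      rw [SimpleGraph.Walk.concat_eq_append, SimpleGraph.Walk.mem_support_append_iff]
      exact Or.inl (tp hT z a).end_mem_support
    rw [he, SimpleGraph.Walk.support_cons] at hamem
    rcases List.mem_cons.1 hamem with h | h
    · exact h
    · exfalso
      exact sd_not_both (sd_self hab) (sd_of_mem_tp hT hab.symm hz2 h)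
  have hbz' : b = z' := by
    have := congrArg SimpleGraph.Walk.length he
    rw [SimpleGraph.Walk.length_concat, SimpleGraph.Walk.length_cons,
      length_tp, length_tp] at this
    subst haz
    rw [SimpleGraph.dist_self] at this
    have : G.dist z' b = 0 := by omega
    exact (dist_eq_zero hT this).symm
  subst haz; subst hbz'
  refine ⟨hzm, hzm', ?_⟩
  have h1 := dist_add_of_mem hT hzm
  have h2 := dist_add_of_mem hT hzm'
  unfold sd at hx
  omega

/-- every side of an edge contains a leaf -/
lemma side_leaf (hT : G.IsTree) {a b : V} (hab : G.Adj a b) :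
    ∃ x, G.degree x = 1 ∧ sd G a b x := by
  classical
  have hSne : (Finset.univ.filter (fun x => sd G a b x)).Nonempty := by
    refine ⟨a, ?_⟩
    simp only [Finset.mem_filter, Finset.mem_univ, true_and]
    exact sd_self hab
  obtain ⟨x, hxS, hxmax⟩ := Finset.exists_max_image _ (fun x => G.dist x b) hSne
  simp only [Finset.mem_filter, Finset.mem_univ, true_and] at hxS
  refine ⟨x, ?_, hxS⟩
  have hxb : x ≠ b := fun h => sd_not_both hxS (by rw [h]; exact sd_self hab.symm)
  -- the neighbor of x toward b
  have hγadj : G.Adj (pen hT b x) x := pen_adj hT (Ne.symm hxb)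
  have hγmem := pen_mem hT b x
  have hγdist := (pen_dist hT (Ne.symm hxb)).1
  have hdeg1 : 0 < G.degree x := by
    rw [G.degree_pos_iff_exists_adj]
    exact ⟨_, hγadj.symm⟩
  by_contra hdeg
  have hdeg2 : 2 ≤ G.degree x := by omega
  -- get a second neighbor c ≠ pen
  obtain ⟨c, hc⟩ : ∃ c, G.Adj x c ∧ c ≠ pen hT b x := by
    have h1 : 1 < (G.neighborFinset x).card := by rwa [G.card_neighborFinset_eq_degree]
    obtain ⟨c1, hc1, c2, hc2, hne⟩ := Finset.one_lt_card.1 h1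
    rw [SimpleGraph.mem_neighborFinset] at hc1 hc2
    by_cases h : c1 = pen hT b x
    · exact ⟨c2, hc2, fun hh => hne (h ▸ hh ▸ rfl)⟩
    · exact ⟨c1, hc1, h⟩
  obtain ⟨hxc, hcγ⟩ := hc
  -- c is farther from b
  have hcb : G.dist c b = G.dist x b + 1 := by
    rcases side_tri hT hxc b with h | h
    · have e1 : G.dist c b = G.dist b c := SimpleGraph.dist_comm
      have e2 : G.dist x b = G.dist b x := SimpleGraph.dist_comm
      omega
    · exfalso
      have hmem : c ∈ (tp hT b x).support := by
        apply mem_of_dist_add hT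
        have h2 : G.dist c x = 1 := (G.dist_eq_one_iff_adj).2 hxc.symm
        omega
      exact hcγ (eq_pen hT hmem hxc.symm)
  have hca : sd G a b c := by
    unfold sd at *
    have htri : G.dist c b ≤ G.dist c a + 1 := by
      have h1 : G.dist c b ≤ G.dist c a + G.dist a b := hT.isConnected.dist_triangle
      have h2 : G.dist a b = 1 := (G.dist_eq_one_iff_adj).2 hab
      omega
    have htri2 : G.dist c a ≤ G.dist x a + 1 := by
      have h1 : G.dist c a ≤ G.dist c x + G.dist x a := hT.isConnected.dist_triangle
      have h2 : G.dist c x = 1 := (G.dist_eq_one_iff_adj).2 hxc.symm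
      omega
    omega
  have := hxmax c (by simp only [Finset.mem_filter, Finset.mem_univ, true_and]; exact hca)
  omega

/-- every vertex has a neighbor, provided there is another vertex -/
lemma exists_neighbor (hT : G.IsTree) {v w : V} (hw : w ≠ v) : ∃ n, G.Adj v n :=
  ⟨pen hT w v, (pen_adj hT hw).symm⟩

end TCover

namespace TCover

/-- a family of pairs from `L₀` covering `L₀` -/
def covFam (L₀ : Finset V) {m : ℕ} (f : Fin m → V × V) : Prop :=
  (∀ i, (f i).1 ∈ L₀ ∧ (f i).2 ∈ L₀) ∧ ∀ v ∈ L₀, ∃ i, (f i).1 = v ∨ (f i).2 = v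

lemma covFam_exists (L₀ : Finset V) (hL : L₀.Nonempty) (m : ℕ) (hm : L₀.card ≤ 2 * m) :
    ∃ f : Fin m → V × V, covFam L₀ f := by
  set n := L₀.card with hn
  have hn1 : 1 ≤ n := Finset.card_pos.2 hL
  have hm1 : 1 ≤ m := by omega
  let e := L₀.equivFin
  refine ⟨fun i => (((e.symm ⟨min (2 * i.1) (n - 1), by omega⟩ : L₀) : V),
            ((e.symm ⟨min (2 * i.1 + 1) (n - 1), by omega⟩ : L₀) : V)), ?_, ?_⟩
  · intro i; exact ⟨(e.symm _).2, (e.symm _).2⟩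
  · intro v hv
    set j := e ⟨v, hv⟩ with hj
    have hjn : j.1 < n := j.2
    refine ⟨⟨j.1 / 2, by omega⟩, ?_⟩
    by_cases hpar : j.1 % 2 = 0
    · left
      have : min (2 * (j.1 / 2)) (n - 1) = j.1 := by omega
      simp only [this]
      have : (⟨j.1, by omega⟩ : Fin n) = j := rfl
      rw [this, hj, Equiv.symm_apply_apply]
    · right
      have : min (2 * (j.1 / 2) + 1) (n - 1) = j.1 := by omega
      simp only [this]
      have : (⟨j.1, by omega⟩ : Fin n) = j := rfl
      rw [this, hj, Equiv.symm_apply_apply]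

lemma exists_maxFam (L₀ : Finset V) (m : ℕ)
    (hne : ∃ f : Fin m → V × V, covFam L₀ f) :
    ∃ f : Fin m → V × V, covFam L₀ f ∧
      ∀ g : Fin m → V × V, covFam L₀ g →
        (∑ i, G.dist (g i).1 (g i).2) ≤ (∑ i, G.dist (f i).1 (f i).2) := by
  classical
  obtain ⟨f₀, hf₀⟩ := hne
  have hS : (Finset.univ.filter (fun f : Fin m → V × V => covFam L₀ f)).Nonempty :=
    ⟨f₀, by simp [hf₀]⟩
  obtain ⟨f, hfS, hmax⟩ := Finset.exists_max_image _
    (fun f : Fin m → V × V => ∑ i, G.dist (f i).1 (f i).2) hS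
  simp only [Finset.mem_filter, Finset.mem_univ, true_and] at hfS
  exact ⟨f, hfS, fun g hg => hmax g (by simp [hg])⟩

/-- a maximal covering family crosses every edge that has covered leaves on both sides -/
lemma maxFam_cross (hT : G.IsTree) {L₀ : Finset V} {m : ℕ} {f : Fin m → V × V}
    (hf : covFam L₀ f)
    (hmax : ∀ g : Fin m → V × V, covFam L₀ g →
      (∑ i, G.dist (g i).1 (g i).2) ≤ (∑ i, G.dist (f i).1 (f i).2))
    {a b : V} (hab : G.Adj a b)
    {x₀ : V} (hx₀ : x₀ ∈ L₀) (hxs : sd G a b x₀)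
    {y₀ : V} (hy₀ : y₀ ∈ L₀) (hys : sd G b a y₀) :
    ∃ i, (sd G a b (f i).1 ∧ sd G b a (f i).2) ∨ (sd G b a (f i).1 ∧ sd G a b (f i).2) := by
  classical
  by_contra hcon
  push_neg at hcon
  have hsame : ∀ i, (sd G a b (f i).1 ∧ sd G a b (f i).2) ∨
      (sd G b a (f i).1 ∧ sd G b a (f i).2) := by
    intro i
    obtain ⟨h1, h2⟩ := hcon i
    rcases sd_or hT hab (f i).1 with ha1 | hb1
    · rcases sd_or hT hab (f i).2 with ha2 | hb2
      · exact Or.inl ⟨ha1, ha2⟩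
      · exact absurd hb2 (h1 ha1)
    · rcases sd_or hT hab (f i).2 with ha2 | hb2
      · exact absurd ha2 ((hcon i).2 hb1)
      · exact Or.inr ⟨hb1, hb2⟩
  obtain ⟨i, hi⟩ := hf.2 x₀ hx₀
  obtain ⟨j, hj⟩ := hf.2 y₀ hy₀
  have hia : sd G a b (f i).1 ∧ sd G a b (f i).2 := by
    rcases hsame i with h | h
    · exact h
    · exfalso
      rcases hi with h1 | h1 <;> rw [h1] at h
      · exact sd_not_both hxs h.1
      · exact sd_not_both hxs h.2
  have hjb : sd G b a (f j).1 ∧ sd G b a (f j).2 := by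
    rcases hsame j with h | h
    · exfalso
      rcases hj with h1 | h1 <;> rw [h1] at h
      · exact sd_not_both h.1 hys
      · exact sd_not_both h.2 hys
    · exact h
  have hij : i ≠ j := by
    rintro rfl
    exact sd_not_both hia.1 hjb.1
  set p : V × V := ((f i).1, (f j).1) with hp
  set q : V × V := ((f i).2, (f j).2) with hq
  set g := Function.update (Function.update f i p) j q with hg
  have hgi : g i = p := by
    rw [hg, Function.update_of_ne hij, Function.update_self]
  have hgj : g j = q := by rw [hg, Function.update_self]
  have hgk : ∀ k, k ≠ i → k ≠ j → g k = f k := by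
    intro k hki hkj
    rw [hg, Function.update_of_ne hkj, Function.update_of_ne hki]
  have hgcov : covFam L₀ g := by
    constructor
    · intro k
      by_cases h1 : k = j
      · rw [h1, hgj]; exact ⟨(hf.1 i).2, (hf.1 j).2⟩
      · by_cases h2 : k = i
        · rw [h2, hgi]; exact ⟨(hf.1 i).1, (hf.1 j).1⟩
        · rw [hgk k h2 h1]; exact hf.1 k
    · intro v hv
      obtain ⟨k, hk⟩ := hf.2 v hv
      by_cases h1 : k = i
      · rw [h1] at hk
        rcases hk with h | h
        · exact ⟨i, Or.inl (by rw [hgi]; exact h)⟩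
        · exact ⟨j, Or.inl (by rw [hgj]; exact h)⟩
      · by_cases h2 : k = j
        · rw [h2] at hk
          rcases hk with h | h
          · exact ⟨i, Or.inr (by rw [hgi]; exact h)⟩
          · exact ⟨j, Or.inr (by rw [hgj]; exact h)⟩
        · exact ⟨k, by rw [hgk k h1 h2]; exact hk⟩
  -- sum comparison
  have hsum : (∑ k, G.dist (f k).1 (f k).2) + 2 ≤ ∑ k, G.dist (g k).1 (g k).2 := by
    have hsplit : ∀ h : Fin m → ℕ, (∑ k, h k) =
        h i + h j + ∑ k ∈ (Finset.univ.erase i).erase j, h k := by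
      intro h
      have A := Finset.add_sum_erase Finset.univ h (Finset.mem_univ i)
      have B := Finset.add_sum_erase (Finset.univ.erase i) h
        (Finset.mem_erase.2 ⟨Ne.symm hij, Finset.mem_univ j⟩)
      omega
    rw [hsplit (fun k => G.dist (f k).1 (f k).2), hsplit (fun k => G.dist (g k).1 (g k).2)]
    have htail : ∑ k ∈ (Finset.univ.erase i).erase j, G.dist (g k).1 (g k).2 =
        ∑ k ∈ (Finset.univ.erase i).erase j, G.dist (f k).1 (f k).2 := by
      apply Finset.sum_congr rfl
      intro k hk
      rw [Finset.mem_erase, Finset.mem_erase] at hk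
      rw [hgk k hk.2.1 hk.1]
    rw [htail, hgi, hgj, hp, hq]
    simp only
    have c1 := cross hT hab hia.1 hjb.1
    have c2 := cross hT hab hia.2 hjb.2
    have t1 : G.dist (f i).1 (f i).2 ≤ G.dist (f i).1 a + G.dist a (f i).2 :=
      hT.isConnected.dist_triangle
    have t2 : G.dist (f j).1 (f j).2 ≤ G.dist (f j).1 b + G.dist b (f j).2 :=
      hT.isConnected.dist_triangle
    have e1 : G.dist a (f i).2 = G.dist (f i).2 a := SimpleGraph.dist_comm
    have e2 : G.dist (f j).1 b = G.dist b (f j).1 := SimpleGraph.dist_comm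
    omega
  have := hmax g hgcov
  omega

/-- coverage of a vertex by a maximal family -/
lemma maxFam_mem (hT : G.IsTree) {L₀ : Finset V} {m : ℕ} {f : Fin m → V × V}
    (hf : covFam L₀ f)
    (hmax : ∀ g : Fin m → V × V, covFam L₀ g →
      (∑ i, G.dist (g i).1 (g i).2) ≤ (∑ i, G.dist (f i).1 (f i).2))
    {v n : V} (hvn : G.Adj v n)
    (hx : ∃ x ∈ L₀, sd G v n x) (hy : ∃ y ∈ L₀, sd G n v y) :
    ∃ i, v ∈ (tp hT (f i).1 (f i).2).support := by
  obtain ⟨x₀, hx₀, hxs⟩ := hx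
  obtain ⟨y₀, hy₀, hys⟩ := hy
  obtain ⟨i, hi⟩ := maxFam_cross hT hf hmax hvn hx₀ hxs hy₀ hys
  refine ⟨i, ?_⟩
  rcases hi with ⟨h1, h2⟩ | ⟨h1, h2⟩
  · exact (cross hT hvn h1 h2).1
  · exact mem_tp_symm hT (cross hT hvn h2 h1).1

end TCover

namespace TCover

/-- an internal vertex of a path has two distinct neighbors on the path -/
lemma internal_two_nbrs {x y : V} (p : G.Walk x y) (hp : p.IsPath) :
    ∀ z, z ∈ p.support → z ≠ x → z ≠ y →
      ∃ c d, c ≠ d ∧ G.Adj z c ∧ G.Adj z d ∧ c ∈ p.support ∧ d ∈ p.support := by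
  induction p with
  | nil =>
    intro z hz hzx _
    rw [SimpleGraph.Walk.support_nil, List.mem_singleton] at hz
    exact absurd hz hzx
  | @cons a b c hadj q ih =>
    intro z hz hzx hzy
    rw [SimpleGraph.Walk.support_cons] at hz
    rcases List.mem_cons.1 hz with h | h
    · exact absurd h hzx
    · by_cases hzb : z = b
      · subst hzb
        -- z is the second vertex; q is nonempty since z ≠ c
        cases q with
        | nil => exact absurd rfl hzy
        | @cons b' b2 c' hadj2 q2 =>
          refine ⟨a, b2, ?_, hadj.symm, hadj2, ?_, ?_⟩
          · intro hab2
            have : a ∈ (SimpleGraph.Walk.cons hadj2 q2).support := by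
              rw [SimpleGraph.Walk.support_cons, hab2]
              exact List.mem_cons_of_mem _ q2.start_mem_support
            exact ((SimpleGraph.Walk.cons_isPath_iff _ _).1 hp).2 this
          · rw [SimpleGraph.Walk.support_cons]
            exact List.mem_cons_self
          · rw [SimpleGraph.Walk.support_cons]
            apply List.mem_cons_of_mem
            rw [SimpleGraph.Walk.support_cons]
            exact List.mem_cons_of_mem _ q2.start_mem_support
      · obtain ⟨c', d', h1, h2, h3, h4, h5⟩ := ih hp.of_cons z h hzb hzy
        exact ⟨c', d', h1, h2, h3,
          by rw [SimpleGraph.Walk.support_cons]; exact List.mem_cons_of_mem _ h4,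
          by rw [SimpleGraph.Walk.support_cons]; exact List.mem_cons_of_mem _ h5⟩

/-- all neighbors of an internal degree-2 vertex of a path are on the path -/
lemma deg_two_nbrs_mem {x y : V} {p : G.Walk x y} (hp : p.IsPath) {z : V}
    (hz : z ∈ p.support) (hzx : z ≠ x) (hzy : z ≠ y) (hdeg : G.degree z = 2) :
    ∀ w, G.Adj z w → w ∈ p.support := by
  obtain ⟨c, d, h1, h2, h3, h4, h5⟩ := internal_two_nbrs p hp z hz hzx hzy
  intro w hw
  have hcd : ({c, d} : Finset V) ⊆ G.neighborFinset z := by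
    intro t ht
    rcases Finset.mem_insert.1 ht with rfl | ht
    · exact (SimpleGraph.mem_neighborFinset _ _ _).2 h2
    · rw [Finset.mem_singleton] at ht; subst ht
      exact (SimpleGraph.mem_neighborFinset _ _ _).2 h3
  have hcard : ({c, d} : Finset V).card = 2 := by
    rw [Finset.card_insert_of_notMem (by simp [h1]), Finset.card_singleton]
  have heq : ({c, d} : Finset V) = G.neighborFinset z := by
    apply Finset.eq_of_subset_of_card_le hcd
    rw [G.card_neighborFinset_eq_degree, hdeg, hcard]
  have : w ∈ G.neighborFinset z := (SimpleGraph.mem_neighborFinset _ _ _).2 hw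
  rw [← heq] at this
  rcases Finset.mem_insert.1 this with rfl | hm
  · exact h4
  · rw [Finset.mem_singleton] at hm; subst hm; exact h5

/-- a leaf on a path must be one of the endpoints -/
lemma leaf_eq_endpoint {x y : V} {p : G.Walk x y} (hp : p.IsPath) {z : V}
    (hz : z ∈ p.support) (hdeg : G.degree z = 1) : z = x ∨ z = y := by
  by_contra h
  push_neg at h
  obtain ⟨c, d, h1, h2, h3, _, _⟩ := internal_two_nbrs p hp z hz h.1 h.2
  have hcd : ({c, d} : Finset V) ⊆ G.neighborFinset z := by
    intro t ht
    rcases Finset.mem_insert.1 ht with rfl | ht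
    · exact (SimpleGraph.mem_neighborFinset _ _ _).2 h2
    · rw [Finset.mem_singleton] at ht; subst ht
      exact (SimpleGraph.mem_neighborFinset _ _ _).2 h3
  have := Finset.card_le_card hcd
  rw [G.card_neighborFinset_eq_degree, hdeg,
    Finset.card_insert_of_notMem (by simp [h1]), Finset.card_singleton] at this
  omega

/-- the chain propagation lemma: if a path's endpoints do not have degree 2 and the
path meets a vertex connected to `u` by a chain of degree-2 vertices, it contains `u`. -/
lemma chain_mem {x y : V} {Q : G.Walk x y} (hQ : Q.IsPath)
    (hx : G.degree x ≠ 2) (hy : G.degree y ≠ 2) {u : V} :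
    ∀ {v' : V} (r : G.Walk v' u), (∀ w ∈ r.support, w = u ∨ G.degree w = 2) →
      v' ∈ Q.support → u ∈ Q.support := by
  intro v' r
  induction r with
  | nil => intro _ h; exact h
  | @cons a b c hadj q ih =>
    intro hchain ha
    by_cases hau : a = c
    · subst hau; exact ha
    · have hdeg : G.degree a = 2 := by
        rcases hchain a (by rw [SimpleGraph.Walk.support_cons]; exact List.mem_cons_self) with h | h
        · exact absurd h hau
        · exact h
      have hax : a ≠ x := fun h => hx (h ▸ hdeg)
      have hay : a ≠ y := fun h => hy (h ▸ hdeg)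
      have hb : b ∈ Q.support := deg_two_nbrs_mem hQ ha hax hay hdeg b hadj
      apply ih ?_ hb
      intro w hw
      exact hchain w (by rw [SimpleGraph.Walk.support_cons]; exact List.mem_cons_of_mem _ hw)

/-- basic facts about `pathCost` -/
lemma pathCost_pos {bad : V → Prop} {tag : V → Finset Bool} {x y : V} (p : G.Walk x y) :
    1 ≤ pathCost bad tag p := by
  unfold pathCost
  split
  · split <;> omega
  · omega

lemma pathCost_le_two {bad : V → Prop} {tag : V → Finset Bool} {x y : V} (p : G.Walk x y) :
    pathCost bad tag p ≤ 2 := by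
  unfold pathCost
  split
  · split <;> omega
  · omega

lemma pathCost_eq_two {bad : V → Prop} {tag : V → Finset Bool} {x y : V} (p : G.Walk x y)
    {v w : V} (hv : v ∈ p.support) (hw : w ∈ p.support) (hvw : v ≠ w)
    (hbv : bad v) (hbw : bad w) (htag : tag x = ∅ ∨ tag y = ∅) :
    pathCost bad tag p = 2 := by
  unfold pathCost
  have h2 : 2 ≤ {z | z ∈ p.support ∧ bad z}.ncard := by
    have h1 : 1 < {z | z ∈ p.support ∧ bad z}.ncard :=
      (Set.one_lt_ncard_iff (Set.toFinite _)).2 ⟨v, w, ⟨hv, hbv⟩, ⟨hw, hbw⟩, hvw⟩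
    omega
  rw [if_pos h2, if_neg]
  rcases htag with h | h <;> rw [h] <;> simp

lemma pathCost_nil {bad : V → Prop} {tag : V → Finset Bool} {u : V} :
    pathCost bad tag (SimpleGraph.Walk.nil : G.Walk u u) = 1 := by
  unfold pathCost
  rw [if_neg]
  intro h2
  have hsub : {z | z ∈ (SimpleGraph.Walk.nil : G.Walk u u).support ∧ bad z} ⊆ {u} := by
    intro z hz
    obtain ⟨hz1, _⟩ := hz
    rw [SimpleGraph.Walk.support_nil, List.mem_singleton] at hz1
    exact hz1
  have := Set.ncard_le_ncard hsub (Set.finite_singleton u)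
  rw [Set.ncard_singleton] at this
  omega

end TCover

namespace TCover

/-- number of leaves on a path is at most its cost -/
lemma leafcnt_le_cost {bad : V → Prop} {tag : V → Finset Bool}
    (hleafbad : ∀ v, G.degree v = 1 → bad v) (hclean : ∀ v, G.degree v = 1 → tag v = ∅)
    {x y : V} (p : G.Walk x y) (hp : p.IsPath) :
    ((Finset.univ.filter fun v => G.degree v = 1).filter (fun v => v ∈ p.support)).card ≤
      pathCost bad tag p := by
  set A := (Finset.univ.filter fun v => G.degree v = 1).filter (fun v => v ∈ p.support) with hA
  have hsub : A ⊆ {x, y} := by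
    intro z hz
    rw [hA, Finset.mem_filter, Finset.mem_filter] at hz
    rcases leaf_eq_endpoint hp hz.2 hz.1.2 with rfl | rfl
    · exact Finset.mem_insert_self _ _
    · exact Finset.mem_insert_of_mem (Finset.mem_singleton_self _)
  have hle2 : A.card ≤ 2 := le_trans (Finset.card_le_card hsub)
    (le_trans (Finset.card_insert_le _ _) (by rw [Finset.card_singleton]))
  by_cases hc : A.card ≤ 1
  · exact le_trans hc (pathCost_pos p)
  · have hc2 : A.card = 2 := by omega
    have heq : A = {x, y} := by
      apply Finset.eq_of_subset_of_card_le hsub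
      rw [hc2]
      exact le_trans (Finset.card_insert_le _ _) (by rw [Finset.card_singleton])
    have hxA : x ∈ A := by rw [heq]; exact Finset.mem_insert_self _ _
    have hyA : y ∈ A := by rw [heq]; exact Finset.mem_insert_of_mem (Finset.mem_singleton_self _)
    have hxy : x ≠ y := by
      intro h
      rw [heq, h] at hc2
      simp at hc2
    rw [hA, Finset.mem_filter, Finset.mem_filter] at hxA hyA
    rw [pathCost_eq_two p p.start_mem_support p.end_mem_support hxy
      (hleafbad x hxA.1.2) (hleafbad y hyA.1.2) (Or.inl (hclean x hxA.1.2))]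
    exact hle2

/-- general lower bound: every cover costs at least the number of leaves -/
lemma cover_lb {bad : V → Prop} {tag : V → Finset Bool}
    (hleafbad : ∀ v, G.degree v = 1 → bad v) (hclean : ∀ v, G.degree v = 1 → tag v = ∅)
    {ℓ : ℕ} (hℓ : (Finset.univ.filter fun v => G.degree v = 1).card = ℓ)
    {c : ℕ} (hc : c ∈ CoverCosts G bad tag) : ℓ ≤ c := by
  obtain ⟨k, x, y, p, hpath, hcov, rfl⟩ := hc
  set LF := Finset.univ.filter fun v => G.degree v = 1 with hLF
  have hsub : LF ⊆ Finset.univ.biUnion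
      (fun i : Fin k => LF.filter (fun v => v ∈ (p i).support)) := by
    intro v hv
    rw [hLF, Finset.mem_filter] at hv
    obtain ⟨i, hi⟩ := hcov v (hleafbad v hv.2)
    rw [Finset.mem_biUnion]
    exact ⟨i, Finset.mem_univ i, Finset.mem_filter.2 ⟨by rw [hLF, Finset.mem_filter]; exact hv, hi⟩⟩
  calc ℓ = LF.card := hℓ.symm
    _ ≤ _ := Finset.card_le_card hsub
    _ ≤ ∑ i, (LF.filter (fun v => v ∈ (p i).support)).card := Finset.card_biUnion_le
    _ ≤ ∑ i, pathCost bad tag (p i) := by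
        apply Finset.sum_le_sum
        intro i _
        exact leafcnt_le_cost hleafbad hclean (p i) (hpath i)

/-- fortress lower bound -/
lemma fortress_lb {bad : V → Prop} {tag : V → Finset Bool} (hT : G.IsTree)
    (hleafbad : ∀ v, G.degree v = 1 → bad v) (hclean : ∀ v, G.degree v = 1 → tag v = ∅)
    {ℓ : ℕ} (hℓ : (Finset.univ.filter fun v => G.degree v = 1).card = ℓ)
    (hodd : Odd ℓ) (hfort : ∀ u, G.degree u = 1 → LongBranch G bad u)
    {c : ℕ} (hc : c ∈ CoverCosts G bad tag) : ℓ + 1 ≤ c := by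
  by_contra hcon
  have hub : c ≤ ℓ := by omega
  have hlb := cover_lb hleafbad hclean hℓ hc
  have hceq : c = ℓ := le_antisymm hub hlb
  clear hcon hub hlb
  obtain ⟨k, x, y, p, hpath, hcov, hsum⟩ := hc
  set LF := Finset.univ.filter fun v => G.degree v = 1 with hLF
  set A : Fin k → Finset V := fun i => LF.filter (fun v => v ∈ (p i).support) with hAdef
  have hAcost : ∀ i, (A i).card ≤ pathCost bad tag (p i) := fun i =>
    leafcnt_le_cost hleafbad hclean (p i) (hpath i)
  -- as in cover_lb
  have hsub : LF ⊆ Finset.univ.biUnion (fun i : Fin k => A i) := by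
    intro v hv
    rw [hLF, Finset.mem_filter] at hv
    obtain ⟨i, hi⟩ := hcov v (hleafbad v hv.2)
    rw [Finset.mem_biUnion]
    refine ⟨i, Finset.mem_univ i, ?_⟩
    rw [hAdef, Finset.mem_filter]
    exact ⟨by rw [hLF, Finset.mem_filter]; exact hv, hi⟩
  have hchain0 : ℓ ≤ ∑ i, (A i).card := by
    calc ℓ = LF.card := hℓ.symm
      _ ≤ _ := Finset.card_le_card hsub
      _ ≤ ∑ i, (A i).card := Finset.card_biUnion_le
  have hchain1 : ∑ i, (A i).card ≤ ∑ i, pathCost bad tag (p i) :=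
    Finset.sum_le_sum (fun i _ => hAcost i)
  have hAsum : ∑ i, (A i).card = ℓ := by omega
  have hptwise : ∀ i, (A i).card = pathCost bad tag (p i) := by
    have := (Finset.sum_eq_sum_iff_of_le (fun i (_ : i ∈ Finset.univ) => hAcost i)).1 (by omega)
    intro i; exact this i (Finset.mem_univ i)
  -- every leaf lies on exactly one path
  have hcnt : ∀ v ∈ LF, (Finset.univ.filter (fun i : Fin k => v ∈ (p i).support)).card = 1 := by
    have hswap : ∑ i, (A i).card =
        ∑ v ∈ LF, (Finset.univ.filter (fun i : Fin k => v ∈ (p i).support)).card := by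
      have h1 : ∀ i, (A i).card = ∑ v ∈ LF, if v ∈ (p i).support then 1 else 0 := by
        intro i; rw [hAdef]; exact Finset.card_filter _ _
      have h2 : ∀ v, (Finset.univ.filter (fun i : Fin k => v ∈ (p i).support)).card =
          ∑ i, if v ∈ (p i).support then 1 else 0 := fun v => Finset.card_filter _ _
      simp only [h1, h2]
      exact Finset.sum_comm
    have hge : ∀ v ∈ LF, 1 ≤ (Finset.univ.filter (fun i : Fin k => v ∈ (p i).support)).card := by
      intro v hv
      rw [hLF, Finset.mem_filter] at hv
      obtain ⟨i, hi⟩ := hcov v (hleafbad v hv.2)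
      rw [Nat.succ_le_iff, Finset.card_pos]
      exact ⟨i, Finset.mem_filter.2 ⟨Finset.mem_univ i, hi⟩⟩
    have htot : ∑ v ∈ LF, (Finset.univ.filter (fun i : Fin k => v ∈ (p i).support)).card = ℓ := by
      rw [← hswap, hAsum]
    by_contra hno
    push_neg at hno
    obtain ⟨v₀, hv₀, hne⟩ := hno
    have : ℓ + 1 ≤ ∑ v ∈ LF, (Finset.univ.filter (fun i : Fin k => v ∈ (p i).support)).card := by
      have hsplit : (Finset.univ.filter (fun i : Fin k => v₀ ∈ (p i).support)).card
          + ∑ v ∈ LF.erase v₀, (Finset.univ.filter (fun i : Fin k => v ∈ (p i).support)).card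
          = ∑ v ∈ LF, (Finset.univ.filter (fun i : Fin k => v ∈ (p i).support)).card :=
        by exact Finset.add_sum_erase LF (fun v => (Finset.univ.filter (fun i : Fin k => v ∈ (p i).support)).card) hv₀
      have hrest : (LF.erase v₀).card ≤
          ∑ v ∈ LF.erase v₀, (Finset.univ.filter (fun i : Fin k => v ∈ (p i).support)).card := by
        rw [Finset.card_eq_sum_ones]
        apply Finset.sum_le_sum
        intro v hv
        exact hge v (Finset.mem_of_mem_erase hv)
      have hcard : (LF.erase v₀).card = ℓ - 1 := by rw [Finset.card_erase_of_mem hv₀, hℓ]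
      have h2 : 2 ≤ (Finset.univ.filter (fun i : Fin k => v₀ ∈ (p i).support)).card := by
        have := hge v₀ hv₀; omega
      have hl1 : 1 ≤ ℓ := by
        rw [← hℓ]; exact Finset.card_pos.2 ⟨v₀, hv₀⟩
      omega
    omega
  -- find a path with exactly one leaf
  obtain ⟨r, hr⟩ := hodd
  have hexi : ∃ i, (A i).card = 1 := by
    by_contra hno
    push_neg at hno
    have hall2 : ∀ i, (A i).card = 2 := by
      intro i
      have h1 := hptwise i
      have h2 := pathCost_pos (bad := bad) (tag := tag) (p i)
      have h3 := pathCost_le_two (bad := bad) (tag := tag) (p i)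
      have := hno i
      omega
    have : ∑ i, (A i).card = 2 * k := by
      rw [Finset.sum_congr rfl (fun i _ => hall2 i)]
      simp [Finset.sum_const, Finset.card_univ, Nat.mul_comm]
    omega
  obtain ⟨i₀, hi₀⟩ := hexi
  obtain ⟨u, hu⟩ := Finset.card_eq_one.1 hi₀
  have huA : u ∈ A i₀ := by rw [hu]; exact Finset.mem_singleton_self u
  have humem : u ∈ (p i₀).support := (Finset.mem_filter.1 huA).2
  have huLF : u ∈ LF := (Finset.mem_filter.1 huA).1
  have hudeg : G.degree u = 1 := (Finset.mem_filter.1 huLF).2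
  have huend : u = x i₀ ∨ u = y i₀ := leaf_eq_endpoint (hpath i₀) humem hudeg
  have huonly : ∀ j, u ∈ (p j).support → j = i₀ := by
    intro j hj
    by_contra hne
    have : ({j, i₀} : Finset (Fin k)) ⊆
        Finset.univ.filter (fun i : Fin k => u ∈ (p i).support) := by
      intro t ht
      rcases Finset.mem_insert.1 ht with rfl | ht
      · exact Finset.mem_filter.2 ⟨Finset.mem_univ _, hj⟩
      · rw [Finset.mem_singleton] at ht; subst ht
        exact Finset.mem_filter.2 ⟨Finset.mem_univ _, humem⟩
    have hcard2 : ({j, i₀} : Finset (Fin k)).card = 2 := by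
      rw [Finset.card_insert_of_notMem (by simp [hne]), Finset.card_singleton]
    have := Finset.card_le_card this
    rw [hcard2, hcnt u huLF] at this
    omega
  -- fortress: u has a long branch
  obtain ⟨v, q, hqpath, hvu, hvbad, hqsupp⟩ := hfort u hudeg
  have hvdeg : G.degree v = 2 := by
    rcases hqsupp v q.end_mem_support with h | h
    · exact absurd h hvu
    · exact h
  obtain ⟨j, hj⟩ := hcov v hvbad
  have hutag : tag (x i₀) = ∅ ∨ tag (y i₀) = ∅ := by
    rcases huend with h | h
    · exact Or.inl (by rw [← h]; exact hclean u hudeg)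
    · exact Or.inr (by rw [← h]; exact hclean u hudeg)
  by_cases hji : j = i₀
  · subst hji
    have hcost2 := pathCost_eq_two (p j) hj humem hvu hvbad (hleafbad u hudeg) hutag
    have := hptwise j
    rw [hcost2, hi₀] at this
    omega
  · -- v is on another path, not containing u
    have hunotj : u ∉ (p j).support := fun h => hji (huonly j h)
    have hAj1 : 1 ≤ (A j).card := by
      have h1 := hptwise j
      have h2 := pathCost_pos (bad := bad) (tag := tag) (p j)
      omega
    obtain ⟨w, hwA⟩ : (A j).Nonempty := Finset.card_pos.1 (by omega : 0 < (A j).card)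
    have hwLF := (Finset.mem_filter.1 hwA).1
    have hwdeg : G.degree w = 1 := (Finset.mem_filter.1 hwLF).2
    have hwmem : w ∈ (p j).support := (Finset.mem_filter.1 hwA).2
    have hwu : w ≠ u := fun h => hunotj (h ▸ hwmem)
    have hvw : v ≠ w := fun h => by rw [h, hwdeg] at hvdeg; omega
    have hwend := leaf_eq_endpoint (hpath j) hwmem hwdeg
    have hwtag : tag (x j) = ∅ ∨ tag (y j) = ∅ := by
      rcases hwend with h | h
      · exact Or.inl (by rw [← h]; exact hclean w hwdeg)
      · exact Or.inr (by rw [← h]; exact hclean w hwdeg)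
    have hcostj2 : pathCost bad tag (p j) = 2 :=
      pathCost_eq_two (p j) hj hwmem hvw hvbad (hleafbad w hwdeg) hwtag
    have hAj2 : (A j).card = 2 := by rw [hptwise j, hcostj2]
    -- both endpoints of p j are leaves
    have hAsub : A j ⊆ {x j, y j} := by
      intro z hz
      rw [hAdef, Finset.mem_filter, Finset.mem_filter] at hz
      rcases leaf_eq_endpoint (hpath j) hz.2 hz.1.2 with rfl | rfl
      · exact Finset.mem_insert_self _ _
      · exact Finset.mem_insert_of_mem (Finset.mem_singleton_self _)
    have hAeq : A j = {x j, y j} := by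
      apply Finset.eq_of_subset_of_card_le hAsub
      rw [hAj2]
      exact le_trans (Finset.card_insert_le _ _) (by rw [Finset.card_singleton])
    have hxj : G.degree (x j) = 1 := by
      have : x j ∈ A j := by rw [hAeq]; exact Finset.mem_insert_self _ _
      exact (Finset.mem_filter.1 ((Finset.mem_filter.1 this).1)).2
    have hyj : G.degree (y j) = 1 := by
      have : y j ∈ A j := by
        rw [hAeq]; exact Finset.mem_insert_of_mem (Finset.mem_singleton_self _)
      exact (Finset.mem_filter.1 ((Finset.mem_filter.1 this).1)).2
    -- chain propagation: u must be on p j, contradiction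
    have hrev : ∀ w' ∈ q.reverse.support, w' = u ∨ G.degree w' = 2 := by
      intro w' hw'
      rw [SimpleGraph.Walk.support_reverse, List.mem_reverse] at hw'
      exact hqsupp w' hw'
    have : u ∈ (p j).support :=
      chain_mem (hpath j) (by omega) (by omega) q.reverse hrev hj
    exact hunotj this

end TCover

namespace TCover

lemma dist_adj_one {a b : V} (h : G.Adj a b) : G.dist a b = 1 := (G.dist_eq_one_iff_adj).2 h

/-- if a bad vertex is not covered by a maximal family over all leaves except `u`,
then `u` has a long branch. -/
lemma noncov_long (hT : G.IsTree) {L₀ : Finset V} {u : V}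
    (hL : ∀ z, G.degree z = 1 → z ≠ u → z ∈ L₀)
    {m : ℕ} {f : Fin m → V × V} (hf : covFam L₀ f)
    (hmax : ∀ g : Fin m → V × V, covFam L₀ g →
      (∑ i, G.dist (g i).1 (g i).2) ≤ (∑ i, G.dist (f i).1 (f i).2))
    {bad : V → Prop} {v : V} (hbad : bad v) (hvu : v ≠ u)
    (hnc : ∀ i, v ∉ (tp hT (f i).1 (f i).2).support) :
    LongBranch G bad u := by
  have huv : u ≠ v := Ne.symm hvu
  refine ⟨v, tp hT u v, tp_isPath hT u v, hvu, hbad, ?_⟩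
  intro w hw
  by_cases hwu : w = u
  · exact Or.inl hwu
  right
  -- the neighbor of v towards u
  have hnva : G.Adj (pen hT u v) v := pen_adj hT huv
  set nv := pen hT u v with hnv
  obtain ⟨hnvd1, hnvd2⟩ := pen_dist hT huv
  rw [← hnv] at hnvd1 hnvd2
  have hsdu_nv : sd G nv v u := by
    unfold sd
    have := dist_pos hT huv
    omega
  -- degree of w is at least 1
  have hdeg1 : 0 < G.degree w := by
    rw [G.degree_pos_iff_exists_adj]
    obtain ⟨n, hn⟩ := exists_neighbor hT (Ne.symm hwu)
    exact ⟨n, hn⟩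
  -- v itself cannot be a leaf
  by_cases hdegw1 : G.degree w = 1
  · exfalso
    rcases leaf_eq_endpoint (tp_isPath hT u v) hw hdegw1 with h | h
    · exact hwu h
    · subst h
      have hvL : w ∈ L₀ := hL w hdegw1 hwu
      obtain ⟨i, hi⟩ := hf.2 w hvL
      apply hnc i
      rcases hi with h | h
      · rw [← h]; exact (tp hT _ _).start_mem_support
      · rw [← h]; exact (tp hT _ _).end_mem_support
  by_cases hdegw2 : G.degree w = 2
  · exact hdegw2
  exfalso
  have hdegw3 : 3 ≤ G.degree w := by omega
  -- a leaf y₁ on the v-side of the edge (v, nv), different from u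
  obtain ⟨y₁, hy₁deg, hy₁s⟩ := side_leaf hT hnva.symm
  have hy₁u : y₁ ≠ u := fun h => sd_not_both (h ▸ hy₁s) hsdu_nv
  have hy₁L : y₁ ∈ L₀ := hL y₁ hy₁deg hy₁u
  by_cases hwv : w = v
  · -- v itself has degree ≥ 3
    subst hwv
    obtain ⟨c, hcmem, c', hc'mem, hcc'⟩ :
        ∃ c ∈ (G.neighborFinset w).erase nv, ∃ c' ∈ (G.neighborFinset w).erase nv, c ≠ c' := by
      have hcard : 2 ≤ ((G.neighborFinset w).erase nv).card := by
        have h1 := Finset.card_erase_of_mem (a := nv) (s := G.neighborFinset w)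
          ((SimpleGraph.mem_neighborFinset _ _ _).2 hnva.symm)
        rw [G.card_neighborFinset_eq_degree] at h1
        omega
      obtain ⟨c, hc, c', hc', hne⟩ := Finset.one_lt_card.1 (show 1 < ((G.neighborFinset w).erase nv).card by omega)
      exact ⟨c, hc, c', hc', hne⟩
    have hcadj : G.Adj w c := (SimpleGraph.mem_neighborFinset _ _ _).1 (Finset.mem_of_mem_erase hcmem)
    have hc'adj : G.Adj w c' := (SimpleGraph.mem_neighborFinset _ _ _).1 (Finset.mem_of_mem_erase hc'mem)
    have hcnv : c ≠ nv := (Finset.mem_erase.1 hcmem).1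
    have hc'nv : c' ≠ nv := (Finset.mem_erase.1 hc'mem).1
    -- u is on the w-side of (w, c) and (w, c')
    have hucw : sd G w c u := by
      rcases sd_or hT hcadj u with h | h
      · exact h
      · exfalso
        unfold sd at h
        have hcmemp : c ∈ (tp hT u w).support := by
          apply mem_of_dist_add hT
          have := dist_adj_one hcadj.symm
          omega
        exact hcnv (eq_pen hT hcmemp hcadj.symm)
    have huc'w : sd G w c' u := by
      rcases sd_or hT hc'adj u with h | h
      · exact h
      · exfalso
        unfold sd at h
        have hcmemp : c' ∈ (tp hT u w).support := by
          apply mem_of_dist_add hT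
          have := dist_adj_one hc'adj.symm
          omega
        exact hc'nv (eq_pen hT hcmemp hc'adj.symm)
    -- leaves on the c-side and c'-side
    obtain ⟨x₁, hx₁deg, hx₁s⟩ := side_leaf hT hcadj.symm
    obtain ⟨x₂, hx₂deg, hx₂s⟩ := side_leaf hT hc'adj.symm
    have hx₁u : x₁ ≠ u := fun h => sd_not_both (h ▸ hx₁s) hucw
    have hx₂u : x₂ ≠ u := fun h => sd_not_both (h ▸ hx₂s) huc'w
    have hx₁L : x₁ ∈ L₀ := hL x₁ hx₁deg hx₁u
    have hx₂L : x₂ ∈ L₀ := hL x₂ hx₂deg hx₂u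
    -- x₂ is on the w-side of (w, c)
    have hx₂w : sd G w c x₂ := by
      rcases sd_or hT hcadj x₂ with h | h
      · exact h
      · exfalso
        have hcp : c ∈ (tp hT x₂ w).support := by
          apply mem_of_dist_add hT
          have := dist_adj_one hcadj.symm
          unfold sd at h
          omega
        have hc'p : c' ∈ (tp hT x₂ w).support := by
          apply mem_of_dist_add hT
          have := dist_adj_one hc'adj.symm
          unfold sd at hx₂s
          omega
        have e1 := eq_pen hT hcp hcadj.symm
        have e2 := eq_pen hT hc'p hc'adj.symm
        exact hcc' (e1.trans e2.symm)
    obtain ⟨i, hi⟩ := maxFam_mem hT hf hmax hcadj ⟨x₂, hx₂L, hx₂w⟩ ⟨x₁, hx₁L, hx₁s⟩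
    exact hnc i hi
  · -- w is strictly inside the path, with degree ≥ 3
    have hwv' : w ≠ v := hwv
    have huw : u ≠ w := Ne.symm hwu
    have hvw : v ≠ w := Ne.symm hwv'
    set n₁ := pen hT u w with hn₁
    set n₂ := pen hT v w with hn₂
    -- a third neighbor c of w
    obtain ⟨c, hcmem⟩ : ∃ c, c ∈ G.neighborFinset w \ {n₁, n₂} := by
      have h1 : ({n₁, n₂} : Finset V).card ≤ 2 :=
        le_trans (Finset.card_insert_le _ _) (by rw [Finset.card_singleton])
      have h2 : 1 ≤ (G.neighborFinset w \ ({n₁, n₂} : Finset V)).card := by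
        have h3 := Finset.le_card_sdiff ({n₁, n₂} : Finset V) (G.neighborFinset w)
        rw [G.card_neighborFinset_eq_degree] at h3
        omega
      obtain ⟨c, hc⟩ := Finset.card_pos.1
        (show 0 < (G.neighborFinset w \ ({n₁, n₂} : Finset V)).card by omega)
      exact ⟨c, hc⟩
    have hcadj : G.Adj w c :=
      (SimpleGraph.mem_neighborFinset _ _ _).1 (Finset.mem_sdiff.1 hcmem).1
    have hcn : c ∉ ({n₁, n₂} : Finset V) := (Finset.mem_sdiff.1 hcmem).2
    have hcn₁ : c ≠ n₁ := fun h => hcn (by rw [h]; exact Finset.mem_insert_self _ _)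
    have hcn₂ : c ≠ n₂ := fun h =>
      hcn (by rw [h]; exact Finset.mem_insert_of_mem (Finset.mem_singleton_self _))
    -- u is on the w-side of (w, c)
    have hucw : sd G w c u := by
      rcases sd_or hT hcadj u with h | h
      · exact h
      · exfalso
        unfold sd at h
        have hcmemp : c ∈ (tp hT u w).support := by
          apply mem_of_dist_add hT
          have := dist_adj_one hcadj.symm
          omega
        exact hcn₁ (eq_pen hT hcmemp hcadj.symm)
    -- v is on the w-side of (w, c)
    have hvcw : sd G w c v := by
      rcases sd_or hT hcadj v with h | h
      · exact h
      · exfalso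
        unfold sd at h
        have hcmemp : c ∈ (tp hT v w).support := by
          apply mem_of_dist_add hT
          have := dist_adj_one hcadj.symm
          omega
        exact hcn₂ (eq_pen hT hcmemp hcadj.symm)
    -- a leaf x₁ on the c-side of (w, c)
    obtain ⟨x₁, hx₁deg, hx₁s⟩ := side_leaf hT hcadj.symm
    have hx₁u : x₁ ≠ u := fun h => sd_not_both (h ▸ hx₁s) hucw
    have hx₁L : x₁ ∈ L₀ := hL x₁ hx₁deg hx₁u
    -- c lies on the path from x₁ to w
    have hcx₁ : c ∈ (tp hT x₁ w).support := by
      apply mem_of_dist_add hT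
      have := dist_adj_one hcadj.symm
      unfold sd at hx₁s
      omega
    -- supports of tp x₁ w and tp w v intersect only in w
    have hdisj : ∀ t, t ∈ (tp hT x₁ w).support → t ∈ (tp hT w v).support → t = w := by
      intro t h1 h2
      by_contra htw
      have ht2 : t ∈ (tp hT v w).support := mem_tp_symm hT h2
      have hA : sd G w c t := sd_of_mem_tp hT hcadj hvcw ht2
      have hsplit := (tp hT x₁ w).take_spec hcx₁
      rw [← hsplit, SimpleGraph.Walk.mem_support_append_iff] at h1
      rw [tp_takeUntil hT hcx₁, tp_dropUntil hT hcx₁] at h1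
      rcases h1 with h1 | h1
      · exact sd_not_both (sd_of_mem_tp hT hcadj.symm hx₁s h1) hA
      · have hadd := dist_add_of_mem hT h1
        have hcw1 : G.dist c w = 1 := dist_adj_one hcadj.symm
        by_cases hzero : G.dist t w = 0
        · exact htw (dist_eq_zero hT hzero)
        · have : G.dist c t = 0 := by omega
          have := dist_eq_zero hT this
          subst this
          exact sd_not_both (sd_self hcadj.symm) hA
    -- hence w lies on the path from x₁ to v
    have hP : ((tp hT x₁ w).append (tp hT w v)).IsPath :=
      isPath_append (tp_isPath hT x₁ w) (tp_isPath hT w v) hdisj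
    have hweq := tp_eq hT _ hP
    have hwmem : w ∈ (tp hT x₁ v).support := by
      rw [← hweq, SimpleGraph.Walk.mem_support_append_iff]
      exact Or.inl (tp hT x₁ w).end_mem_support
    -- the penultimate vertex of tp w v is nv
    have hpenwv : pen hT w v = nv := by
      apply eq_pen hT (supp_tp_right hT hw (pen_mem hT w v)) (pen_adj hT hwv')
    -- nv is on the path from x₁ to v
    have hnvmem : nv ∈ (tp hT x₁ v).support := by
      apply supp_tp_right hT hwmem
      rw [← hpenwv]
      exact pen_mem hT w v
    -- so x₁ is on the nv-side of (v, nv)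
    have hx₁nv : sd G nv v x₁ := by
      unfold sd
      have hadd := dist_add_of_mem hT hnvmem
      have h1 : G.dist nv v = 1 := dist_adj_one hnva
      omega
    obtain ⟨i, hi⟩ := maxFam_mem hT hf hmax hnva.symm ⟨y₁, hy₁L, hy₁s⟩ ⟨x₁, hx₁L, hx₁nv⟩
    exact hnc i hi
end TCover

namespace TCover

/-- in a tight covering family all pairs have distinct components -/
lemma covFam_tight {L₀ : Finset V} {m : ℕ} {f : Fin m → V × V} (hf : covFam L₀ f)
    (hcard : L₀.card = 2 * m) : ∀ i, (f i).1 ≠ (f i).2 := by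
  set B : Fin m → Finset V := fun i => {(f i).1, (f i).2} with hB
  have hsub : L₀ ⊆ Finset.univ.biUnion B := by
    intro v hv
    obtain ⟨i, hi⟩ := hf.2 v hv
    rw [Finset.mem_biUnion]
    refine ⟨i, Finset.mem_univ i, ?_⟩
    rcases hi with h | h
    · rw [hB, ← h]; exact Finset.mem_insert_self _ _
    · rw [hB, ← h]; exact Finset.mem_insert_of_mem (Finset.mem_singleton_self _)
  have hle : ∀ i, (B i).card ≤ 2 := fun i =>
    le_trans (Finset.card_insert_le _ _) (by rw [Finset.card_singleton])
  have hchain : 2 * m ≤ ∑ i, (B i).card := by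
    calc 2 * m = L₀.card := hcard.symm
      _ ≤ (Finset.univ.biUnion B).card := Finset.card_le_card hsub
      _ ≤ ∑ i, (B i).card := Finset.card_biUnion_le
  have hub : ∑ i, (B i).card ≤ ∑ _i : Fin m, 2 := Finset.sum_le_sum (fun i _ => hle i)
  have hconst : ∑ _i : Fin m, 2 = 2 * m := by
    rw [Finset.sum_const, Finset.card_univ, Fintype.card_fin, smul_eq_mul, Nat.mul_comm]
  have heq : ∀ i, (B i).card = 2 := by
    have := (Finset.sum_eq_sum_iff_of_le (fun i (_ : i ∈ Finset.univ) => hle i)).1 (by omega)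
    intro i; exact this i (Finset.mem_univ i)
  intro i hne
  have h2 := heq i
  rw [hB] at h2
  simp only [hne, Finset.insert_eq_self.2 (Finset.mem_singleton_self _),
    Finset.card_singleton] at h2
  omega
/-- the cost of the tree path between two distinct clean leaves is 2 -/
lemma cost_tp_pair (hT : G.IsTree) {bad : V → Prop} {tag : V → Finset Bool}
    (hleafbad : ∀ v, G.degree v = 1 → bad v) (hclean : ∀ v, G.degree v = 1 → tag v = ∅)
    {a b : V} (ha : G.degree a = 1) (hb : G.degree b = 1) (hab : a ≠ b) :
    pathCost bad tag (tp hT a b) = 2 :=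
  pathCost_eq_two (tp hT a b) (tp hT a b).start_mem_support (tp hT a b).end_mem_support
    hab (hleafbad a ha) (hleafbad b hb) (Or.inl (hclean a ha))

lemma cost_tp_self (hT : G.IsTree) {bad : V → Prop} {tag : V → Finset Bool} (u : V) :
    pathCost bad tag (tp hT u u) = 1 := by
  rw [tp_self hT u]
  exact pathCost_nil

/-- coverage of all bad vertices by a maximal family over all leaves -/
lemma maxFam_covers_all (hT : G.IsTree)
    {ℓ : ℕ} (hℓ : (Finset.univ.filter fun v => G.degree v = 1).card = ℓ) (h2 : 2 ≤ ℓ)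
    {m : ℕ} {f : Fin m → V × V}
    (hf : covFam (Finset.univ.filter fun v => G.degree v = 1) f)
    (hmax : ∀ g : Fin m → V × V, covFam (Finset.univ.filter fun v => G.degree v = 1) g →
      (∑ i, G.dist (g i).1 (g i).2) ≤ (∑ i, G.dist (f i).1 (f i).2)) (v : V) :
    ∃ i, v ∈ (tp hT (f i).1 (f i).2).support := by
  set LF := Finset.univ.filter fun v => G.degree v = 1 with hLF
  -- v has a neighbor
  obtain ⟨z, hz⟩ : ∃ z, z ≠ v := by
    obtain ⟨z1, hz1, z2, hz2, hne⟩ := Finset.one_lt_card.1 (show 1 < LF.card by omega)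
    by_cases h : z1 = v
    · exact ⟨z2, fun hh => hne (h ▸ hh ▸ rfl)⟩
    · exact ⟨z1, h⟩
  obtain ⟨n, hn⟩ := exists_neighbor hT hz
  obtain ⟨x, hxdeg, hxs⟩ := side_leaf hT hn
  obtain ⟨y, hydeg, hys⟩ := side_leaf hT hn.symm
  exact maxFam_mem hT hf hmax hn
    ⟨x, by rw [hLF, Finset.mem_filter]; exact ⟨Finset.mem_univ x, hxdeg⟩, hxs⟩
    ⟨y, by rw [hLF, Finset.mem_filter]; exact ⟨Finset.mem_univ y, hydeg⟩, hys⟩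

/-- membership for the even case -/
lemma member_even (hT : G.IsTree) {bad : V → Prop} {tag : V → Finset Bool}
    (hleafbad : ∀ v, G.degree v = 1 → bad v) (hclean : ∀ v, G.degree v = 1 → tag v = ∅)
    {ℓ : ℕ} (hℓ : (Finset.univ.filter fun v => G.degree v = 1).card = ℓ) (h2 : 2 ≤ ℓ)
    (heven : Even ℓ) : ℓ ∈ CoverCosts G bad tag := by
  set LF := Finset.univ.filter fun v => G.degree v = 1 with hLF
  obtain ⟨r, hr⟩ := heven
  set m := r with hm
  have hcard : LF.card = 2 * m := by omega
  obtain ⟨f₀, hf₀⟩ := covFam_exists LF (Finset.card_pos.1 (show 0 < LF.card by omega)) m (by omega)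
  obtain ⟨f, hf, hmax⟩ := exists_maxFam (G := G) LF m ⟨f₀, hf₀⟩
  have hdist := covFam_tight hf hcard
  have hdeg : ∀ i, G.degree (f i).1 = 1 ∧ G.degree (f i).2 = 1 := by
    intro i
    have h1 := (hf.1 i).1
    have h2 := (hf.1 i).2
    rw [hLF, Finset.mem_filter] at h1 h2
    exact ⟨h1.2, h2.2⟩
  refine ⟨m, fun i => (f i).1, fun i => (f i).2, fun i => tp hT (f i).1 (f i).2,
    fun i => tp_isPath hT _ _, ?_, ?_⟩
  · intro v _
    exact maxFam_covers_all hT hℓ h2 hf hmax v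
  · rw [Finset.sum_congr rfl (fun i _ =>
      cost_tp_pair hT hleafbad hclean (hdeg i).1 (hdeg i).2 (hdist i))]
    rw [Finset.sum_const, Finset.card_univ, Fintype.card_fin, smul_eq_mul]
    omega

/-- membership candidate for the fortress case: some cover of cost at most ℓ+1 exists -/
lemma member_fortress_aux (hT : G.IsTree) {bad : V → Prop} {tag : V → Finset Bool}
    {ℓ : ℕ} (hℓ : (Finset.univ.filter fun v => G.degree v = 1).card = ℓ) (h2 : 2 ≤ ℓ)
    (hodd : Odd ℓ) : ∃ c ∈ CoverCosts G bad tag, c ≤ ℓ + 1 := by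
  set LF := Finset.univ.filter fun v => G.degree v = 1 with hLF
  obtain ⟨r, hr⟩ := hodd
  set m := r + 1 with hm
  obtain ⟨f₀, hf₀⟩ := covFam_exists LF (Finset.card_pos.1 (show 0 < LF.card by omega)) m (by omega)
  obtain ⟨f, hf, hmax⟩ := exists_maxFam (G := G) LF m ⟨f₀, hf₀⟩
  refine ⟨∑ i, pathCost bad tag (tp hT (f i).1 (f i).2),
    ⟨m, fun i => (f i).1, fun i => (f i).2, fun i => tp hT (f i).1 (f i).2,
      fun i => tp_isPath hT _ _, ?_, rfl⟩, ?_⟩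
  · intro v _
    exact maxFam_covers_all hT hℓ h2 hf hmax v
  · have hub : ∑ i, pathCost bad tag (tp hT (f i).1 (f i).2) ≤ ∑ _i : Fin m, 2 :=
      Finset.sum_le_sum (fun i _ => pathCost_le_two _)
    rw [Finset.sum_const, Finset.card_univ, Fintype.card_fin, smul_eq_mul] at hub
    omega

/-- membership for the odd non-fortress case -/
lemma member_odd_nonfort (hT : G.IsTree) {bad : V → Prop} {tag : V → Finset Bool}
    (hleafbad : ∀ v, G.degree v = 1 → bad v) (hclean : ∀ v, G.degree v = 1 → tag v = ∅)
    {ℓ : ℕ} (hℓ : (Finset.univ.filter fun v => G.degree v = 1).card = ℓ) (h2 : 2 ≤ ℓ)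
    (hodd : Odd ℓ) {u : V} (hu : G.degree u = 1) (hnl : ¬ LongBranch G bad u) :
    ℓ ∈ CoverCosts G bad tag := by
  set LF := Finset.univ.filter fun v => G.degree v = 1 with hLF
  have huLF : u ∈ LF := by rw [hLF, Finset.mem_filter]; exact ⟨Finset.mem_univ u, hu⟩
  set L₀ := LF.erase u with hL₀
  have hL₀card : L₀.card = ℓ - 1 := by rw [hL₀, Finset.card_erase_of_mem huLF, hℓ]
  obtain ⟨r, hr⟩ := hodd
  set m := r with hm
  have hcard : L₀.card = 2 * m := by omega
  obtain ⟨f₀, hf₀⟩ := covFam_exists L₀ (Finset.card_pos.1 (show 0 < L₀.card by omega)) m (by omega)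
  obtain ⟨f, hf, hmax⟩ := exists_maxFam (G := G) L₀ m ⟨f₀, hf₀⟩
  have hdist := covFam_tight hf hcard
  have hdeg : ∀ i, G.degree (f i).1 = 1 ∧ G.degree (f i).2 = 1 := by
    intro i
    have h1 := Finset.mem_of_mem_erase ((hf.1 i).1)
    have hh2 := Finset.mem_of_mem_erase ((hf.1 i).2)
    rw [hLF, Finset.mem_filter] at h1 hh2
    exact ⟨h1.2, hh2.2⟩
  set g : Fin (m + 1) → V × V := Fin.cons (u, u) f with hg
  refine ⟨m + 1, fun i => (g i).1, fun i => (g i).2, fun i => tp hT (g i).1 (g i).2,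
    fun i => tp_isPath hT _ _, ?_, ?_⟩
  · intro v hv
    by_cases hvu : v = u
    · refine ⟨0, ?_⟩
      have : g 0 = (u, u) := by rw [hg]; exact Fin.cons_zero _ _
      show v ∈ (tp hT (g 0).1 (g 0).2).support
      rw [this, hvu]
      exact (tp hT u u).start_mem_support
    · by_cases hcov : ∃ i, v ∈ (tp hT (f i).1 (f i).2).support
      · obtain ⟨i, hi⟩ := hcov
        refine ⟨i.succ, ?_⟩
        have : g i.succ = f i := by rw [hg]; exact Fin.cons_succ _ _ _
        show v ∈ (tp hT (g i.succ).1 (g i.succ).2).support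
        rw [this]
        exact hi
      · exfalso
        push_neg at hcov
        apply hnl
        have hL : ∀ z, G.degree z = 1 → z ≠ u → z ∈ L₀ := by
          intro z hz hzu
          refine Finset.mem_erase.2 ⟨hzu, ?_⟩
          rw [hLF, Finset.mem_filter]
          exact ⟨Finset.mem_univ z, hz⟩
        exact noncov_long hT hL hf hmax hv hvu hcov
  · rw [Fin.sum_univ_succ]
    have h0 : g 0 = (u, u) := by rw [hg]; exact Fin.cons_zero _ _
    have hs : ∀ i : Fin m, g i.succ = f i := by
      intro i; rw [hg]; exact Fin.cons_succ _ _ _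
    show ℓ = pathCost bad tag (tp hT (g 0).1 (g 0).2) +
      ∑ i : Fin m, pathCost bad tag (tp hT (g i.succ).1 (g i.succ).2)
    rw [h0, cost_tp_self hT u]
    have hterm : ∀ i : Fin m,
        pathCost bad tag (tp hT (g i.succ).1 (g i.succ).2) = 2 := by
      intro i
      rw [hs i]
      exact cost_tp_pair hT hleafbad hclean (hdeg i).1 (hdeg i).2 (hdist i)
    rw [Finset.sum_congr rfl (fun i _ => hterm i)]
    rw [Finset.sum_const, Finset.card_univ, Fintype.card_fin, smul_eq_mul]
    omega

end TCover

/-- Let `T` be a tagged component tree with `ℓ ≥ 2` leaves, all of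
whose leaves are clean (empty tag set). Then the minimum cost of a cover is `ℓ + 1` if
`ℓ` is odd and every leaf-branch of `T` is long (the *fortress* case), and `ℓ`
otherwise. -/
theorem optimal_cover_cost_clean_leaves {V : Type} [Fintype V] [DecidableEq V]
    (G : SimpleGraph V) [DecidableRel G.Adj] (hT : G.IsTree)
    (bad : V → Prop) (tag : V → Finset Bool)
    (hleafbad : ∀ v, G.degree v = 1 → bad v)
    (hclean : ∀ v, G.degree v = 1 → tag v = ∅)
    (ℓ : ℕ) (hℓ : (Finset.univ.filter fun v => G.degree v = 1).card = ℓ) (h2 : 2 ≤ ℓ) :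
    ((Odd ℓ ∧ ∀ u, G.degree u = 1 → LongBranch G bad u) →
        IsLeast (CoverCosts G bad tag) (ℓ + 1)) ∧
    (¬ (Odd ℓ ∧ ∀ u, G.degree u = 1 → LongBranch G bad u) →
        IsLeast (CoverCosts G bad tag) ℓ) := by
  constructor
  · rintro ⟨hodd, hfort⟩
    constructor
    · obtain ⟨c, hc, hcle⟩ :=
        TCover.member_fortress_aux (bad := bad) (tag := tag) hT hℓ h2 hodd
      have hge := TCover.fortress_lb hT hleafbad hclean hℓ hodd hfort hc
      have hceq : c = ℓ + 1 := le_antisymm hcle hge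
      rwa [← hceq]
    · intro c hc
      exact TCover.fortress_lb hT hleafbad hclean hℓ hodd hfort hc
  · intro hn
    constructor
    · by_cases hodd : Odd ℓ
      · have hex : ∃ u, G.degree u = 1 ∧ ¬ LongBranch G bad u := by
          by_contra h
          push_neg at h
          exact hn ⟨hodd, fun u hu => h u hu⟩
        obtain ⟨u, hu, hnl⟩ := hex
        exact TCover.member_odd_nonfort hT hleafbad hclean hℓ h2 hodd hu hnl
      · exact TCover.member_even hT hleafbad hclean hℓ h2 (Nat.not_odd_iff_even.1 hodd)
    · intro c hc
      exact TCover.cover_lb hleafbad hclean hℓ hc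
end

section
/- Let T be a finite tree with ℓ ≥ 3 leaves where ℓ is odd. Then T can be covered by (ℓ−1)/2 leaf-to-leaf paths plus one additional path that covers one designated leaf-branch: formally, there exists a set of (ℓ+1)/2 paths, each with at least one endpoint a leaf, whose union covers all vertices of T. -/
lemma pairing_lemma {α β : Type*} [DecidableEq α] [DecidableEq β] :
    ∀ (n : ℕ) (S : Finset α) (d : α → β), S.card = 2*n+1 →
    (∀ c, (S.filter (fun s => d s = c)).card ≤ n+1) →
    ∃ (x y : Fin n → α) (z : α), z ∈ S ∧ (∀ i, x i ∈ S) ∧ (∀ i, y i ∈ S) ∧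
      (∀ i, d (x i) ≠ d (y i)) ∧ ∀ s ∈ S, s = z ∨ ∃ i, s = x i ∨ s = y i := by
  intro n
  induction n with
  | zero =>
    intro S d hcard _
    obtain ⟨z, hz⟩ := Finset.card_eq_one.mp (by simpa using hcard)
    exact ⟨Fin.elim0, Fin.elim0, z, by simp [hz], fun i => i.elim0, fun i => i.elim0,
      fun i => i.elim0, fun s hs => Or.inl (by simpa [hz] using hs)⟩
  | succ n ih =>
    intro S d hcard hfib
    have hSne : S.Nonempty := Finset.card_pos.mp (by omega)
    obtain ⟨x0, hx0S, hx0max⟩ := S.exists_max_image (fun s => (S.filter (fun t => d t = d s)).card) hSne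
    set T := S.filter (fun s => d s ≠ d x0) with hT
    have hTcard : (S.filter (fun s => d s = d x0)).card + T.card = S.card :=
      Finset.card_filter_add_card_filter_not _
    have hTne : T.Nonempty := by
      have := hfib (d x0)
      apply Finset.card_pos.mp
      omega
    obtain ⟨y0, hy0T, hy0max⟩ := T.exists_max_image (fun s => (S.filter (fun t => d t = d s)).card) hTne
    have hy0S : y0 ∈ S := (Finset.mem_filter.mp hy0T).1
    have hy0d : d y0 ≠ d x0 := (Finset.mem_filter.mp hy0T).2
    have hne : y0 ≠ x0 := fun h => hy0d (by rw [h])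
    set S' := (S.erase x0).erase y0 with hS'
    have hsub : S' ⊆ S := fun s hs =>
      Finset.mem_of_mem_erase (Finset.mem_of_mem_erase hs)
    have hS'card : S'.card = 2*n+1 := by
      rw [hS', Finset.card_erase_of_mem (Finset.mem_erase.mpr ⟨hne, hy0S⟩),
        Finset.card_erase_of_mem hx0S, hcard]
      omega
    have hmemS' : ∀ s ∈ S, s ≠ x0 → s ≠ y0 → s ∈ S' := fun s hs h1 h2 =>
      Finset.mem_erase.mpr ⟨h2, Finset.mem_erase.mpr ⟨h1, hs⟩⟩
    have hfib' : ∀ c, (S'.filter (fun s => d s = c)).card ≤ n+1 := by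
      intro c
      by_cases hc1 : c = d x0
      · have hsub2 : S'.filter (fun s => d s = c) ⊆ (S.filter (fun s => d s = c)).erase x0 := by
          intro s hs
          obtain ⟨hs1, hs2⟩ := Finset.mem_filter.mp hs
          exact Finset.mem_erase.mpr ⟨(Finset.mem_erase.mp (Finset.mem_of_mem_erase hs1)).1,
            Finset.mem_filter.mpr ⟨hsub hs1, hs2⟩⟩
        have := Finset.card_le_card hsub2
        rw [Finset.card_erase_of_mem (Finset.mem_filter.mpr ⟨hx0S, hc1.symm⟩)] at this
        have := hfib c
        omega
      by_cases hc2 : c = d y0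
      · have hsub2 : S'.filter (fun s => d s = c) ⊆ (S.filter (fun s => d s = c)).erase y0 := by
          intro s hs
          obtain ⟨hs1, hs2⟩ := Finset.mem_filter.mp hs
          exact Finset.mem_erase.mpr ⟨(Finset.mem_erase.mp hs1).1,
            Finset.mem_filter.mpr ⟨hsub hs1, hs2⟩⟩
        have := Finset.card_le_card hsub2
        rw [Finset.card_erase_of_mem (Finset.mem_filter.mpr ⟨hy0S, hc2.symm⟩)] at this
        have := hfib c
        omega
      · -- fiber unchanged; show it is small
        have heq : S'.filter (fun s => d s = c) = S.filter (fun s => d s = c) := by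
          apply Finset.ext
          intro s
          simp only [Finset.mem_filter, hS', Finset.mem_erase]
          constructor
          · rintro ⟨⟨_, _, h⟩, h2⟩; exact ⟨h, h2⟩
          · rintro ⟨h1, h2⟩
            refine ⟨⟨fun h => hc2 (by rw [← h, h2]), fun h => hc1 (by rw [← h, h2]), h1⟩, h2⟩
        rw [heq]
        by_contra hbig
        push_neg at hbig
        obtain ⟨w, hw⟩ := Finset.card_pos.mp (by omega : 0 < (S.filter (fun s => d s = c)).card)
        obtain ⟨hwS, hwd⟩ := Finset.mem_filter.mp hw
        have hwT : w ∈ T := Finset.mem_filter.mpr ⟨hwS, by rw [hwd]; exact hc1⟩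
        have h1 := hx0max w hwS
        have h2 := hy0max w hwT
        rw [hwd] at h1 h2
        -- three disjoint fibers each of size ≥ n+2
        have hd1 : Disjoint (S.filter (fun s => d s = d x0)) (S.filter (fun s => d s = d y0)) := by
          rw [Finset.disjoint_left]
          intro a ha hb
          exact hy0d ((Finset.mem_filter.mp hb).2.symm.trans (Finset.mem_filter.mp ha).2)
        have hd2 : Disjoint ((S.filter (fun s => d s = d x0)) ∪ (S.filter (fun s => d s = d y0)))
            (S.filter (fun s => d s = c)) := by
          rw [Finset.disjoint_left]
          intro a ha hb
          rcases Finset.mem_union.mp ha with h | h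
          · exact hc1 ((Finset.mem_filter.mp hb).2.symm.trans (Finset.mem_filter.mp h).2)
          · exact hc2 ((Finset.mem_filter.mp hb).2.symm.trans (Finset.mem_filter.mp h).2)
        have hsubU : ((S.filter (fun s => d s = d x0)) ∪ (S.filter (fun s => d s = d y0))) ∪
            (S.filter (fun s => d s = c)) ⊆ S := by
          intro a ha
          rcases Finset.mem_union.mp ha with h | h
          · rcases Finset.mem_union.mp h with h | h
            · exact (Finset.mem_filter.mp h).1
            · exact (Finset.mem_filter.mp h).1
          · exact (Finset.mem_filter.mp h).1
        have := Finset.card_le_card hsubU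
        rw [Finset.card_union_of_disjoint hd2, Finset.card_union_of_disjoint hd1] at this
        omega
    obtain ⟨x', y', z, hzS', hx'S, hy'S, hd', hcov'⟩ := ih S' d hS'card hfib'
    refine ⟨Fin.cases x0 x', Fin.cases y0 y', z, hsub hzS', ?_, ?_, ?_, ?_⟩
    · intro i; induction i using Fin.cases with
      | zero => simpa using hx0S
      | succ j => simpa using hsub (hx'S j)
    · intro i; induction i using Fin.cases with
      | zero => simpa using hy0S
      | succ j => simpa using hsub (hy'S j)
    · intro i; induction i using Fin.cases with
      | zero => simpa using fun h => hy0d h.symm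
      | succ j => simpa using hd' j
    · intro s hs
      by_cases h1 : s = x0
      · exact Or.inr ⟨0, Or.inl (by simpa using h1)⟩
      by_cases h2 : s = y0
      · exact Or.inr ⟨0, Or.inr (by simpa using h2)⟩
      · rcases hcov' s (hmemS' s hs h1 h2) with h | ⟨i, h | h⟩
        · exact Or.inl h
        · exact Or.inr ⟨i.succ, Or.inl (by simpa using h)⟩
        · exact Or.inr ⟨i.succ, Or.inr (by simpa using h)⟩

open SimpleGraph

variable {V : Type} {G : SimpleGraph V}

lemma getVert_one_takeUntil [DecidableEq V] {r a x : V} (p : G.Walk r a) (hx : x ∈ p.support)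
    (hxr : x ≠ r) : (p.takeUntil x hx).getVert 1 = p.getVert 1 := by
  have hlen : (p.takeUntil x hx).length ≠ 0 := by
    intro h0
    exact hxr ((p.takeUntil x hx).eq_of_length_eq_zero h0).symm
  conv_rhs => rw [← p.take_spec hx]
  rw [Walk.getVert_append]
  rcases lt_or_ge 1 (p.takeUntil x hx).length with h | h
  · rw [if_pos h]
  · have h1 : (p.takeUntil x hx).length = 1 := by omega
    rw [if_neg (by omega), h1]
    have hL : (p.takeUntil x hx).getVert 1 = x := by
      conv_lhs => rw [← h1]
      exact Walk.getVert_length _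
    rw [hL]
    simp

lemma diverge [DecidableEq V] (hT : G.IsTree) {r a b x : V} (pa : G.Walk r a) (pb : G.Walk r b)
    (ha : pa.IsPath) (hb : pb.IsPath) (hxa : x ∈ pa.support) (hxb : x ∈ pb.support)
    (hxr : x ≠ r) : pa.getVert 1 = pb.getVert 1 := by
  have h1 := ha.takeUntil hxa
  have h2 := hb.takeUntil hxb
  have := (hT.existsUnique_path r x).unique h1 h2
  rw [← getVert_one_takeUntil pa hxa hxr, ← getVert_one_takeUntil pb hxb hxr, this]

lemma revAppend_isPath {r a b : V} (pa : G.Walk r a) (pb : G.Walk r b)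
    (ha : pa.IsPath) (hb : pb.IsPath)
    (hint : ∀ x, x ∈ pa.support → x ∈ pb.support → x = r) :
    (pa.reverse.append pb).IsPath := by
  rw [Walk.isPath_def, Walk.support_append]
  apply List.Nodup.append
  · exact ha.reverse.support_nodup
  · have := hb.support_nodup
    rw [pb.support_eq_cons] at this
    exact this.of_cons
  · intro u hu hu'
    have h1 : u ∈ pa.support := by
      rw [Walk.support_reverse] at hu
      exact List.mem_reverse.mp hu
    have h2 : u ∈ pb.support := List.mem_of_mem_tail hu'
    have hur : u = r := hint u h1 h2
    have := hb.support_nodup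
    rw [pb.support_eq_cons, List.nodup_cons] at this
    exact this.1 (hur ▸ hu')

lemma exists_leaf_path [Fintype V] [DecidableEq V] [DecidableRel G.Adj] (hT : G.IsTree)
    (hdeg : ∀ x : V, 0 < G.degree x) (r v : V) :
    ∃ (L : V) (q : G.Walk r L), q.IsPath ∧ v ∈ q.support ∧ G.degree L = 1 := by
  have key : ∀ (n : ℕ) (x : V) (q : G.Walk r x), q.IsPath → v ∈ q.support →
      Fintype.card V ≤ q.length + n →
      ∃ (L : V) (q : G.Walk r L), q.IsPath ∧ v ∈ q.support ∧ G.degree L = 1 := by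
    intro n
    induction n with
    | zero =>
      intro x q hq hv hlen
      exact absurd hq.length_lt (by omega)
    | succ n ihn =>
      intro x q hq hv hlen
      by_cases hdx : G.degree x = 1
      · exact ⟨x, q, hq, hv, hdx⟩
      -- find a neighbor y of x not in q.support
      have hy : ∃ y, G.Adj x y ∧ y ∉ q.support := by
        by_cases hnil : q.length = 0
        · have hrx : r = x := q.eq_of_length_eq_zero hnil
          obtain ⟨y, hy⟩ := G.degree_pos_iff_exists_adj x |>.mp (hdeg x)
          refine ⟨y, hy, ?_⟩
          subst hrx
          have : q = Walk.nil := by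
            cases q with
            | nil => rfl
            | cons h p => simp at hnil
          rw [this]
          simp [hy.ne']
        · -- q has length ≥ 1; x has degree ≥ 2
          have hdx2 : 2 ≤ G.degree x := by
            have := hdeg x; omega
          set rq := q.reverse with hrq
          have hrqnil : ¬ rq.Nil := Walk.not_nil_iff_lt_length.mpr (by
            rw [hrq, Walk.length_reverse]; omega)
          set w := rq.getVert 1 with hw
          have hadjw : G.Adj x w := Walk.adj_snd hrqnil
          obtain ⟨y, hymem, hyw⟩ : ∃ y ∈ G.neighborFinset x, y ≠ w := by
            apply Finset.exists_mem_ne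
            · rw [G.card_neighborFinset_eq_degree]; omega
          have hadjy : G.Adj x y := (G.mem_neighborFinset x y).mp hymem
          refine ⟨y, hadjy, fun hymem2 => ?_⟩
          -- y ∈ q.support, derive contradiction
          have hyx : y ≠ x := hadjy.ne'
          have hyrq : y ∈ rq.support := by
            rw [hrq, Walk.support_reverse]; exact List.mem_reverse.mpr hymem2
          have hrqpath : rq.IsPath := hq.reverse
          -- second path from x to r
          have hxdrop : x ∉ (rq.dropUntil y hyrq).support := by
            intro hxd
            have hxy : x ≠ y := fun h => hyx h.symm
            have hxtail : x ∈ (rq.dropUntil y hyrq).support.tail := by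
              have := (rq.dropUntil y hyrq).support_eq_cons
              rw [this] at hxd
              rcases List.mem_cons.mp hxd with h | h
              · exact absurd h hxy
              · exact h
            have hnodup := hrqpath.support_nodup
            rw [← rq.take_spec hyrq, Walk.support_append] at hnodup
            have hxtake : x ∈ (rq.takeUntil y hyrq).support := Walk.start_mem_support _
            exact (List.disjoint_of_nodup_append hnodup) hxtake hxtail
          have hpath2 : (Walk.cons hadjy (rq.dropUntil y hyrq)).IsPath :=
            (hrqpath.dropUntil hyrq).cons hxdrop
          have hequ := (hT.existsUnique_path x r).unique hrqpath hpath2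
          have : rq.getVert 1 = y := by
            rw [hequ]; exact Walk.snd_cons _ hadjy
          exact hyw this.symm
      obtain ⟨y, hadjy, hynot⟩ := hy
      have hq2 : (q.concat hadjy).IsPath := by
        rw [Walk.isPath_def, Walk.support_concat]
        refine List.Nodup.append hq.support_nodup (List.nodup_singleton y) ?_
        intro u hu hu'
        rw [List.mem_singleton] at hu'
        exact hynot (hu' ▸ hu)
      refine ihn y (q.concat hadjy) hq2 ?_ ?_
      · rw [Walk.support_concat]
        exact List.mem_append_left _ hv
      · rw [Walk.length_concat]; omega
  obtain ⟨q0⟩ := hT.isConnected.preconnected r v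
  exact key (Fintype.card V) v q0.bypass q0.bypass_isPath (Walk.end_mem_support _)
    (Nat.le_add_left _ _)

open SimpleGraph

section Aux
variable {V : Type} {G : SimpleGraph V}

/-- Let `T` be a finite tree with `ℓ ≥ 3` leaves, `ℓ` odd. Then `T`
can be covered by `(ℓ-1)/2` leaf-to-leaf paths plus one additional path that covers one
designated leaf-branch: there is a set of `(ℓ+1)/2` paths, each with at least one
endpoint a leaf, whose union covers all vertices of `T`. -/
theorem odd_leaf_cover_of_tree {V : Type} [Fintype V] [DecidableEq V]
    (G : SimpleGraph V) [DecidableRel G.Adj] (hT : G.IsTree)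
    (ℓ : ℕ) (hodd : Odd ℓ) (h3 : 3 ≤ ℓ)
    (hleaves : (Finset.univ.filter fun v => G.degree v = 1).card = ℓ) :
    ∃ (a b : Fin ((ℓ + 1) / 2) → V) (p : ∀ i, G.Walk (a i) (b i)),
      (∀ i, (p i).IsPath) ∧ (∀ i, G.degree (a i) = 1) ∧
      (∀ v : V, ∃ i, v ∈ (p i).support) := by
  classical
  obtain ⟨n, hn⟩ := hodd
  set S := Finset.univ.filter (fun v => G.degree v = 1) with hS
  choose P hP hPu using hT.existsUnique_path
  have hlenP : ∀ u v : V, (P u v).length = G.dist u v := by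
    intro u v
    obtain ⟨q, hq, hqlen⟩ := hT.isConnected.exists_path_of_dist u v
    rw [← hPu u v q hq]; exact hqlen
  have hcard3 : 3 ≤ Fintype.card V := by
    calc 3 ≤ ℓ := h3
    _ = S.card := hleaves.symm
    _ ≤ Fintype.card V := Finset.card_le_univ S
  have : Nonempty V := Fintype.card_pos_iff.mp (by omega)
  have hdeg : ∀ x : V, 0 < G.degree x := by
    intro x
    rw [G.degree_pos_iff_exists_adj]
    obtain ⟨y, hy⟩ := Fintype.exists_ne_of_one_lt_card (by omega) x
    obtain ⟨q⟩ := hT.isConnected.preconnected x y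
    have hnil : ¬ q.Nil := Walk.not_nil_of_ne hy.symm
    exact ⟨q.getVert 1, Walk.adj_snd hnil⟩
  obtain ⟨r, -, hrmin⟩ := Finset.exists_min_image Finset.univ
    (fun v => ∑ L ∈ S, G.dist v L) Finset.univ_nonempty
  -- branch bound at r
  have hbranch : ∀ c : V, G.Adj r c →
      2 * (S.filter (fun L => L ≠ r ∧ (P r L).getVert 1 = c)).card ≤ ℓ := by
    intro c hadj
    set pred := fun L : V => L ≠ r ∧ (P r L).getVert 1 = c with hpred
    have hkey1 : ∀ L ∈ S.filter pred, G.dist c L + 1 = G.dist r L := by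
      intro L hL
      obtain ⟨hLS, hLr, hLc⟩ : L ∈ S ∧ L ≠ r ∧ (P r L).getVert 1 = c := by
        simpa [hpred] using Finset.mem_filter.mp hL
      have hnil : ¬ (P r L).Nil := Walk.not_nil_of_ne (fun h => hLr h.symm)
      have htp : ((P r L).tail.copy hLc rfl).IsPath :=
        (Walk.isPath_copy _ _ _).mpr ((hP r L).tail)
      have htP : (P r L).tail.copy hLc rfl = P c L := hPu c L _ htp
      have hlen1 : (P r L).tail.length + 1 = (P r L).length :=
        Walk.length_tail_add_one hnil
      have : (P c L).length + 1 = (P r L).length := by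
        rw [← htP, Walk.length_copy]; exact hlen1
      rw [← hlenP c L, ← hlenP r L]; exact this
    have hkey2 : ∀ L : V, G.dist c L ≤ G.dist r L + 1 := by
      intro L
      have := G.dist_le (Walk.cons (hadj.symm) (P r L))
      rwa [Walk.length_cons, hlenP] at this
    have hsum1 : ∑ L ∈ S.filter pred, G.dist r L
        = (∑ L ∈ S.filter pred, G.dist c L) + (S.filter pred).card := by
      calc ∑ L ∈ S.filter pred, G.dist r L
          = ∑ L ∈ S.filter pred, (G.dist c L + 1) :=
            Finset.sum_congr rfl (fun L hL => (hkey1 L hL).symm)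
        _ = (∑ L ∈ S.filter pred, G.dist c L) + (S.filter pred).card := by
            rw [Finset.sum_add_distrib, Finset.sum_const, smul_eq_mul, mul_one]
    have hsum2 : ∑ L ∈ S.filter (fun L => ¬ pred L), G.dist c L
        ≤ (∑ L ∈ S.filter (fun L => ¬ pred L), G.dist r L)
          + (S.filter (fun L => ¬ pred L)).card := by
      calc ∑ L ∈ S.filter (fun L => ¬ pred L), G.dist c L
          ≤ ∑ L ∈ S.filter (fun L => ¬ pred L), (G.dist r L + 1) :=
            Finset.sum_le_sum (fun L _ => hkey2 L)
        _ = _ := by rw [Finset.sum_add_distrib, Finset.sum_const, smul_eq_mul, mul_one]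
    have hmin := hrmin c (Finset.mem_univ c)
    have hsplitr : (∑ L ∈ S.filter pred, G.dist r L)
        + (∑ L ∈ S.filter (fun L => ¬ pred L), G.dist r L) = ∑ L ∈ S, G.dist r L :=
      Finset.sum_filter_add_sum_filter_not S pred _
    have hsplitc : (∑ L ∈ S.filter pred, G.dist c L)
        + (∑ L ∈ S.filter (fun L => ¬ pred L), G.dist c L) = ∑ L ∈ S, G.dist c L :=
      Finset.sum_filter_add_sum_filter_not S pred _
    have hcards : (S.filter pred).card + (S.filter (fun L => ¬ pred L)).card = S.card :=
      Finset.card_filter_add_card_filter_not pred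
    rw [hleaves] at hcards
    show 2 * (S.filter pred).card ≤ ℓ
    omega
  -- r is not a leaf
  have hrS : r ∉ S := by
    intro hr
    have hdr : G.degree r = 1 := by simpa [hS] using hr
    obtain ⟨c, hc⟩ := G.degree_pos_iff_exists_adj r |>.mp (hdeg r)
    have hsub2 : S.erase r ⊆ S.filter (fun L => L ≠ r ∧ (P r L).getVert 1 = c) := by
      intro L hL
      obtain ⟨hLr, hLS⟩ := Finset.mem_erase.mp hL
      refine Finset.mem_filter.mpr ⟨hLS, hLr, ?_⟩
      have hnil : ¬ (P r L).Nil := Walk.not_nil_of_ne (fun h => hLr h.symm)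
      have hadj1 : G.Adj r ((P r L).getVert 1) := Walk.adj_snd hnil
      have hcard1 : (G.neighborFinset r).card ≤ 1 := by
        rw [G.card_neighborFinset_eq_degree, hdr]
      exact Finset.card_le_one.mp hcard1 _ ((G.mem_neighborFinset r ((P r L).getVert 1)).mpr hadj1)
        _ ((G.mem_neighborFinset r c).mpr hc)
    have hcard := Finset.card_le_card hsub2
    rw [Finset.card_erase_of_mem hr, hleaves] at hcard
    have := hbranch c hc
    omega
  have hne : ∀ L ∈ S, L ≠ r := fun L hL h => hrS (h ▸ hL)
  -- fibers of the direction function are small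
  have hfib : ∀ c : V, (S.filter (fun L => (P r L).getVert 1 = c)).card ≤ n + 1 := by
    intro c
    by_cases hcadj : G.Adj r c
    · have hsub2 : S.filter (fun L => (P r L).getVert 1 = c)
          ⊆ S.filter (fun L => L ≠ r ∧ (P r L).getVert 1 = c) := by
        intro L hL
        obtain ⟨hLS, hLc⟩ := Finset.mem_filter.mp hL
        exact Finset.mem_filter.mpr ⟨hLS, hne L hLS, hLc⟩
      have h1 := Finset.card_le_card hsub2
      have h2 := hbranch c hcadj
      omega
    · have : S.filter (fun L => (P r L).getVert 1 = c) = ∅ := by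
        rw [Finset.filter_eq_empty_iff]
        intro L hLS hLc
        have hnil : ¬ (P r L).Nil := Walk.not_nil_of_ne (fun h => (hne L hLS) h.symm)
        exact hcadj (hLc ▸ Walk.adj_snd hnil)
      rw [this]; simp
  obtain ⟨x, y, z, hzS, hxS, hyS, hdxy, hcov⟩ :=
    pairing_lemma n S (fun L => (P r L).getVert 1) (by rw [hleaves, hn]) hfib
  have hint : ∀ (i : Fin n) (u : V), u ∈ (P r (x i)).support → u ∈ (P r (y i)).support →
      u = r := by
    intro i u h1 h2
    by_contra hur
    exact hdxy i (diverge hT (P r (x i)) (P r (y i)) (hP _ _) (hP _ _) h1 h2 hur)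
  have hzdeg : G.degree z = 1 := by simpa [hS] using hzS
  have hxdeg : ∀ i, G.degree (x i) = 1 := fun i => by simpa [hS] using hxS i
  -- main construction over Fin (n+1)
  have main : ∃ (a b : Fin (n+1) → V) (p : ∀ i, G.Walk (a i) (b i)),
      (∀ i, (p i).IsPath) ∧ (∀ i, G.degree (a i) = 1) ∧
      (∀ v : V, ∃ i, v ∈ (p i).support) := by
    set F : Fin (n+1) → Σ (u : V) (w : V), G.Walk u w :=
      Fin.lastCases ⟨z, r, (P r z).reverse⟩
        (fun j => ⟨x j, y j, (P r (x j)).reverse.append (P r (y j))⟩) with hF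
    have hFlast : F (Fin.last n) = ⟨z, r, (P r z).reverse⟩ := by
      simp [hF]
    have hFcast : ∀ j : Fin n,
        F j.castSucc = ⟨x j, y j, (P r (x j)).reverse.append (P r (y j))⟩ := by
      intro j; simp [hF]
    refine ⟨fun i => (F i).1, fun i => (F i).2.1, fun i => (F i).2.2, ?_, ?_, ?_⟩
    · intro i
      induction i using Fin.lastCases with
      | last =>
        show (F (Fin.last n)).2.2.IsPath
        rw [hFlast]
        exact (hP r z).reverse
      | cast j =>
        show (F j.castSucc).2.2.IsPath
        rw [hFcast j]
        exact revAppend_isPath _ _ (hP _ _) (hP _ _) (hint j)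
    · intro i
      induction i using Fin.lastCases with
      | last => show G.degree (F (Fin.last n)).1 = 1; rw [hFlast]; exact hzdeg
      | cast j => show G.degree (F j.castSucc).1 = 1; rw [hFcast j]; exact hxdeg j
    · intro v
      obtain ⟨L, q, hq, hvq, hdL⟩ := exists_leaf_path hT hdeg r v
      have hvP : v ∈ (P r L).support := (hPu r L q hq) ▸ hvq
      have hLS : L ∈ S := Finset.mem_filter.mpr ⟨Finset.mem_univ L, hdL⟩
      rcases hcov L hLS with rfl | ⟨i, rfl | rfl⟩
      · refine ⟨Fin.last n, ?_⟩
        show v ∈ (F (Fin.last n)).2.2.support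
        rw [hFlast]
        simp only [Walk.support_reverse]
        exact List.mem_reverse.mpr hvP
      · refine ⟨i.castSucc, ?_⟩
        show v ∈ (F i.castSucc).2.2.support
        rw [hFcast i]
        rw [Walk.mem_support_append_iff]
        exact Or.inl (by simp only [Walk.support_reverse]; exact List.mem_reverse.mpr hvP)
      · refine ⟨i.castSucc, ?_⟩
        show v ∈ (F i.castSucc).2.2.support
        rw [hFcast i]
        rw [Walk.mem_support_append_iff]
        exact Or.inr hvP
  obtain ⟨a, b, p, h1, h2, h3'⟩ := main
  have hm : (ℓ + 1) / 2 = n + 1 := by omega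
  refine ⟨fun i => a (Fin.cast hm i), fun i => b (Fin.cast hm i),
    fun i => p (Fin.cast hm i), fun i => h1 _, fun i => h2 _, fun v => ?_⟩
  obtain ⟨j, hj⟩ := h3' v
  exact ⟨Fin.cast hm.symm j, hj⟩

end Aux
end

section
/- If a tagged component tree T has three pairwise disjoint nonempty partition subtrees S1, S2, S3 that are pairwise separated (fully separated configuration), then the union of the unique S1–S2 connecting path and the unique S1–S3 connecting path covers all bad nodes lying on any of the three pairwise connecting paths (i.e., all bad links). -/
/-- A walk within a connected induced subgraph, lifted to `G`, with support in the set. -/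
lemma exists_walk_in_set {V : Type} (G : SimpleGraph V) {S : Set V}
    (hc : (G.induce S).Connected) {x y : V} (hx : x ∈ S) (hy : y ∈ S) :
    ∃ w : G.Walk x y, ∀ v ∈ w.support, v ∈ S := by
  obtain ⟨w⟩ := hc.preconnected ⟨x, hx⟩ ⟨y, hy⟩
  refine ⟨w.map (SimpleGraph.Embedding.induce S).toHom, ?_⟩
  intro v hv
  replace hv : v ∈ (w.map (SimpleGraph.Embedding.induce S).toHom).support := hv
  rw [SimpleGraph.Walk.support_map, List.mem_map] at hv
  obtain ⟨⟨u, hu⟩, _, rfl⟩ := hv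
  exact hu

/-- Let `T` be a tree containing three pairwise disjoint nonempty
connected subtrees `S1`, `S2`, `S3` which are pairwise separated (each pair is
connected by a *bad link*, i.e. the connecting path between them contains a bad node).
A connecting path (link) between two of the subtrees is a path whose endpoints lie in
the two subtrees and which meets the two subtrees only in its endpoints.  Then the
union of the `S1`–`S2` link and the `S1`–`S3` link covers all bad nodes lying on any of
the three pairwise links (the bad nodes of a link being those outside the subtrees). -/
theorem two_links_cover_three_separated_subtrees {V : Type} [Fintype V] [DecidableEq V]
    (G : SimpleGraph V) [DecidableRel G.Adj] (hT : G.IsTree) (bad : V → Prop)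
    (S1 S2 S3 : Set V)
    (hne1 : S1.Nonempty) (hne2 : S2.Nonempty) (hne3 : S3.Nonempty)
    (hc1 : (G.induce S1).Connected) (hc2 : (G.induce S2).Connected)
    (hc3 : (G.induce S3).Connected)
    (hd12 : Disjoint S1 S2) (hd13 : Disjoint S1 S3) (hd23 : Disjoint S2 S3)
    {a12 b12 a13 b13 a23 b23 : V}
    (p12 : G.Walk a12 b12) (p13 : G.Walk a13 b13) (p23 : G.Walk a23 b23)
    (h12 : p12.IsPath ∧ a12 ∈ S1 ∧ b12 ∈ S2 ∧
      ∀ v ∈ p12.support, v ∈ S1 ∪ S2 → v = a12 ∨ v = b12)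
    (h13 : p13.IsPath ∧ a13 ∈ S1 ∧ b13 ∈ S3 ∧
      ∀ v ∈ p13.support, v ∈ S1 ∪ S3 → v = a13 ∨ v = b13)
    (h23 : p23.IsPath ∧ a23 ∈ S2 ∧ b23 ∈ S3 ∧
      ∀ v ∈ p23.support, v ∈ S2 ∪ S3 → v = a23 ∨ v = b23)
    -- pairwise separated: each link contains a bad node
    (hb12 : ∃ v ∈ p12.support, bad v) (hb13 : ∃ v ∈ p13.support, bad v)
    (hb23 : ∃ v ∈ p23.support, bad v) :
    ∀ v, bad v → v ∈ p23.support → v ∉ S1 ∪ S2 ∪ S3 →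
      v ∈ p12.support ∨ v ∈ p13.support := by
  intro v _ hv hvS
  obtain ⟨σ2, hσ2⟩ := exists_walk_in_set G hc2 h23.2.1 h12.2.2.1
  obtain ⟨σ1, hσ1⟩ := exists_walk_in_set G hc1 h12.2.1 h13.2.1
  obtain ⟨σ3, hσ3⟩ := exists_walk_in_set G hc3 h13.2.2.1 h23.2.2.1
  -- walk from a23 to b23 through S2, p12 reversed, S1, p13, S3
  set W : G.Walk a23 b23 :=
    σ2.append (p12.reverse.append (σ1.append (p13.append σ3))) with hW
  -- p23 is the unique path from a23 to b23, and W.bypass is a path with support ⊆ W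
  have huniq := hT.existsUnique_path a23 b23
  have hp23 : p23 = W.bypass := by
    exact (huniq.unique h23.1 W.bypass_isPath)
  have hvW : v ∈ W.support := by
    have : v ∈ W.bypass.support := hp23 ▸ hv
    exact SimpleGraph.Walk.support_bypass_subset _ this
  simp only [hW, SimpleGraph.Walk.mem_support_append_iff,
    SimpleGraph.Walk.support_reverse, List.mem_reverse] at hvW
  rcases hvW with h | h | h | h | h
  · exact absurd (Or.inl (Or.inr (hσ2 v h))) hvS
  · exact Or.inl h
  · exact absurd (Or.inl (Or.inl (hσ1 v h))) hvS
  · exact Or.inr h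
  · exact absurd (Or.inr (hσ3 v h)) hvS
end

section
/- Let T be a tree with four pairwise disjoint nonempty subtrees S1, S2, S3, S4 such that the subtree spanned by S1 ∪ S2 is disjoint from the subtree spanned by S3 ∪ S4. Then the union of the unique connecting path between S1 and S3 and the unique connecting path between S2 and S4 contains the connecting path between any pair among S1, S2, S3, S4 intersected with the bad links; in particular these two 'crossing' paths cover all vertices lying on any pairwise connecting path between the four subtrees. -/
open SimpleGraph

private lemma tree_path_subset_walk {V : Type} [DecidableEq V] {G : SimpleGraph V} (hac : G.IsAcyclic)
    {a b : V} (p : G.Walk a b) (hp : p.IsPath) (W : G.Walk a b) :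
    ∀ v ∈ p.support, v ∈ W.support := by
  have h : (⟨p, hp⟩ : G.Path a b) = ⟨W.bypass, W.bypass_isPath⟩ :=
    hac.path_unique _ _
  intro v hv
  have hs : p.support = W.bypass.support := by
    simpa using congrArg (fun r : G.Path a b => (r : G.Walk a b).support) h
  exact W.support_bypass_subset (hs ▸ hv)

private lemma walk_in_set {V : Type} [DecidableEq V] {G : SimpleGraph V} {s : Set V}
    (hs : (G.induce s).Connected) {a b : V} (ha : a ∈ s) (hb : b ∈ s) :
    ∃ W : G.Walk a b, ∀ v ∈ W.support, v ∈ s := by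
  obtain ⟨w⟩ := hs ⟨a, ha⟩ ⟨b, hb⟩
  refine ⟨w.map (Embedding.induce s).toHom, ?_⟩
  intro v hv
  replace hv : v ∈ w.support.map (Embedding.induce (G := G) s).toHom := by
    rw [← SimpleGraph.Walk.support_map]; exact hv
  rw [List.mem_map] at hv
  obtain ⟨u, _, rfl⟩ := hv
  exact u.2

private lemma reduce_to_rep {V : Type} [DecidableEq V] {G : SimpleGraph V} (hac : G.IsAcyclic)
    {s t : Set V} (hs : (G.induce s).Connected) (ht : (G.induce t).Connected)
    {a b x y : V} (ha : a ∈ s) (hb : b ∈ t) (hx : x ∈ s) (hy : y ∈ t)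
    (R : G.Walk x y) (q : G.Walk a b) (hq : q.IsPath)
    {v : V} (hv : v ∈ q.support) (hvs : v ∉ s) (hvt : v ∉ t) :
    v ∈ R.support := by
  obtain ⟨W1, hW1⟩ := walk_in_set hs ha hx
  obtain ⟨W2, hW2⟩ := walk_in_set ht hy hb
  have h := tree_path_subset_walk hac q hq (W1.append (R.append W2)) v hv
  rcases (SimpleGraph.Walk.mem_support_append_iff _ _).mp h with h1 | h1
  · exact absurd (hW1 v h1) hvs
  rcases (SimpleGraph.Walk.mem_support_append_iff _ _).mp h1 with h2 | h2
  · exact h2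
  · exact absurd (hW2 v h2) hvt

/-- Let `T` be a tree with four pairwise disjoint nonempty connected
subtrees `S 0, S 1, S 2, S 3` such that the subtree spanned by `S 0 ∪ S 1` is disjoint
from the subtree spanned by `S 2 ∪ S 3` (expressed: any path with both endpoints in
`S 0 ∪ S 1` is vertex-disjoint from any path with both endpoints in `S 2 ∪ S 3`).
Then the union of the "crossing" connecting paths, one between `S 0` and `S 2` and one
between `S 1` and `S 3`, covers every vertex lying strictly on any pairwise connecting
path between the four subtrees (a connecting path between `S i` and `S j` meets
`S i ∪ S j` only in its endpoints). -/
theorem crossing_links_cover_four_separated_subtrees {V : Type} [Fintype V]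
    [DecidableEq V] (G : SimpleGraph V) [DecidableRel G.Adj] (hT : G.IsTree)
    (S : Fin 4 → Set V)
    (hne : ∀ i, (S i).Nonempty) (hconn : ∀ i, (G.induce (S i)).Connected)
    (hdisj : ∀ i j, i ≠ j → Disjoint (S i) (S j))
    (hspan : ∀ (a b c d : V), a ∈ S 0 ∪ S 1 → b ∈ S 0 ∪ S 1 →
      c ∈ S 2 ∪ S 3 → d ∈ S 2 ∪ S 3 →
      ∀ (p : G.Walk a b) (q : G.Walk c d), p.IsPath → q.IsPath →
        ∀ v, v ∈ p.support → v ∉ q.support)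
    {a02 b02 a13 b13 : V}
    (p02 : G.Walk a02 b02) (p13 : G.Walk a13 b13)
    (h02 : p02.IsPath ∧ a02 ∈ S 0 ∧ b02 ∈ S 2 ∧
      ∀ v ∈ p02.support, v ∈ S 0 ∪ S 2 → v = a02 ∨ v = b02)
    (h13 : p13.IsPath ∧ a13 ∈ S 1 ∧ b13 ∈ S 3 ∧
      ∀ v ∈ p13.support, v ∈ S 1 ∪ S 3 → v = a13 ∨ v = b13) :
    ∀ (i j : Fin 4), i ≠ j → ∀ {a b : V} (q : G.Walk a b), q.IsPath →
      a ∈ S i → b ∈ S j → (∀ v ∈ q.support, v ∈ S i ∪ S j → v = a ∨ v = b) →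
      ∀ v ∈ q.support, v ∉ S 0 ∪ S 1 ∪ S 2 ∪ S 3 →
        v ∈ p02.support ∨ v ∈ p13.support := by
  classical
  obtain ⟨hp02, ha02, hb02, -⟩ := h02
  obtain ⟨hp13, ha13, hb13, -⟩ := h13
  have hac := hT.IsAcyclic
  have hcon := hT.isConnected
  -- canonical paths between representatives
  let r01 : G.Walk a02 a13 := (hcon.preconnected a02 a13).some.bypass
  have hr01 : r01.IsPath := SimpleGraph.Walk.bypass_isPath _
  let r23 : G.Walk b02 b13 := (hcon.preconnected b02 b13).some.bypass
  have hr23 : r23.IsPath := SimpleGraph.Walk.bypass_isPath _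
  let r03 : G.Walk a02 b13 := (hcon.preconnected a02 b13).some.bypass
  have hr03 : r03.IsPath := SimpleGraph.Walk.bypass_isPath _
  let r12 : G.Walk a13 b02 := (hcon.preconnected a13 b02).some.bypass
  have hr12 : r12.IsPath := SimpleGraph.Walk.bypass_isPath _
  have hdisjr : ∀ u ∈ r01.support, u ∉ r23.support :=
    hspan a02 a13 b02 b13 (Or.inl ha02) (Or.inr ha13) (Or.inl hb02) (Or.inr hb13)
      r01 r23 hr01 hr23
  have hrev : ∀ {x y : V} (w : G.Walk x y) (u : V), u ∈ w.reverse.support ↔ u ∈ w.support := by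
    intro x y w u; rw [SimpleGraph.Walk.support_reverse, List.mem_reverse]
  have h01 : ∀ u ∈ r01.support, u ∈ p02.support ∨ u ∈ p13.support := by
    intro u hu
    have h := tree_path_subset_walk hac r01 hr01 (p02.append (r23.append p13.reverse)) u hu
    rcases (SimpleGraph.Walk.mem_support_append_iff _ _).mp h with h1 | h1
    · exact Or.inl h1
    rcases (SimpleGraph.Walk.mem_support_append_iff _ _).mp h1 with h2 | h2
    · exact absurd h2 (hdisjr u hu)
    · exact Or.inr ((hrev p13 u).mp h2)
  have h23 : ∀ u ∈ r23.support, u ∈ p02.support ∨ u ∈ p13.support := by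
    intro u hu
    have h := tree_path_subset_walk hac r23 hr23 (p02.reverse.append (r01.append p13)) u hu
    rcases (SimpleGraph.Walk.mem_support_append_iff _ _).mp h with h1 | h1
    · exact Or.inl ((hrev p02 u).mp h1)
    rcases (SimpleGraph.Walk.mem_support_append_iff _ _).mp h1 with h2 | h2
    · exact absurd hu (hdisjr u h2)
    · exact Or.inr h2
  have h03 : ∀ u ∈ r03.support, u ∈ p02.support ∨ u ∈ p13.support := by
    intro u hu
    have hA := tree_path_subset_walk hac r03 hr03 (p02.append r23) u hu
    have hB := tree_path_subset_walk hac r03 hr03 (r01.append p13) u hu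
    rcases (SimpleGraph.Walk.mem_support_append_iff _ _).mp hA with h1 | h1
    · exact Or.inl h1
    rcases (SimpleGraph.Walk.mem_support_append_iff _ _).mp hB with h2 | h2
    · exact absurd h1 (hdisjr u h2)
    · exact Or.inr h2
  have h12 : ∀ u ∈ r12.support, u ∈ p02.support ∨ u ∈ p13.support := by
    intro u hu
    have hA := tree_path_subset_walk hac r12 hr12 (p13.append r23.reverse) u hu
    have hB := tree_path_subset_walk hac r12 hr12 (r01.reverse.append p02) u hu
    rcases (SimpleGraph.Walk.mem_support_append_iff _ _).mp hA with h1 | h1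
    · exact Or.inr h1
    rcases (SimpleGraph.Walk.mem_support_append_iff _ _).mp hB with h2 | h2
    · exact absurd ((hrev r23 u).mp h1) (hdisjr u ((hrev r01 u).mp h2))
    · exact Or.inl h2
  have hp02cov : ∀ u ∈ p02.support, u ∈ p02.support ∨ u ∈ p13.support := fun u hu => Or.inl hu
  have hp13cov : ∀ u ∈ p13.support, u ∈ p02.support ∨ u ∈ p13.support := fun u hu => Or.inr hu
  intro i j hij a b q hq ha hb _ v hv hvS
  simp only [Set.mem_union, not_or] at hvS
  obtain ⟨⟨⟨hv0, hv1⟩, hv2⟩, hv3⟩ := hvS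
  fin_cases i <;> fin_cases j <;>
    first
    | (exact absurd rfl hij)
    | skip
  · exact h01 v (reduce_to_rep hac (hconn 0) (hconn 1) ha hb ha02 ha13 r01 q hq hv hv0 hv1)
  · exact hp02cov v (reduce_to_rep hac (hconn 0) (hconn 2) ha hb ha02 hb02 p02 q hq hv hv0 hv2)
  · exact h03 v (reduce_to_rep hac (hconn 0) (hconn 3) ha hb ha02 hb13 r03 q hq hv hv0 hv3)
  · exact h01 v ((hrev r01 v).mp
      (reduce_to_rep hac (hconn 1) (hconn 0) ha hb ha13 ha02 r01.reverse q hq hv hv1 hv0))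
  · exact h12 v (reduce_to_rep hac (hconn 1) (hconn 2) ha hb ha13 hb02 r12 q hq hv hv1 hv2)
  · exact hp13cov v (reduce_to_rep hac (hconn 1) (hconn 3) ha hb ha13 hb13 p13 q hq hv hv1 hv3)
  · exact hp02cov v ((hrev p02 v).mp
      (reduce_to_rep hac (hconn 2) (hconn 0) ha hb hb02 ha02 p02.reverse q hq hv hv2 hv0))
  · exact h12 v ((hrev r12 v).mp
      (reduce_to_rep hac (hconn 2) (hconn 1) ha hb hb02 ha13 r12.reverse q hq hv hv2 hv1))
  · exact h23 v (reduce_to_rep hac (hconn 2) (hconn 3) ha hb hb02 hb13 r23 q hq hv hv2 hv3)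
  · exact h03 v ((hrev r03 v).mp
      (reduce_to_rep hac (hconn 3) (hconn 0) ha hb hb13 ha02 r03.reverse q hq hv hv3 hv0))
  · exact hp13cov v ((hrev p13 v).mp
      (reduce_to_rep hac (hconn 3) (hconn 1) ha hb hb13 ha13 p13.reverse q hq hv hv3 hv1))
  · exact h23 v ((hrev r23 v).mp
      (reduce_to_rep hac (hconn 3) (hconn 2) ha hb hb13 hb02 r23.reverse q hq hv hv3 hv2))
end
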